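/- arXiv:2007.14307 — 7 statements merged into one kernel-verified Lean document; each statement's English description precedes it below -/
import Mathlib

section
/- Let G = (V,E) be a finite simple graph with no isolated vertices, let C be an edge cover of G, and let u be a vertex such that int(u) is finite and odd. Then for every neighbor v of u it holds that int(v) ≤ int(u) + 1. -/
open SimpleGraph Finset

variable {V : Type*} [Fintype V] [DecidableEq V]

/-- `C` is an edge cover of `G`: a set of edges of `G` such that every vertex is
incident to at least one edge of `C`. -/
def IsEdgeCover (G : SimpleGraph V) (C : Set (Sym2 V)) : Prop :=
  C ⊆ G.edgeSet ∧ ∀ v : V, ∃ e ∈ C, v ∈ e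

/-- A vertex is tight w.r.t. `C` if it is incident to exactly one edge of `C`. -/
def IsTight (C : Set (Sym2 V)) (v : V) : Prop :=
  {e ∈ C | v ∈ e}.ncard = 1

/-- A vertex is loose w.r.t. `C` if it is not tight. -/
def IsLoose (C : Set (Sym2 V)) (v : V) : Prop :=
  ¬ IsTight C v

/-- `p` is an interchanging path w.r.t. the edge cover `C`: a simple path starting at a
loose vertex whose first edge lies in `C` and such that exactly one of any two
consecutive edges lies in `C`. (The trivial path at a loose vertex is interchanging.) -/
def IsInterchanging (G : SimpleGraph V) (C : Set (Sym2 V)) {u v : V} (p : G.Walk u v) :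
    Prop :=
  p.IsPath ∧ IsLoose C u ∧
    (∀ h : 0 < p.edges.length, p.edges[0]'h ∈ C) ∧
    (∀ i : ℕ, ∀ h : i + 1 < p.edges.length,
      ((p.edges[i]'(Nat.lt_of_succ_lt h) ∈ C) ↔ (p.edges[i + 1]'h ∉ C)))

/-- `int(v)`: the length of a shortest interchanging path ending at `v` (`∞` if none). -/
noncomputable def intDist (G : SimpleGraph V) (C : Set (Sym2 V)) (v : V) : ℕ∞ :=
  ⨅ (u : V) (p : G.Walk u v) (_ : IsInterchanging G C p), (p.length : ℕ∞)

lemma intDist_le_of_interchanging (G : SimpleGraph V) (C : Set (Sym2 V)) {w v : V}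
    (p : G.Walk w v) (hp : IsInterchanging G C p) :
    intDist G C v ≤ (p.length : ℕ∞) :=
  iInf_le_of_le w (iInf_le_of_le p (iInf_le _ hp))

lemma interchanging_even (G : SimpleGraph V) (C : Set (Sym2 V)) {w v : V}
    {p : G.Walk w v} (hp : IsInterchanging G C p) :
    ∀ i : ℕ, ∀ h : i < p.edges.length, (p.edges[i]'h ∈ C ↔ Even i) := by
  intro i
  induction i with
  | zero => intro h; simpa using hp.2.2.1 h
  | succ i ih =>
    intro h
    have h1 := hp.2.2.2 i h
    have h2 := ih (Nat.lt_of_succ_lt h)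
    rw [Nat.even_add_one, ← h2]
    tauto

lemma dart_snd_mem_edge {G : SimpleGraph V} (d : G.Dart) : d.snd ∈ d.edge :=
  Sym2.mem_mk_right _ _

theorem stmt0 (G : SimpleGraph V) (hiso : ∀ v : V, ∃ u : V, G.Adj v u)
    (C : Set (Sym2 V)) (hC : IsEdgeCover G C)
    (u : V) (n : ℕ) (hu : intDist G C u = n) (hodd : Odd n) :
    ∀ v : V, G.Adj u v → intDist G C v ≤ intDist G C u + 1 := by
  intro v huv
  rw [hu]
  -- extract a witness interchanging path of length n
  have hlt : intDist G C u < ((n + 1 : ℕ) : ℕ∞) := by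
    rw [hu]; exact_mod_cast Nat.lt_succ_self n
  unfold intDist at hlt
  simp only [iInf_lt_iff] at hlt
  obtain ⟨w, p, hp, hplt⟩ := hlt
  have hlen : p.length = n := by
    have h1 : (n : ℕ∞) ≤ (p.length : ℕ∞) := by
      rw [← hu]; exact intDist_le_of_interchanging G C p hp
    have h2 : p.length < n + 1 := by exact_mod_cast hplt
    exact le_antisymm (Nat.lt_succ_iff.mp h2) (by exact_mod_cast h1)
  have hn1 : 1 ≤ n := hodd.pos
  have helen : p.edges.length = n := by rw [SimpleGraph.Walk.length_edges, hlen]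
  have hlast_lt : n - 1 < p.edges.length := by omega
  -- the last edge of p is in C and contains u
  have hlastC : p.edges[n - 1]'hlast_lt ∈ C := by
    rw [interchanging_even G C hp]
    obtain ⟨k, hk⟩ := hodd
    exact ⟨k, by omega⟩
  have hdne : p.darts ≠ [] := by
    intro h
    have : p.edges.length = 0 := by simp [SimpleGraph.Walk.edges, h]
    omega
  have hene : p.edges ≠ [] := by
    intro h; rw [h] at helen; simp at helen; omega
  have hlast_eq : p.edges[n - 1]'hlast_lt = p.edges.getLast hene := by
    rw [List.getLast_eq_getElem]
    congr 1
    omega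
  have hu_mem : u ∈ p.edges[n - 1]'hlast_lt := by
    rw [hlast_eq]
    have hmap : p.edges.getLast hene = (p.darts.getLast hdne).edge :=
      List.getLast_map _
    rw [hmap]
    have hsnd : (p.darts.getLast hdne).snd = u := by
      rw [SimpleGraph.Walk.getLast_darts_eq_lastDart]; rfl
    have hmem := dart_snd_mem_edge (p.darts.getLast hdne)
    rw [hsnd] at hmem
    exact hmem
  by_cases hvs : v ∈ p.support
  · -- take the prefix of p up to v
    set q := p.takeUntil v hvs with hq
    have hsplit : p.edges = q.edges ++ (p.dropUntil v hvs).edges := by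
      rw [← SimpleGraph.Walk.edges_append, SimpleGraph.Walk.take_spec]
    have hqle : q.edges.length ≤ p.edges.length := by
      rw [hsplit]; simp
    have hqpref : ∀ i : ℕ, ∀ h : i < q.edges.length,
        q.edges[i]'h = p.edges[i]'(lt_of_lt_of_le h hqle) := by
      intro i h
      exact ((List.getElem_of_eq hsplit (lt_of_lt_of_le h hqle)).trans
        (List.getElem_append_left h)).symm
    have hqint : IsInterchanging G C q := by
      refine ⟨hp.1.takeUntil hvs, hp.2.1, ?_, ?_⟩
      · intro h
        rw [hqpref 0 h]
        exact hp.2.2.1 _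
      · intro i h
        rw [hqpref i (Nat.lt_of_succ_lt h), hqpref (i + 1) h]
        exact hp.2.2.2 i _
    calc intDist G C v ≤ (q.length : ℕ∞) := intDist_le_of_interchanging G C q hqint
      _ ≤ (n : ℕ∞) := by
          have := SimpleGraph.Walk.length_takeUntil_le p hvs
          rw [hlen] at this
          exact_mod_cast this
      _ ≤ (n : ℕ∞) + 1 := le_self_add
  · by_cases hec : s(u, v) ∈ C
    · -- then u is loose, contradicting n odd
      exfalso
      have hne : p.edges[n - 1]'hlast_lt ≠ s(u, v) := by
        intro h
        apply hvs
        have : s(u, v) ∈ p.edges := by rw [← h]; exact List.getElem_mem _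
        exact SimpleGraph.Walk.snd_mem_support_of_mem_edges p this
      have hloose : IsLoose C u := by
        intro ht
        obtain ⟨a, ha⟩ := Set.ncard_eq_one.mp ht
        have h1 : p.edges[n - 1]'hlast_lt ∈ {e ∈ C | u ∈ e} := ⟨hlastC, hu_mem⟩
        have h2 : s(u, v) ∈ {e ∈ C | u ∈ e} := ⟨hec, Sym2.mem_mk_left _ _⟩
        rw [ha] at h1 h2
        exact hne (h1.trans h2.symm)
      have hnil : IsInterchanging G C (SimpleGraph.Walk.nil : G.Walk u u) := by
        refine ⟨SimpleGraph.Walk.IsPath.nil, hloose, ?_, ?_⟩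
        · intro h; simp [SimpleGraph.Walk.edges_nil] at h
        · intro i h; simp [SimpleGraph.Walk.edges_nil] at h
      have h0 : intDist G C u ≤ 0 := by
        simpa using intDist_le_of_interchanging G C _ hnil
      rw [hu] at h0
      have : n = 0 := by exact_mod_cast nonpos_iff_eq_zero.mp h0
      omega
    · -- extend p by the edge (u, v)
      set q := p.concat huv with hq
      have hqe : q.edges = p.edges ++ [s(u, v)] := by
        rw [hq, SimpleGraph.Walk.edges_concat, List.concat_eq_append]
      have hqelen : q.edges.length = n + 1 := by
        rw [hqe]; simp [helen]
      have hqpath : q.IsPath := by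
        rw [← SimpleGraph.Walk.isPath_reverse_iff, hq, SimpleGraph.Walk.reverse_concat]
        exact ((SimpleGraph.Walk.isPath_reverse_iff p).mpr hp.1).cons
          (by simpa using hvs)
      have hqint : IsInterchanging G C q := by
        refine ⟨hqpath, hp.2.1, ?_, ?_⟩
        · intro h
          have h0 : 0 < p.edges.length := by omega
          have : q.edges[0]'h = p.edges[0]'h0 :=
            (List.getElem_of_eq hqe h).trans (List.getElem_append_left h0)
          rw [this]
          exact hp.2.2.1 h0
        · intro i h
          rw [hqelen] at h
          by_cases hin : i + 1 < n
          · have e1 : q.edges[i]'(by omega : i < q.edges.length) =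
                p.edges[i]'(by omega) :=
              (List.getElem_of_eq hqe _).trans (List.getElem_append_left (by omega))
            have e2 : q.edges[i + 1]'(by omega : i + 1 < q.edges.length) =
                p.edges[i + 1]'(by omega) :=
              (List.getElem_of_eq hqe _).trans (List.getElem_append_left (by omega))
            simp only [e1, e2]
            exact hp.2.2.2 i (by omega)
          · have hi : i = n - 1 := by omega
            have e1 : q.edges[i]'(by omega : i < q.edges.length) =
                p.edges[n - 1]'hlast_lt := by
              subst hi
              exact (List.getElem_of_eq hqe _).trans (List.getElem_append_left (by omega))
            have e2 : q.edges[i + 1]'(by omega : i + 1 < q.edges.length) = s(u, v) := by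
              refine (List.getElem_of_eq hqe _).trans ?_
              rw [List.getElem_append_right (by omega)]
              simp
            simp only [e1, e2]
            exact ⟨fun _ => hec, fun _ => hlastC⟩
      calc intDist G C v ≤ (q.length : ℕ∞) := intDist_le_of_interchanging G C q hqint
        _ = (n : ℕ∞) + 1 := by
            rw [hq, SimpleGraph.Walk.length_concat, hlen]
            push_cast
            rfl
        _ ≤ (n : ℕ∞) + 1 := le_rfl
end

section
/- Let G = (V,E) be a finite simple graph with no isolated vertices, let C be an edge cover of G, and let P = (e_1, ..., e_ℓ) be an inflating path between two distinct loose vertices u and v. Then ℓ is odd, e_i ∈ C exactly for the odd indices i, and the set C̃ = (C \ {e_i : i odd}) ∪ {e_i : i even} is an edge cover of G with |C̃| = |C| − 1. -/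
open SimpleGraph Finset

variable {V : Type*} [Fintype V] [DecidableEq V]

private lemma walkEdgesGetElem {G : SimpleGraph V} {u v : V} (p : G.Walk u v) (i : ℕ)
    (h : i < p.length) :
    p.edges[i]'(by rwa [SimpleGraph.Walk.length_edges]) = s(p.getVert i, p.getVert (i+1)) := by
  induction p generalizing i with
  | nil => simp at h
  | cons hadj q ih =>
    match i with
    | 0 => simp [SimpleGraph.Walk.edges_cons, SimpleGraph.Walk.getVert_zero,
        SimpleGraph.Walk.getVert_cons_succ]
    | n + 1 =>
      simp only [SimpleGraph.Walk.edges_cons, SimpleGraph.Walk.getVert_cons_succ,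
        List.getElem_cons_succ]
      exact ih n (by simpa using h)

private lemma walkGetVertSupport {G : SimpleGraph V} {u v : V} (p : G.Walk u v) (i : ℕ)
    (h : i ≤ p.length) :
    p.getVert i = p.support[i]'(by rw [SimpleGraph.Walk.length_support]; omega) := by
  induction p generalizing i with
  | nil => obtain rfl := Nat.le_zero.mp h; simp
  | cons hadj q ih =>
    match i with
    | 0 => simp
    | n + 1 =>
      simpa using ih n (by simpa using h)

private lemma pathGetVertInj {G : SimpleGraph V} {u v : V} {p : G.Walk u v} (hp : p.IsPath)
    {i j : ℕ} (hi : i ≤ p.length) (hj : j ≤ p.length) (hij : p.getVert i = p.getVert j) :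
    i = j := by
  rw [walkGetVertSupport p i hi, walkGetVertSupport p j hj] at hij
  exact (hp.support_nodup.getElem_inj_iff).mp hij

private lemma cardEvenRange (n : ℕ) :
    ((Finset.range n).filter (fun i => Even i)).card = (n+1)/2 := by
  induction n with
  | zero => simp
  | succ n ih =>
    rw [Finset.range_add_one, Finset.filter_insert]
    by_cases hn : Even n
    · rw [if_pos hn, Finset.card_insert_of_notMem (by simp), ih]
      obtain ⟨k, hk⟩ := hn
      omega
    · rw [if_neg hn, ih]
      rw [Nat.not_even_iff_odd] at hn
      obtain ⟨k, hk⟩ := hn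
      omega

private lemma cardOddRange (n : ℕ) :
    ((Finset.range n).filter (fun i => Odd i)).card = n/2 := by
  induction n with
  | zero => simp
  | succ n ih =>
    rw [Finset.range_add_one, Finset.filter_insert]
    by_cases hn : Odd n
    · rw [if_pos hn, Finset.card_insert_of_notMem (by simp), ih]
      obtain ⟨k, hk⟩ := hn
      omega
    · rw [if_neg hn, ih]
      rw [Nat.not_odd_iff_even] at hn
      obtain ⟨k, hk⟩ := hn
      omega
/-- `p` is an inflating path w.r.t. the edge cover `C`: an interchanging path between two
distinct loose vertices whose first and last edges lie in `C`. -/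
def IsInflating (G : SimpleGraph V) (C : Set (Sym2 V)) {u v : V} (p : G.Walk u v) :
    Prop :=
  IsInterchanging G C p ∧ IsLoose C v ∧ u ≠ v ∧
    ∃ h : 0 < p.edges.length,
      p.edges[0]'h ∈ C ∧ p.edges[p.edges.length - 1]'(by omega) ∈ C

theorem stmt1 (G : SimpleGraph V) (hiso : ∀ v : V, ∃ u : V, G.Adj v u)
    (C : Set (Sym2 V)) (hC : IsEdgeCover G C)
    (u v : V) (p : G.Walk u v) (hp : IsInflating G C p) :
    Odd p.length ∧
    (∀ i : ℕ, ∀ h : i < p.edges.length, (p.edges[i]'h ∈ C ↔ Even i)) ∧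
    IsEdgeCover G
      ((C \ {e : Sym2 V | ∃ i : ℕ, ∃ h : i < p.edges.length, Even i ∧ p.edges[i]'h = e}) ∪
        {e : Sym2 V | ∃ i : ℕ, ∃ h : i < p.edges.length, Odd i ∧ p.edges[i]'h = e}) ∧
    ((C \ {e : Sym2 V | ∃ i : ℕ, ∃ h : i < p.edges.length, Even i ∧ p.edges[i]'h = e}) ∪
        {e : Sym2 V | ∃ i : ℕ, ∃ h : i < p.edges.length, Odd i ∧ p.edges[i]'h = e}).ncard =
      C.ncard - 1 := by
  classical
  obtain ⟨⟨hpath, hlu, hfirst, halt⟩, hlv, huv, hlen, hfC, hlC⟩ := hp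
  have hL : p.edges.length = p.length := p.length_edges
  -- parity of edges in C
  have key : ∀ i : ℕ, ∀ h : i < p.edges.length, (p.edges[i]'h ∈ C ↔ Even i) := by
    intro i
    induction i with
    | zero => intro h; simpa using hfirst h
    | succ n ih =>
      intro h
      have h' := halt n h
      rw [ih (Nat.lt_of_succ_lt h)] at h'
      rw [Nat.even_add_one]
      tauto
  have hoddlen : Odd p.length := by
    obtain ⟨k, hk⟩ := (key _ (by omega)).mp hlC
    exact ⟨k, by omega⟩
  refine ⟨hoddlen, key, ⟨?_, ?_⟩, ?_⟩
  · -- subset of edgeSet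
    rintro e (⟨heC, -⟩ | ⟨i, h, -, rfl⟩)
    · exact hC.1 heC
    · exact p.edges_subset_edgeSet (List.getElem_mem h)
  · -- covering
    intro w
    by_cases hcase : ∃ i : ℕ, ∃ h : i < p.edges.length, Even i ∧ w ∈ p.edges[i]'h
    · obtain ⟨i, h, hev, hwi⟩ := hcase
      have hi : i < p.length := by omega
      rw [walkEdgesGetElem p i hi, Sym2.mem_iff] at hwi
      obtain ⟨j, hj, hw⟩ : ∃ j, j ≤ p.length ∧ p.getVert j = w := by
        rcases hwi with h1 | h1
        · exact ⟨i, by omega, h1.symm⟩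
        · exact ⟨i + 1, by omega, h1.symm⟩
      by_cases hj0 : j = 0
      · -- w = u
        subst hj0
        rw [p.getVert_zero] at hw
        subst hw
        have hSne : {e ∈ C | u ∈ e}.Nonempty := hC.2 u
        have h2 : 1 < {e ∈ C | u ∈ e}.ncard := by
          have hpos : 0 < {e ∈ C | u ∈ e}.ncard := (Set.ncard_pos (Set.toFinite _)).mpr hSne
          have : {e ∈ C | u ∈ e}.ncard ≠ 1 := hlu
          omega
        obtain ⟨f, ⟨hfC', hfu⟩, hfne⟩ :=
          Set.exists_ne_of_one_lt_ncard h2 (p.edges[0]'hlen)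
        refine ⟨f, Or.inl ⟨hfC', ?_⟩, hfu⟩
        rintro ⟨k, hk, hkev, rfl⟩
        have hk' : k < p.length := by omega
        rw [walkEdgesGetElem p k hk', Sym2.mem_iff] at hfu
        have hk0 : k = 0 := by
          rcases hfu with h1 | h1
          · have := pathGetVertInj hpath (by omega : k ≤ p.length) (by omega : 0 ≤ p.length)
              (by rw [h1.symm, p.getVert_zero])
            omega
          · have := pathGetVertInj hpath (by omega : k + 1 ≤ p.length) (by omega : 0 ≤ p.length)
              (by rw [h1.symm, p.getVert_zero])
            omega
        subst hk0
        exact hfne rfl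
      · by_cases hjL : j = p.length
        · -- w = v
          subst hjL
          rw [p.getVert_length] at hw
          subst hw
          have hSne : {e ∈ C | v ∈ e}.Nonempty := hC.2 v
          have h2 : 1 < {e ∈ C | v ∈ e}.ncard := by
            have hpos : 0 < {e ∈ C | v ∈ e}.ncard := (Set.ncard_pos (Set.toFinite _)).mpr hSne
            have : {e ∈ C | v ∈ e}.ncard ≠ 1 := hlv
            omega
          obtain ⟨f, ⟨hfC', hfv⟩, hfne⟩ :=
            Set.exists_ne_of_one_lt_ncard h2 (p.edges[p.edges.length - 1]'(by omega))
          refine ⟨f, Or.inl ⟨hfC', ?_⟩, hfv⟩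
          rintro ⟨k, hk, hkev, rfl⟩
          have hk' : k < p.length := by omega
          rw [walkEdgesGetElem p k hk', Sym2.mem_iff] at hfv
          have hkL : k = p.edges.length - 1 := by
            rcases hfv with h1 | h1
            · have := pathGetVertInj hpath (by omega : k ≤ p.length) (le_refl p.length)
                (by rw [h1.symm, p.getVert_length])
              omega
            · have := pathGetVertInj hpath (by omega : k + 1 ≤ p.length) (le_refl p.length)
                (by rw [h1.symm, p.getVert_length])
              omega
          subst hkL
          exact hfne rfl
        · -- interior vertex
          by_cases hjodd : Odd j
          · refine ⟨p.edges[j]'(by omega), Or.inr ⟨j, by omega, hjodd, rfl⟩, ?_⟩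
            rw [walkEdgesGetElem p j (by omega), Sym2.mem_iff]
            exact Or.inl hw.symm
          · have hj1 : Odd (j - 1) := by
              rw [Nat.not_odd_iff_even] at hjodd
              obtain ⟨k, hk⟩ := hjodd
              exact ⟨k - 1, by omega⟩
            refine ⟨p.edges[j-1]'(by omega), Or.inr ⟨j - 1, by omega, hj1, rfl⟩, ?_⟩
            rw [walkEdgesGetElem p (j-1) (by omega), Sym2.mem_iff]
            right
            rw [show j - 1 + 1 = j by omega]
            exact hw.symm
    · obtain ⟨e, heC, hwe⟩ := hC.2 w
      refine ⟨e, Or.inl ⟨heC, ?_⟩, hwe⟩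
      rintro ⟨i, h, hev, rfl⟩
      exact hcase ⟨i, h, hev, hwe⟩
  · -- cardinality
    set f : ℕ → Sym2 V := fun i => p.edges.getD i (p.edges[0]'hlen) with hfdef
    have hfeq : ∀ i : ℕ, ∀ h : i < p.edges.length, f i = p.edges[i]'h := fun i h =>
      List.getD_eq_getElem _ _ h
    have hnodup : p.edges.Nodup :=
      SimpleGraph.Walk.edges_nodup_of_support_nodup hpath.support_nodup
    have hinj : ∀ s : Finset ℕ, (∀ i ∈ s, i < p.edges.length) → Set.InjOn f ↑s := by
      intro s hs a ha b hb hab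
      rw [hfeq a (hs a ha), hfeq b (hs b hb)] at hab
      exact hnodup.getElem_inj_iff.mp hab
    have hEe : {e : Sym2 V | ∃ i : ℕ, ∃ h : i < p.edges.length, Even i ∧ p.edges[i]'h = e}
        = ↑(((Finset.range p.edges.length).filter (fun i => Even i)).image f) := by
      ext e
      simp only [Set.mem_setOf_eq, Finset.coe_image, Set.mem_image, Finset.mem_coe,
        Finset.mem_filter, Finset.mem_range]
      constructor
      · rintro ⟨i, h, hev, rfl⟩; exact ⟨i, ⟨h, hev⟩, hfeq i h⟩
      · rintro ⟨i, ⟨h, hev⟩, rfl⟩; exact ⟨i, h, hev, (hfeq i h).symm⟩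
    have hEo : {e : Sym2 V | ∃ i : ℕ, ∃ h : i < p.edges.length, Odd i ∧ p.edges[i]'h = e}
        = ↑(((Finset.range p.edges.length).filter (fun i => Odd i)).image f) := by
      ext e
      simp only [Set.mem_setOf_eq, Finset.coe_image, Set.mem_image, Finset.mem_coe,
        Finset.mem_filter, Finset.mem_range]
      constructor
      · rintro ⟨i, h, hev, rfl⟩; exact ⟨i, ⟨h, hev⟩, hfeq i h⟩
      · rintro ⟨i, ⟨h, hev⟩, rfl⟩; exact ⟨i, h, hev, (hfeq i h).symm⟩
    have hcardEe :
        {e : Sym2 V | ∃ i : ℕ, ∃ h : i < p.edges.length, Even i ∧ p.edges[i]'h = e}.ncard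
          = (p.edges.length + 1) / 2 := by
      rw [hEe, Set.ncard_coe_finset,
        Finset.card_image_of_injOn (hinj _ (by intro i hi; simp at hi; omega)),
        cardEvenRange]
    have hcardEo :
        {e : Sym2 V | ∃ i : ℕ, ∃ h : i < p.edges.length, Odd i ∧ p.edges[i]'h = e}.ncard
          = p.edges.length / 2 := by
      rw [hEo, Set.ncard_coe_finset,
        Finset.card_image_of_injOn (hinj _ (by intro i hi; simp at hi; omega)),
        cardOddRange]
    have hEeC : {e : Sym2 V | ∃ i : ℕ, ∃ h : i < p.edges.length, Even i ∧ p.edges[i]'h = e}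
        ⊆ C := by
      rintro e ⟨i, h, hev, rfl⟩; exact (key i h).mpr hev
    have hdisj : Disjoint
        (C \ {e : Sym2 V | ∃ i : ℕ, ∃ h : i < p.edges.length, Even i ∧ p.edges[i]'h = e})
        {e : Sym2 V | ∃ i : ℕ, ∃ h : i < p.edges.length, Odd i ∧ p.edges[i]'h = e} := by
      rw [Set.disjoint_left]
      rintro e ⟨heC, -⟩ ⟨i, h, hodd', rfl⟩
      exact (Nat.not_even_iff_odd.mpr hodd') ((key i h).mp heC)
    rw [Set.ncard_union_eq hdisj (C.toFinite.diff) (Set.toFinite _),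
      Set.ncard_diff hEeC (Set.toFinite _), hcardEe, hcardEo]
    have hle : (p.edges.length + 1) / 2 ≤ C.ncard := by
      rw [← hcardEe]
      exact Set.ncard_le_ncard hEeC C.toFinite
    obtain ⟨k, hk⟩ := hoddlen
    omega
end

section
/- Let κ be a positive integer, let G = (V,E) be a finite simple graph with no isolated vertices in which every odd cycle has length at least 2κ+1, let C be a minimum edge cover of G, and let y : V → ℚ be defined from int as in the context. Then y_u + y_v ≤ 1 for every edge (u,v) ∈ E. -/
open SimpleGraph Finset

variable {V : Type*} [Fintype V] [DecidableEq V]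

/-- The dual assignment `y` defined from `int`: `y v = int(v)/(2(κ+1))` if `int(v) < κ`
is even, `y v = 1 - (int(v)+1)/(2(κ+1))` if `int(v) < κ` is odd, and
`y v = ⌈κ/2⌉/(κ+1)` otherwise. -/
noncomputable def yEC (G : SimpleGraph V) (C : Set (Sym2 V)) (κ : ℕ) (v : V) : ℚ :=
  if intDist G C v < (κ : ℕ∞) then
    (if Even (intDist G C v).toNat then
      ((intDist G C v).toNat : ℚ) / (2 * (κ + 1))
    else
      1 - (((intDist G C v).toNat : ℚ) + 1) / (2 * (κ + 1)))
  else
    (⌈(κ : ℚ) / 2⌉ : ℚ) / (κ + 1)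

set_option linter.unusedSectionVars false
set_option maxHeartbeats 1000000

section Helpers

variable {G : SimpleGraph V} {C : Set (Sym2 V)}

lemma edgev (p : G.Walk u v) : ∀ (i : ℕ) (h : i < p.edges.length),
    p.edges[i]'h = s(p.getVert i, p.getVert (i + 1)) := by
  induction p with
  | nil => intro i h; simp at h
  | cons hadj q ih =>
    intro i h
    cases i with
    | zero => simp [Walk.getVert_zero, Walk.getVert_cons_succ]
    | succ n =>
      simp only [Walk.edges_cons, List.getElem_cons_succ, Walk.getVert_cons_succ]
      exact ih n (by simpa [Walk.length_edges] using h)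

lemma suppv (p : G.Walk u v) : ∀ (i : ℕ) (h : i < p.support.length),
    p.support[i]'h = p.getVert i := by
  induction p with
  | nil => intro i h; simp at h; simp [h]
  | cons hadj q ih =>
    intro i h
    cases i with
    | zero => simp
    | succ n =>
      simp only [Walk.support_cons, List.getElem_cons_succ, Walk.getVert_cons_succ]
      exact ih n (by simpa using h)

/-- alternation: edge `i` of an interchanging walk is in `C` iff `i` is even. -/
lemma ic_edges_even {p : G.Walk u v} (hp : IsInterchanging G C p) :
    ∀ (i : ℕ) (h : i < p.edges.length), (p.edges[i]'h ∈ C ↔ Even i) := by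
  intro i
  induction i with
  | zero => intro h; simpa using hp.2.2.1 h
  | succ n ih =>
    intro h
    have h' : n + 1 < p.edges.length := h
    have := hp.2.2.2 n h'
    have hn := ih (Nat.lt_of_succ_lt h')
    rw [Nat.even_add_one]
    tauto

lemma ic_of_even {p : G.Walk u v} (hpath : p.IsPath) (hloose : IsLoose C u)
    (halt : ∀ (i : ℕ) (h : i < p.edges.length), (p.edges[i]'h ∈ C ↔ Even i)) :
    IsInterchanging G C p := by
  refine ⟨hpath, hloose, ?_, ?_⟩
  · intro h; exact (halt 0 h).mpr (Even.zero)
  · intro i h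
    rw [halt i (Nat.lt_of_succ_lt h), halt (i+1) h, Nat.even_add_one]
    tauto


lemma edges_takeUntil_prefix (p : G.Walk u v) (w : V) (hw : w ∈ p.support) :
    (p.takeUntil w hw).edges <+: p.edges := by
  refine ⟨(p.dropUntil w hw).edges, ?_⟩
  rw [← Walk.edges_append, p.take_spec hw]

lemma ic_takeUntil {p : G.Walk u v} (hp : IsInterchanging G C p) (w : V)
    (hw : w ∈ p.support) : IsInterchanging G C (p.takeUntil w hw) := by
  have hpre := edges_takeUntil_prefix p w hw
  refine ic_of_even (hp.1.takeUntil hw) hp.2.1 ?_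
  intro i h
  rw [List.IsPrefix.getElem hpre h]
  exact ic_edges_even hp i (lt_of_lt_of_le h hpre.length_le)

lemma ic_of_concat {q : G.Walk u x} {h : G.Adj x y}
    (hp : IsInterchanging G C (q.concat h)) : IsInterchanging G C q := by
  have hpath : q.IsPath := by
    have hsup : (q.concat h).support.Nodup := hp.1.support_nodup
    rw [Walk.support_concat, List.nodup_append] at hsup
    exact Walk.IsPath.mk' hsup.1
  refine ic_of_even hpath hp.2.1 ?_
  intro i hi
  have hi' : i < (q.concat h).edges.length := by
    simp only [Walk.edges_concat, List.concat_eq_append, List.length_append]; omega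
  have : (q.concat h).edges[i]'hi' = q.edges[i]'hi := by
    simp only [Walk.edges_concat, List.concat_eq_append]
    rw [List.getElem_append_left]
  rw [← this]
  exact ic_edges_even hp i hi'

lemma walk_exists_concat (p : G.Walk u v) (hnn : ¬ p.Nil) :
    ∃ (z : V) (h : G.Adj z v) (q : G.Walk u z), p = q.concat h := by
  have hnn' : ¬ p.reverse.Nil := by
    rw [Walk.nil_iff_length_eq] at hnn ⊢
    simpa using hnn
  obtain ⟨z, hadj, r, hr⟩ := Walk.not_nil_iff.mp hnn'
  refine ⟨z, hadj.symm, r.reverse, ?_⟩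
  have := congrArg Walk.reverse hr
  rw [Walk.reverse_reverse, Walk.reverse_cons] at this
  exact this

lemma int_le {p : G.Walk u v} (hp : IsInterchanging G C p) :
    intDist G C v ≤ (p.length : ℕ∞) := by
  unfold intDist
  exact iInf_le_of_le u (iInf_le_of_le p (iInf_le _ hp))

lemma ic_nil (hl : IsLoose C v) : IsInterchanging G C (Walk.nil : G.Walk v v) := by
  refine ⟨Walk.IsPath.nil, hl, ?_, ?_⟩
  · intro h; simp at h
  · intro i h; simp at h

lemma int_loose (hl : IsLoose C v) : intDist G C v = 0 := by
  have h := int_le (ic_nil (G := G) hl)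
  simp only [Walk.length_nil, Nat.cast_zero] at h
  exact le_antisymm h zero_le

lemma int_attained (h : intDist G C v ≠ ⊤) :
    ∃ (x : V) (p : G.Walk x v), IsInterchanging G C p ∧ intDist G C v = (p.length : ℕ∞) := by
  classical
  set S : Set ℕ := {n | ∃ (x : V) (p : G.Walk x v), IsInterchanging G C p ∧ p.length = n} with hS
  have hne : S.Nonempty := by
    by_contra hemp
    apply h
    unfold intDist
    rw [iInf_eq_top]
    intro x
    rw [iInf_eq_top]
    intro p
    rw [iInf_eq_top]
    intro hp
    exfalso
    exact hemp ⟨p.length, x, p, hp, rfl⟩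
  obtain ⟨x, p, hp, hlen⟩ := Nat.sInf_mem hne
  refine ⟨x, p, hp, le_antisymm (int_le hp) ?_⟩
  unfold intDist
  refine le_iInf fun y => le_iInf fun q => le_iInf fun hq => ?_
  rw [Nat.cast_le, hlen]
  exact Nat.sInf_le ⟨y, q, hq, rfl⟩

lemma int_tight (hv : intDist G C v ≠ 0) : IsTight C v := by
  by_contra hl
  exact hv (int_loose hl)


lemma altcount {α : Type*} (P : α → Prop) [DecidablePred P] :
    ∀ (l : List α), (∀ (i : ℕ) (h : i < l.length), (P (l[i]'h) ↔ Even i)) →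
      2 * (l.filter (fun e => decide (P e))).length = l.length + l.length % 2
  | [], _ => by simp
  | [a], h => by
    have ha : P a := (h 0 (by simp)).mpr Even.zero
    rw [List.filter_cons]
    simp [ha]
  | a :: b :: t, h => by
    have ha : P a := (h 0 (by simp)).mpr Even.zero
    have hb : ¬ P b := by
      have := h 1 (by simp)
      simp [Nat.even_iff] at this
      exact this
    have ht := altcount P t (fun i hi => by
      have := h (i + 2) (by simp; omega)
      simpa [Nat.even_add] using this)
    rw [List.filter_cons, List.filter_cons]
    simp [ha, hb]
    omega

lemma list_set_ncard {α : Type*} [DecidableEq α] (l : List α) (hl : l.Nodup) :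
    {x | x ∈ l}.ncard = l.length := by
  have : {x | x ∈ l} = (l.toFinset : Set α) := by ext x; simp
  rw [this, Set.ncard_coe_finset, List.toFinset_card_of_nodup hl]

lemma mem_support_of_mem_edges' {p : G.Walk u v} {e : Sym2 V} {x : V}
    (he : e ∈ p.edges) (hx : x ∈ e) : x ∈ p.support := by
  induction e with
  | h a b =>
    rcases Sym2.mem_iff.mp hx with rfl | rfl
    · exact p.fst_mem_support_of_mem_edges he
    · exact p.snd_mem_support_of_mem_edges he

lemma startedge {p : G.Walk u v} (hp : p.IsPath) {e f : Sym2 V}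
    (he : e ∈ p.edges) (hf : f ∈ p.edges) (hue : u ∈ e) (huf : u ∈ f) : e = f := by
  cases p with
  | nil => simp at he
  | cons hadj q =>
    have hu : u ∉ q.support := by
      have := hp.support_nodup
      rw [Walk.support_cons] at this
      exact (List.nodup_cons.mp this).1
    rw [Walk.edges_cons, List.mem_cons] at he hf
    rcases he with rfl | he
    · rcases hf with rfl | hf
      · rfl
      · exact absurd (mem_support_of_mem_edges' hf huf) hu
    · exact absurd (mem_support_of_mem_edges' he hue) hu

lemma loose_two (hC : IsEdgeCover G C) {x : V} (hl : IsLoose C x) :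
    ∃ e₁ e₂, e₁ ∈ C ∧ e₂ ∈ C ∧ x ∈ e₁ ∧ x ∈ e₂ ∧ e₁ ≠ e₂ := by
  have hfin : {e ∈ C | x ∈ e}.Finite := Set.toFinite _
  have hne : {e ∈ C | x ∈ e}.Nonempty := by
    obtain ⟨e, he, hxe⟩ := hC.2 x
    exact ⟨e, he, hxe⟩
  have h1 : 1 ≤ {e ∈ C | x ∈ e}.ncard := by
    rw [Nat.one_le_iff_ne_zero]
    intro h0
    rw [Set.ncard_eq_zero hfin] at h0
    exact Set.not_nonempty_empty (h0 ▸ hne)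
  have h2 : 1 < {e ∈ C | x ∈ e}.ncard := lt_of_le_of_ne h1 (fun h => hl h.symm)
  obtain ⟨e₁, e₂, he₁, he₂, hne'⟩ := (Set.one_lt_ncard_iff hfin).mp h2
  exact ⟨e₁, e₂, he₁.1, he₂.1, he₁.2, he₂.2, hne'⟩


lemma aug (hC : IsEdgeCover G C)
    (hmin : ∀ C'' : Set (Sym2 V), IsEdgeCover G C'' → C.ncard ≤ C''.ncard)
    {x y : V} {R : G.Walk x y} (hR : IsInterchanging G C R) (hodd : Odd R.length)
    (hly : IsLoose C y) : False := by
  classical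
  set n := R.length with hn
  have hn1 : 1 ≤ n := by rcases hodd with ⟨k, hk⟩; omega
  have hxy : x ≠ y := by
    intro h
    subst h
    have := Walk.isPath_iff_eq_nil.mp hR.1
    rw [this] at hn
    simp [hn] at hn1
  have hlenE : R.edges.length = n := by rw [Walk.length_edges]
  set S : Set (Sym2 V) := {e | e ∈ R.edges} with hS
  set C' : Set (Sym2 V) := (C \ S) ∪ (S \ C) with hC'
  have hcov : IsEdgeCover G C' := by
    constructor
    · rintro e (⟨he, -⟩ | ⟨he, -⟩)
      · exact hC.1 he
      · exact R.edges_subset_edgeSet he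
    · intro z
      by_cases hz : z ∈ R.support
      · rcases eq_or_ne z x with rfl | hzx
        · obtain ⟨e₁, e₂, he₁, he₂, hz1, hz2, hne⟩ := loose_two hC hR.2.1
          by_cases h1 : e₁ ∈ S
          · refine ⟨e₂, Or.inl ⟨he₂, ?_⟩, hz2⟩
            intro h2
            exact hne (startedge hR.1 h1 h2 hz1 hz2)
          · exact ⟨e₁, Or.inl ⟨he₁, h1⟩, hz1⟩
        rcases eq_or_ne z y with rfl | hzy
        · obtain ⟨e₁, e₂, he₁, he₂, hz1, hz2, hne⟩ := loose_two hC hly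
          have hrev : ∀ e, e ∈ S → e ∈ R.reverse.edges := by
            intro e he
            rw [Walk.edges_reverse, List.mem_reverse]
            exact he
          by_cases h1 : e₁ ∈ S
          · refine ⟨e₂, Or.inl ⟨he₂, ?_⟩, hz2⟩
            intro h2
            exact hne (startedge hR.1.reverse (hrev _ h1) (hrev _ h2) hz1 hz2)
          · exact ⟨e₁, Or.inl ⟨he₁, h1⟩, hz1⟩
        · set t := R.takeUntil z hz with ht
          set d := R.dropUntil z hz with hd
          have hspec : t.append d = R := R.take_spec hz
          have hedges : R.edges = t.edges ++ d.edges := by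
            rw [← Walk.edges_append, hspec]
          have hlensum : t.length + d.length = n := by
            rw [hn, ← hspec, Walk.length_append]
          have hi1 : 1 ≤ t.length := by
            rcases Nat.eq_zero_or_pos t.length with h0 | h
            · exact absurd (Walk.eq_of_length_eq_zero h0).symm hzx
            · exact h
          have hd1 : 1 ≤ d.length := by
            rcases Nat.eq_zero_or_pos d.length with h0 | h
            · exact absurd (Walk.eq_of_length_eq_zero h0) hzy
            · exact h
          obtain ⟨k, hk⟩ : ∃ k, t.length = k + 1 := ⟨t.length - 1, by omega⟩
          have hkn : k + 1 < n := by omega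
          have hkE : k + 1 < R.edges.length := by omega
          have hkE' : k < R.edges.length := by omega
          have htE : t.edges.length = k + 1 := by rw [Walk.length_edges, hk]
          have he1 : R.edges[k]'hkE' = s(t.getVert k, z) := by
            have h1 : R.edges[k]'hkE' = t.edges[k]'(by omega) := by
              rw [List.getElem_of_eq hedges, List.getElem_append_left]
            rw [h1, edgev t k (by omega)]
            rw [show k + 1 = t.length from hk.symm, Walk.getVert_length]
          have he2 : R.edges[k+1]'hkE = s(z, d.getVert 1) := by
            have h1 : R.edges[k+1]'hkE = d.edges[0]'(by rw [Walk.length_edges]; omega) := by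
              rw [List.getElem_of_eq hedges, List.getElem_append_right (by omega)]
              congr 1
              omega
            rw [h1, edgev d 0 (by rw [Walk.length_edges]; omega), Walk.getVert_zero]
          have hz1 : z ∈ R.edges[k]'hkE' := by rw [he1]; exact Sym2.mem_mk_right _ _
          have hz2 : z ∈ R.edges[k+1]'hkE := by rw [he2]; exact Sym2.mem_mk_left _ _
          have halt := hR.2.2.2 k (by omega)
          by_cases hc1 : R.edges[k]'hkE' ∈ C
          · exact ⟨R.edges[k+1]'hkE, Or.inr ⟨List.getElem_mem _, halt.mp hc1⟩, hz2⟩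
          · exact ⟨R.edges[k]'hkE', Or.inr ⟨List.getElem_mem _, hc1⟩, hz1⟩
      · obtain ⟨e, he, hze⟩ := hC.2 z
        refine ⟨e, Or.inl ⟨he, ?_⟩, hze⟩
        intro heS
        exact hz (mem_support_of_mem_edges' heS hze)
  have hnodup : R.edges.Nodup := hR.1.isTrail.edges_nodup
  have hcount : 2 * (C ∩ S).ncard = n + 1 := by
    have hset : C ∩ S = {e | e ∈ R.edges.filter (fun e => decide (e ∈ C))} := by
      ext e
      simp only [Set.mem_inter_iff, Set.mem_setOf_eq, List.mem_filter, decide_eq_true_eq, hS]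
      tauto
    rw [hset, list_set_ncard _ (hnodup.filter _),
      altcount (fun e => e ∈ C) R.edges (ic_edges_even hR)]
    rw [hlenE]
    rcases hodd with ⟨m, hm⟩
    omega
  have hScard : S.ncard = n := by
    rw [hS, list_set_ncard _ hnodup, hlenE]
  have hSC : (S \ C).ncard + (S ∩ C).ncard = n := by
    rw [← hScard, add_comm, Set.ncard_inter_add_ncard_diff_eq_ncard S C (Set.toFinite _)]
  have hCdiff : (C ∩ S).ncard + (C \ S).ncard = C.ncard :=
    Set.ncard_inter_add_ncard_diff_eq_ncard C S (Set.toFinite _)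
  have hdisj : Disjoint (C \ S) (S \ C) := by
    rw [Set.disjoint_left]
    rintro e ⟨-, heS⟩ ⟨heS', -⟩
    exact heS heS'
  have hunion : C'.ncard = (C \ S).ncard + (S \ C).ncard :=
    Set.ncard_union_eq hdisj (Set.toFinite _) (Set.toFinite _)
  have hmm := hmin C' hcov
  have hic : (S ∩ C).ncard = (C ∩ S).ncard := by rw [Set.inter_comm]
  omega


lemma oddwalk : ∀ (n : ℕ) {w : V} (c : G.Walk w w), c.length = n → Odd n →
    ∃ (x : V) (d : G.Walk x x), d.IsCycle ∧ Odd d.length ∧ d.length ≤ n := by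
  intro n
  induction n using Nat.strong_induction_on with
  | _ n ih =>
    intro w c hlen hodd
    by_cases hcyc : c.IsCycle
    · exact ⟨w, c, hcyc, hlen ▸ hodd, le_of_eq hlen⟩
    have hn1 : 1 ≤ n := by rcases hodd with ⟨m, hm⟩; omega
    have hnn : ¬ c.Nil := by rw [Walk.nil_iff_length_eq]; omega
    by_cases hnd : c.support.tail.Nodup
    · exfalso
      have hsupl : c.support.length = n + 1 := by rw [Walk.length_support, hlen]
      have htaill : c.support.tail.length = n := by
        rw [List.length_tail, hsupl]
        omega
      have hgv : ∀ (i : ℕ), 1 ≤ i → i ≤ n → ∀ (hb : i - 1 < c.support.tail.length),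
          c.getVert i = c.support.tail[i-1]'hb := by
        intro i h1 h2 hb
        have hx1 : c.support.tail[i-1]'hb = c.support[i]'(by omega) := by
          rw [List.getElem_tail]
          congr 1
          omega
        rw [hx1, suppv c i (by omega)]
      have hinj : ∀ i j, 1 ≤ i → i ≤ n → 1 ≤ j → j ≤ n →
          c.getVert i = c.getVert j → i = j := by
        intro i j hi1 hin hj1 hjn hval
        rw [hgv i hi1 hin (by omega), hgv j hj1 hjn (by omega)] at hval
        have := (hnd.getElem_inj_iff).mp hval
        omega
      have hwn : c.getVert n = w := by
        rw [← hlen]; exact Walk.getVert_length c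
      have hE : c.edges.length = n := by rw [Walk.length_edges, hlen]
      have hwuniq : ∀ j, 1 ≤ j → j ≤ n → c.getVert j = w → j = n := fun j h1 h2 hw =>
        hinj j n h1 h2 (by omega) le_rfl (by rw [hw, hwn])
      have htrail : c.IsTrail := by
        constructor
        by_contra hdup
        rw [List.Nodup, List.pairwise_iff_getElem] at hdup
        push_neg at hdup
        obtain ⟨s, t, hs, ht, hstlt, heq⟩ := hdup
        rw [edgev c s (by omega), edgev c t (by omega), Sym2.eq_iff] at heq
        rcases heq with ⟨h1, h2⟩ | ⟨h1, h2⟩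
        · rcases Nat.eq_zero_or_pos s with rfl | hs1
          · rw [Walk.getVert_zero] at h1
            have := hwuniq t (by omega) (by omega) h1.symm
            omega
          · have := hinj s t hs1 (by omega) (by omega) (by omega) h1
            omega
        · rcases Nat.eq_zero_or_pos s with rfl | hs1
          · rw [Walk.getVert_zero] at h1
            have htn : t + 1 = n := hwuniq (t+1) (by omega) (by omega) h1.symm
            have ht1 : (1 : ℕ) = t := hinj 1 t (by omega) (by omega) (by omega) (by omega) h2
            rcases hodd with ⟨m, hm⟩
            omega
          · have := hinj s (t+1) hs1 (by omega) (by omega) (by omega) h1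
            omega
      exact hcyc ⟨⟨htrail, fun h => by rw [h] at hlen; simp at hlen; omega⟩, hnd⟩
    · obtain ⟨y, hadj, d, rfl⟩ := Walk.not_nil_iff.mp hnn
      have hnd' : ¬ d.support.Nodup := by
        rwa [Walk.support_cons, List.tail_cons] at hnd
      obtain ⟨xx, hdup⟩ := List.exists_duplicate_iff_not_nodup.mpr hnd'
      have hcnt : 2 ≤ d.support.count xx := List.duplicate_iff_two_le_count.mp hdup
      have hx : xx ∈ d.support := hdup.mem
      set t1 := d.takeUntil xx hx with ht1
      set r := d.dropUntil xx hx with hr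
      have hspec : t1.append r = d := d.take_spec hx
      have hcnt1 : t1.support.count xx = 1 := d.count_support_takeUntil_eq_one hx
      have hsupp : d.support = t1.support ++ r.support.tail := by
        rw [← hspec, Walk.support_append]
      have hxr : xx ∈ r.support.tail := by
        by_contra hxr
        have : d.support.count xx = t1.support.count xx + r.support.tail.count xx := by
          rw [hsupp, List.count_append]
        rw [List.count_eq_zero_of_not_mem hxr] at this
        omega
      have hrnn : ¬ r.Nil := by
        intro hnil
        rw [Walk.nil_iff_support_eq] at hnil
        rw [hnil] at hxr
        simp at hxr
      obtain ⟨y2, hadj2, r', hre⟩ := Walk.not_nil_iff.mp hrnn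
      have hxr' : xx ∈ r'.support := by
        rw [hre, Walk.support_cons, List.tail_cons] at hxr
        exact hxr
      set t2 := r'.takeUntil xx hxr' with ht2
      set B := r'.dropUntil xx hxr' with hB
      have hspec2 : t2.append B = r' := r'.take_spec hxr'
      set A : G.Walk xx xx := Walk.cons hadj2 t2 with hA
      set Z : G.Walk xx xx := B.append (Walk.cons hadj t1) with hZ
      have hlenA : A.length = t2.length + 1 := by
        rw [hA, Walk.length_cons]
      have hlenZ : Z.length = B.length + t1.length + 1 := by
        rw [hZ, Walk.length_append, Walk.length_cons]
        omega
      have hd2 : t1.length + r.length = d.length := by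
        rw [← hspec, Walk.length_append]
      have hr2 : r.length = r'.length + 1 := by rw [hre, Walk.length_cons]
      have hr3 : t2.length + B.length = r'.length := by
        rw [← hspec2, Walk.length_append]
      have hlc : n = 1 + d.length := by
        rw [← hlen, Walk.length_cons]; omega
      have hsum : A.length + Z.length = n := by omega
      have h1A : 1 ≤ A.length := by omega
      have h1Z : 1 ≤ Z.length := by omega
      rcases Nat.even_or_odd A.length with hev | hodd'
      · have hoZ : Odd Z.length := by
          rcases hodd with ⟨m, hm⟩; rcases hev with ⟨m2, hm2⟩
          rw [Nat.odd_iff]; omega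
        obtain ⟨x', d', hc', ho', hle⟩ := ih Z.length (by omega) Z rfl hoZ
        exact ⟨x', d', hc', ho', by omega⟩
      · obtain ⟨x', d', hc', ho', hle⟩ := ih A.length (by omega) A rfl hodd'
        exact ⟨x', d', hc', ho', by omega⟩


lemma K1 {u v : V} (huv : G.Adj u v) (hc : s(u,v) ∈ C) {a : ℕ}
    (ha : intDist G C u = (a : ℕ∞)) (hodd : Odd a) :
    intDist G C v ≤ ((a - 1 : ℕ) : ℕ∞) := by
  have ha1 : 1 ≤ a := by rcases hodd with ⟨m, hm⟩; omega
  obtain ⟨x, p, hp, hlen⟩ := int_attained (by rw [ha]; exact ENat.coe_ne_top a)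
  rw [ha] at hlen
  have hplen : p.length = a := by exact_mod_cast hlen.symm
  have hnn : ¬ p.Nil := by rw [Walk.nil_iff_length_eq]; omega
  obtain ⟨z, hzadj, q, rfl⟩ := walk_exists_concat p hnn
  have hqlen : q.length = a - 1 := by
    have := Walk.length_concat q hzadj
    omega
  have hE : (q.concat hzadj).edges.length = a := by rw [Walk.length_edges, hplen]
  have hCE : (q.concat hzadj).edges = q.edges ++ [s(z,u)] := by
    rw [Walk.edges_concat, List.concat_eq_append]
  have hlast : (q.concat hzadj).edges[a-1]'(by rw [Walk.length_edges]; omega) = s(z, u) := by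
    rw [List.getElem_of_eq hCE, List.getElem_append_right (by rw [Walk.length_edges]; omega)]
    simp [Walk.length_edges, hqlen]
  have hlastC : s(z, u) ∈ C := by
    rw [← hlast]
    refine (ic_edges_even hp (a-1) (by rw [Walk.length_edges]; omega)).mpr ?_
    rcases hodd with ⟨m, hm⟩
    exact ⟨m, by omega⟩
  have hane : (a : ℕ∞) ≠ 0 := by
    exact_mod_cast Nat.one_le_iff_ne_zero.mp ha1
  have htight : IsTight C u := int_tight (by rw [ha]; exact hane)
  obtain ⟨f, hf⟩ := Set.ncard_eq_one.mp htight
  have h1 : s(z, u) = f := by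
    have : s(z,u) ∈ {e ∈ C | u ∈ e} := ⟨hlastC, Sym2.mem_mk_right _ _⟩
    rw [hf] at this
    exact this
  have h2 : s(u, v) = f := by
    have : s(u,v) ∈ {e ∈ C | u ∈ e} := ⟨hc, Sym2.mem_mk_left _ _⟩
    rw [hf] at this
    exact this
  have hzv : z = v := by
    have := h1.trans h2.symm
    rw [Sym2.eq_iff] at this
    rcases this with ⟨rfl, rfl⟩ | ⟨hz, -⟩
    · exact absurd rfl huv.ne
    · exact hz
  subst hzv
  have hq : IsInterchanging G C q := ic_of_concat hp
  have := int_le hq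
  rw [hqlen] at this
  exact this

lemma K2 {u v : V} (huv : G.Adj u v) (hnc : s(u,v) ∉ C) {a : ℕ}
    (ha : intDist G C u = (a : ℕ∞)) (hodd : Odd a) :
    intDist G C v ≤ ((a + 1 : ℕ) : ℕ∞) := by
  have ha1 : 1 ≤ a := by rcases hodd with ⟨m, hm⟩; omega
  obtain ⟨x, p, hp, hlen⟩ := int_attained (by rw [ha]; exact ENat.coe_ne_top a)
  rw [ha] at hlen
  have hplen : p.length = a := by exact_mod_cast hlen.symm
  by_cases hv : v ∈ p.support
  · have h1 := int_le (ic_takeUntil hp v hv)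
    have h2 : (p.takeUntil v hv).length ≤ a := hplen ▸ Walk.length_takeUntil_le p hv
    calc intDist G C v ≤ _ := h1
      _ ≤ ((a+1 : ℕ) : ℕ∞) := by exact_mod_cast Nat.le_succ_of_le h2
  · set q := p.concat huv with hq
    have hqpath : q.IsPath := by
      refine Walk.IsPath.mk' ?_
      rw [hq, Walk.support_concat, List.nodup_append]
      refine ⟨hp.1.support_nodup, List.nodup_singleton v, ?_⟩
      intro z hz b hz2 heq
      simp only [List.mem_singleton] at hz2
      subst hz2
      exact hv (by rw [← heq]; exact hz)
    have hqE : q.edges = p.edges ++ [s(u,v)] := by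
      rw [hq, Walk.edges_concat, List.concat_eq_append]
    have hqlen : q.edges.length = a + 1 := by
      rw [hqE, List.length_append, Walk.length_edges, hplen]
      rfl
    have hqic : IsInterchanging G C q := by
      refine ic_of_even hqpath hp.2.1 ?_
      intro i hi
      rw [hqlen] at hi
      rcases Nat.lt_or_ge i a with hia | hia
      · have : q.edges[i]'(by rw [hqlen]; omega) = p.edges[i]'(by rw [Walk.length_edges]; omega) := by
          rw [List.getElem_of_eq hqE, List.getElem_append_left]
        rw [this]
        exact ic_edges_even hp i (by rw [Walk.length_edges]; omega)
      · have hieq : i = a := by omega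
        subst hieq
        have : q.edges[i]'(by rw [hqlen]; omega) = s(u,v) := by
          rw [List.getElem_of_eq hqE, List.getElem_append_right (by rw [Walk.length_edges]; omega)]
          simp [Walk.length_edges, hplen]
        rw [this]
        simp only [hnc, false_iff]
        rcases hodd with ⟨m, hm⟩
        rw [Nat.even_iff]
        omega
    have := int_le hqic
    have hql : q.length = a + 1 := by
      rw [hq, Walk.length_concat, hplen]
    rw [hql] at this
    exact this


lemma K3aux (hC : IsEdgeCover G C)
    (hmin : ∀ C'' : Set (Sym2 V), IsEdgeCover G C'' → C.ncard ≤ C''.ncard)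
    {κ : ℕ} {u v p₀ q₀ : V} (huv : G.Adj u v) (hnc : s(u,v) ∉ C)
    (P : G.Walk p₀ u) (Q : G.Walk q₀ v)
    (hP : IsInterchanging G C P) (hQ : IsInterchanging G C Q)
    (hPo : Odd P.length) (hQo : Odd Q.length)
    {w : V} (hwP : w ∈ P.support) (hwQ : w ∈ Q.support)
    (hio : Odd (P.takeUntil w hwP).length) (hje : Even (Q.takeUntil w hwQ).length)
    (IH : ∀ {u' v' : V}, G.Adj u' v' → s(u',v') ∉ C →
      ∀ {p₀' q₀' : V} (P' : G.Walk p₀' u') (Q' : G.Walk q₀' v'),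
      IsInterchanging G C P' → IsInterchanging G C Q' → Odd P'.length → Odd Q'.length →
      P'.length + Q'.length < P.length + Q.length → 2 * κ ≤ P'.length + Q'.length) :
    2 * κ ≤ P.length + Q.length := by
  classical
  set a := P.length with hadef
  set b := Q.length with hbdef
  set tP := P.takeUntil w hwP with htP
  set tQ := Q.takeUntil w hwQ with htQ
  set i := tP.length with hidef
  set j := tQ.length with hjdef
  have hia : i ≤ a := Walk.length_takeUntil_le P hwP
  have hjb : j ≤ b := Walk.length_takeUntil_le Q hwQ
  have htPic : IsInterchanging G C tP := ic_takeUntil hP w hwP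
  have htQic : IsInterchanging G C tQ := ic_takeUntil hQ w hwQ
  rcases Nat.eq_zero_or_pos j with hj0 | hj1
  · -- w = q₀, tP is an augmenting path
    have hwq : q₀ = w := Walk.eq_of_length_eq_zero hj0
    subst hwq
    exact (aug hC hmin htPic hio hQ.2.1).elim
  · -- j ≥ 2
    have hj2 : 2 ≤ j := by
      rcases hje with ⟨m, hm⟩
      omega
    have htQnn : ¬ tQ.Nil := by
      rw [Walk.nil_iff_length_eq]
      omega
    obtain ⟨z, hzadj, Q', hQe⟩ := walk_exists_concat tQ htQnn
    have htQic' : IsInterchanging G C (Q'.concat hzadj) := hQe ▸ htQic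
    have hQ'ic : IsInterchanging G C Q' := ic_of_concat htQic'
    have hQ'len : Q'.length = j - 1 := by
      have := Walk.length_concat Q' hzadj
      rw [← hQe] at this
      omega
    have hQ'odd : Odd Q'.length := by
      rcases hje with ⟨m, hm⟩
      rw [hQ'len]
      exact ⟨m - 1, by omega⟩
    have hzwnc : s(w, z) ∉ C := by
      have hE : tQ.edges.length = j := by rw [Walk.length_edges]
      have hCE : tQ.edges = Q'.edges ++ [s(z,w)] := by
        rw [hQe, Walk.edges_concat, List.concat_eq_append]
      have hlast : tQ.edges[j-1]'(by rw [Walk.length_edges]; omega) = s(z, w) := by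
        rw [List.getElem_of_eq hCE, List.getElem_append_right (by rw [Walk.length_edges, hQ'len])]
        simp [Walk.length_edges, hQ'len]
      have := ic_edges_even htQic (j-1) (by rw [Walk.length_edges]; omega)
      rw [hlast] at this
      intro hmem
      have : Even (j-1) := this.mp (by rwa [Sym2.eq_swap])
      rcases hje with ⟨m, hm⟩
      rcases this with ⟨m2, hm2⟩
      omega
    -- strictness
    have hne : ¬ (i = a ∧ j = b) := by
      rintro ⟨hia', hjb'⟩
      have h1 : tP.append (P.dropUntil w hwP) = P := P.take_spec hwP
      have h2 : (P.dropUntil w hwP).length = 0 := by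
        have := congrArg Walk.length h1
        rw [Walk.length_append] at this
        omega
      have hwu : w = u := Walk.eq_of_length_eq_zero h2
      have h1' : tQ.append (Q.dropUntil w hwQ) = Q := Q.take_spec hwQ
      have h2' : (Q.dropUntil w hwQ).length = 0 := by
        have := congrArg Walk.length h1'
        rw [Walk.length_append] at this
        omega
      have hwv : w = v := Walk.eq_of_length_eq_zero h2'
      exact huv.ne (hwu ▸ hwv ▸ rfl)
    have hfin := IH hzadj.symm hzwnc tP Q' htPic hQ'ic hio hQ'odd (by omega)
    omega


lemma closed_case {κ : ℕ}
    (hgirth : ∀ (w : V) (c : G.Walk w w), c.IsCycle → Odd c.length → 2 * κ + 1 ≤ c.length)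
    {u v : V} (huv : G.Adj u v) {p₀ q₀ : V} (P : G.Walk p₀ u) (Q : G.Walk q₀ v)
    (hPo : Odd P.length) (hQo : Odd Q.length)
    {w : V} (hwP : w ∈ P.support) (hwQ : w ∈ Q.support)
    (hpar : (P.takeUntil w hwP).length % 2 = (Q.takeUntil w hwQ).length % 2) :
    2 * κ ≤ P.length + Q.length := by
  have hPsum : (P.takeUntil w hwP).length + (P.dropUntil w hwP).length = P.length := by
    have := congrArg Walk.length (P.take_spec hwP)
    rw [Walk.length_append] at this
    omega
  have hQsum : (Q.takeUntil w hwQ).length + (Q.dropUntil w hwQ).length = Q.length := by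
    have := congrArg Walk.length (Q.take_spec hwQ)
    rw [Walk.length_append] at this
    omega
  have hZlen : ((P.dropUntil w hwP).append (Walk.cons huv (Q.dropUntil w hwQ).reverse)).length
      = (P.dropUntil w hwP).length + (Q.dropUntil w hwQ).length + 1 := by
    rw [Walk.length_append, Walk.length_cons, Walk.length_reverse]
    omega
  have hZodd : Odd ((P.dropUntil w hwP).append (Walk.cons huv (Q.dropUntil w hwQ).reverse)).length := by
    rw [Nat.odd_iff] at hPo hQo ⊢
    rw [hZlen]
    omega
  obtain ⟨x', c', hcyc, hodd', hlen'⟩ := oddwalk _ _ rfl hZodd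
  have := hgirth x' c' hcyc hodd'
  rw [hZlen] at hlen'
  omega

lemma K3core {κ : ℕ}
    (hgirth : ∀ (w : V) (c : G.Walk w w), c.IsCycle → Odd c.length → 2 * κ + 1 ≤ c.length)
    (hC : IsEdgeCover G C)
    (hmin : ∀ C'' : Set (Sym2 V), IsEdgeCover G C'' → C.ncard ≤ C''.ncard) :
    ∀ (N : ℕ) {u v : V}, G.Adj u v → s(u,v) ∉ C →
    ∀ {p₀ q₀ : V} (P : G.Walk p₀ u) (Q : G.Walk q₀ v),
      IsInterchanging G C P → IsInterchanging G C Q → Odd P.length → Odd Q.length →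
      P.length + Q.length ≤ N → 2 * κ ≤ P.length + Q.length := by
  intro N
  induction N using Nat.strong_induction_on with
  | _ N ihN =>
    intro u v huv hnc p₀ q₀ P Q hP hQ hPo hQo hle
    have IH : ∀ {u' v' : V}, G.Adj u' v' → s(u',v') ∉ C →
        ∀ {p₀' q₀' : V} (P' : G.Walk p₀' u') (Q' : G.Walk q₀' v'),
        IsInterchanging G C P' → IsInterchanging G C Q' → Odd P'.length → Odd Q'.length →
        P'.length + Q'.length < P.length + Q.length → 2 * κ ≤ P'.length + Q'.length := by
      intro u' v' huv' hnc' p₀' q₀' P' Q' hP' hQ' hPo' hQo' hlt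
      exact ihN (P'.length + Q'.length) (by omega) huv' hnc' P' Q' hP' hQ' hPo' hQo' le_rfl
    set a := P.length with hadef
    set b := Q.length with hbdef
    set W := P.append (Walk.cons huv Q.reverse) with hW
    have hWlen : W.length = a + b + 1 := by
      rw [hW, Walk.length_append, Walk.length_cons, Walk.length_reverse]
      omega
    have hWE : W.edges = P.edges ++ (s(u,v) :: Q.edges.reverse) := by
      rw [hW, Walk.edges_append, Walk.edges_cons, Walk.edges_reverse]
    have hWElen : W.edges.length = a + b + 1 := by rw [Walk.length_edges, hWlen]
    have hPE : P.edges.length = a := by rw [Walk.length_edges]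
    have hQE : Q.edges.length = b := by rw [Walk.length_edges]
    by_cases hWp : W.IsPath
    · have hWic : IsInterchanging G C W := by
        refine ic_of_even hWp hP.2.1 ?_
        intro k hk
        rcases lt_trichotomy k a with hka | hka | hka
        · have : W.edges[k]'hk = P.edges[k]'(by omega) := by
            rw [List.getElem_of_eq hWE, List.getElem_append_left]
          rw [this]
          exact ic_edges_even hP k (by omega)
        · have : W.edges[k]'hk = s(u,v) := by
            rw [List.getElem_of_eq hWE, List.getElem_append_right (by omega)]
            have h0 : k - P.edges.length = 0 := by omega
            have h0' : k - P.length = 0 := by omega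
            simp [h0, h0']
          rw [this]
          simp only [hnc, false_iff]
          rcases hPo with ⟨m, hm⟩
          rw [Nat.even_iff]
          omega
        · have hkk : k < a + b + 1 := by omega
          have hrevlen : Q.edges.reverse.length = b := by
            rw [List.length_reverse, hQE]
          have h1 : W.edges[k]'hk = Q.edges.reverse[k - a - 1]'(by omega) := by
            rw [List.getElem_of_eq hWE, List.getElem_append_right (by omega)]
            have : k - P.edges.length = (k - a - 1) + 1 := by omega
            simp only [this, List.getElem_cons_succ]
          have h2 : Q.edges.reverse[k - a - 1]'(by omega) = Q.edges[a + b - k]'(by omega) := by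
            rw [List.getElem_reverse]
            congr 1
            omega
          rw [h1, h2]
          have h3 := ic_edges_even hQ (a + b - k) (by omega)
          rw [h3]
          rcases hPo with ⟨m1, hm1⟩
          rcases hQo with ⟨m2, hm2⟩
          rw [Nat.even_iff, Nat.even_iff]
          omega
      have hWodd : Odd W.length := by
        rcases hPo with ⟨m1, hm1⟩
        rcases hQo with ⟨m2, hm2⟩
        rw [hWlen]
        exact ⟨m1 + m2 + 1, by omega⟩
      exact (aug hC hmin hWic hWodd hQ.2.1).elim
    · have hnodup : ¬ W.support.Nodup := fun h => hWp (Walk.IsPath.mk' h)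
      have hWs : W.support = P.support ++ Q.reverse.support := by
        rw [hW, Walk.support_append, Walk.support_cons, List.tail_cons]
      obtain ⟨w, hwP, hwQ⟩ : ∃ w, w ∈ P.support ∧ w ∈ Q.support := by
        by_contra hdis
        push_neg at hdis
        apply hnodup
        rw [hWs, List.nodup_append]
        refine ⟨hP.1.support_nodup, hQ.1.reverse.support_nodup, ?_⟩
        intro z hz1 b hz2 heq
        rw [Walk.support_reverse, List.mem_reverse] at hz2
        exact hdis z hz1 (by rw [heq]; exact hz2)
      set i := (P.takeUntil w hwP).length with hidef
      set j := (Q.takeUntil w hwQ).length with hjdef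
      have hia : i ≤ a := Walk.length_takeUntil_le P hwP
      have hjb : j ≤ b := Walk.length_takeUntil_le Q hwQ
      rcases Nat.even_or_odd i with hie | hio
      · rcases Nat.even_or_odd j with hje | hjo
        · -- both even: closed walk
          have hZ := closed_case hgirth huv P Q hPo hQo hwP hwQ
            (by rw [← hidef, ← hjdef, Nat.even_iff] at *; omega)
          omega
        · -- i even, j odd: swap
          have := K3aux hC hmin huv.symm (by rwa [Sym2.eq_swap]) Q P hQ hP hQo hPo hwQ hwP hjo hie
            (fun {u' v'} h1 h2 {p' q'} P' Q' h3 h4 h5 h6 h7 =>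
              IH h1 h2 P' Q' h3 h4 h5 h6 (by omega))
          omega
      · rcases Nat.even_or_odd j with hje | hjo
        · -- i odd, j even
          have := K3aux hC hmin huv hnc P Q hP hQ hPo hQo hwP hwQ hio hje IH
          omega
        · -- both odd: closed walk
          have hZ := closed_case hgirth huv P Q hPo hQo hwP hwQ
            (by rw [← hidef, ← hjdef] at *; rw [Nat.odd_iff] at hio hjo; omega)
          omega


lemma K3 {κ : ℕ}
    (hgirth : ∀ (w : V) (c : G.Walk w w), c.IsCycle → Odd c.length → 2 * κ + 1 ≤ c.length)
    (hC : IsEdgeCover G C)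
    (hmin : ∀ C'' : Set (Sym2 V), IsEdgeCover G C'' → C.ncard ≤ C''.ncard)
    {u v : V} (huv : G.Adj u v) (hnc : s(u,v) ∉ C) {a b : ℕ}
    (ha : intDist G C u = (a : ℕ∞)) (hb : intDist G C v = (b : ℕ∞))
    (hoa : Odd a) (hob : Odd b) : 2 * κ ≤ a + b := by
  obtain ⟨x, P, hP, hlenP⟩ := int_attained (by rw [ha]; exact ENat.coe_ne_top a)
  obtain ⟨y, Q, hQ, hlenQ⟩ := int_attained (by rw [hb]; exact ENat.coe_ne_top b)
  rw [ha] at hlenP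
  rw [hb] at hlenQ
  have hPa : P.length = a := by exact_mod_cast hlenP.symm
  have hQb : Q.length = b := by exact_mod_cast hlenQ.symm
  have := K3core hgirth hC hmin (P.length + Q.length) huv hnc P Q hP hQ
    (hPa ▸ hoa) (hQb ▸ hob) le_rfl
  omega

lemma Kboth {u v : V} (huv : G.Adj u v) {a : ℕ}
    (ha : intDist G C u = (a : ℕ∞)) (hodd : Odd a) :
    intDist G C v ≤ ((a + 1 : ℕ) : ℕ∞) := by
  by_cases hmem : s(u,v) ∈ C
  · exact (K1 huv hmem ha hodd).trans (Nat.cast_le.mpr (by omega))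
  · exact K2 huv hmem ha hodd

lemma yEC_even {κ : ℕ} {v : V} {a : ℕ} (ha : intDist G C v = (a : ℕ∞)) (haκ : a < κ)
    (hev : Even a) : yEC G C κ v = (a : ℚ) / (2 * ((κ:ℚ) + 1)) := by
  unfold yEC
  rw [ha]
  rw [if_pos (by exact_mod_cast haκ)]
  simp only [ENat.toNat_coe]
  rw [if_pos hev]

lemma yEC_odd {κ : ℕ} {v : V} {a : ℕ} (ha : intDist G C v = (a : ℕ∞)) (haκ : a < κ)
    (hod : Odd a) : yEC G C κ v = 1 - ((a : ℚ) + 1) / (2 * ((κ:ℚ) + 1)) := by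
  unfold yEC
  rw [ha]
  rw [if_pos (by exact_mod_cast haκ)]
  simp only [ENat.toNat_coe]
  rw [if_neg (by rwa [Nat.not_even_iff_odd])]

lemma yEC_ge {κ : ℕ} {v : V} (hv : ¬ intDist G C v < (κ : ℕ∞)) :
    yEC G C κ v = ((⌈(κ : ℚ) / 2⌉ : ℤ) : ℚ) / ((κ:ℚ) + 1) := by
  unfold yEC
  rw [if_neg hv]

lemma ceilZ (κ : ℕ) : (κ : ℤ) ≤ 2 * ⌈(κ : ℚ) / 2⌉ ∧ 2 * ⌈(κ : ℚ) / 2⌉ ≤ (κ : ℤ) + 1 := by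
  rcases Nat.even_or_odd κ with ⟨m, hm⟩ | ⟨m, hm⟩
  · have h2 : (κ : ℚ) / 2 = ((m : ℤ) : ℚ) := by
      rw [hm]; push_cast; ring
    rw [h2, Int.ceil_intCast]
    constructor <;> [skip; skip] <;> (rw [hm]; push_cast; omega)
  · have h2 : ⌈(κ : ℚ) / 2⌉ = (m : ℤ) + 1 := by
      rw [Int.ceil_eq_iff]
      constructor
      · rw [hm]; push_cast; linarith
      · rw [hm]; push_cast; linarith
    rw [h2, hm]
    push_cast
    omega


lemma both_mixed {κ : ℕ} {u v : V} {a b : ℕ} (huv : G.Adj u v)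
    (ha : intDist G C u = (a : ℕ∞)) (hb : intDist G C v = (b : ℕ∞))
    (haκ : a < κ) (hbκ : b < κ) (hea : Even a) (hob : Odd b) :
    yEC G C κ u + yEC G C κ v ≤ 1 := by
  have hub := Kboth huv.symm hb hob
  rw [ha, Nat.cast_le] at hub
  rw [yEC_even ha haκ hea, yEC_odd hb hbκ hob]
  have hKpos : (0:ℚ) < 2 * ((κ:ℚ) + 1) := by positivity
  have h1 : (a : ℚ) ≤ (b : ℚ) + 1 := by exact_mod_cast hub
  have h2 : (a : ℚ) / (2 * ((κ:ℚ) + 1)) ≤ ((b:ℚ) + 1) / (2 * ((κ:ℚ) + 1)) := by gcongr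
  linarith

lemma mixed_case {κ : ℕ} (hκ : 0 < κ)
    {u v : V} (huv : G.Adj u v)
    (hu : intDist G C u < (κ : ℕ∞)) (hv : ¬ intDist G C v < (κ : ℕ∞)) :
    yEC G C κ u + yEC G C κ v ≤ 1 := by
  have hne : intDist G C u ≠ ⊤ := (lt_of_lt_of_le hu le_top).ne
  obtain ⟨a, hadu⟩ : ∃ a : ℕ, intDist G C u = (a : ℕ∞) := ⟨_, (ENat.coe_toNat hne).symm⟩
  have haκ : a < κ := by
    rw [hadu] at hu
    exact_mod_cast hu
  have hceil := ceilZ κ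
  have hKpos : (0:ℚ) < 2 * ((κ:ℚ) + 1) := by positivity
  have hcc : ((⌈(κ : ℚ) / 2⌉ : ℤ) : ℚ) / ((κ:ℚ) + 1)
      = (2 * ((⌈(κ : ℚ) / 2⌉ : ℤ) : ℚ)) / (2 * ((κ:ℚ) + 1)) := by
    rw [mul_div_mul_left _ _ (two_ne_zero)]
  rw [yEC_ge hv, hcc]
  have hc2 : 2 * ((⌈(κ : ℚ) / 2⌉ : ℤ) : ℚ) ≤ (κ : ℚ) + 1 := by
    exact_mod_cast hceil.2
  rcases Nat.even_or_odd a with hea | hoa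
  · rw [yEC_even hadu haκ hea, ← add_div, div_le_one hKpos]
    have : (a : ℚ) ≤ (κ : ℚ) - 1 := by
      have : (a:ℚ) + 1 ≤ (κ:ℚ) := by exact_mod_cast haκ
      linarith
    linarith
  · rw [yEC_odd hadu haκ hoa]
    have hbd := Kboth huv hadu hoa
    have hκv : (κ : ℕ∞) ≤ intDist G C v := not_lt.mp hv
    have hκa : κ ≤ a + 1 := by
      have := hκv.trans hbd
      exact_mod_cast this
    have hκeq : κ = a + 1 := by omega
    have heκ : Even κ := by
      rw [hκeq]
      exact hoa.add_one
    have hc2' : 2 * (⌈(κ : ℚ) / 2⌉ : ℤ) ≤ (κ : ℤ) := by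
      obtain ⟨t, ht⟩ := heκ
      have : (κ : ℤ) = 2 * t := by exact_mod_cast (by omega : κ = 2 * t)
      omega
    have hc2'' : 2 * ((⌈(κ : ℚ) / 2⌉ : ℤ) : ℚ) ≤ (κ : ℚ) := by exact_mod_cast hc2'
    have hak : (a : ℚ) + 1 = (κ : ℚ) := by exact_mod_cast congrArg (Nat.cast : ℕ → ℚ) hκeq.symm
    have h3 : (2 * ((⌈(κ : ℚ) / 2⌉ : ℤ) : ℚ)) / (2 * ((κ:ℚ) + 1))
        ≤ ((a:ℚ) + 1) / (2 * ((κ:ℚ) + 1)) := by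
      gcongr
      linarith
    linarith

end Helpers

theorem stmt4 (κ : ℕ) (hκ : 0 < κ) (G : SimpleGraph V)
    (hiso : ∀ v : V, ∃ u : V, G.Adj v u)
    (hgirth : ∀ (w : V) (c : G.Walk w w), c.IsCycle → Odd c.length → 2 * κ + 1 ≤ c.length)
    (C : Set (Sym2 V)) (hC : IsEdgeCover G C)
    (hmin : ∀ C' : Set (Sym2 V), IsEdgeCover G C' → C.ncard ≤ C'.ncard) :
    ∀ u v : V, G.Adj u v → yEC G C κ u + yEC G C κ v ≤ 1 := by
  intro u v huv
  classical
  have hKpos : (0:ℚ) < 2 * ((κ:ℚ) + 1) := by positivity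
  by_cases hu : intDist G C u < (κ : ℕ∞)
  · by_cases hv : intDist G C v < (κ : ℕ∞)
    · have hneu : intDist G C u ≠ ⊤ := (lt_of_lt_of_le hu le_top).ne
      have hnev : intDist G C v ≠ ⊤ := (lt_of_lt_of_le hv le_top).ne
      obtain ⟨a, hadu⟩ : ∃ a : ℕ, intDist G C u = (a : ℕ∞) := ⟨_, (ENat.coe_toNat hneu).symm⟩
      obtain ⟨b, hbdv⟩ : ∃ b : ℕ, intDist G C v = (b : ℕ∞) := ⟨_, (ENat.coe_toNat hnev).symm⟩
      have haκ : a < κ := by rw [hadu] at hu; exact_mod_cast hu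
      have hbκ : b < κ := by rw [hbdv] at hv; exact_mod_cast hv
      rcases Nat.even_or_odd a with hea | hoa
      · rcases Nat.even_or_odd b with heb | hob
        · rw [yEC_even hadu haκ hea, yEC_even hbdv hbκ heb, ← add_div,
            div_le_one hKpos]
          have h1 : (a : ℚ) + 1 ≤ (κ : ℚ) := by exact_mod_cast haκ
          have h2 : (b : ℚ) + 1 ≤ (κ : ℚ) := by exact_mod_cast hbκ
          linarith
        · exact both_mixed huv hadu hbdv haκ hbκ hea hob
      · rcases Nat.even_or_odd b with heb | hob
        · rw [add_comm]
          exact both_mixed huv.symm hbdv hadu hbκ haκ heb hoa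
        · exfalso
          have ha1 : 1 ≤ a := by rcases hoa with ⟨m, hm⟩; omega
          have hb1 : 1 ≤ b := by rcases hob with ⟨m, hm⟩; omega
          by_cases hmem : s(u,v) ∈ C
          · have h1 := K1 huv hmem hadu hoa
            have h2 := K1 huv.symm (by rwa [Sym2.eq_swap]) hbdv hob
            rw [hbdv, Nat.cast_le] at h1
            rw [hadu, Nat.cast_le] at h2
            omega
          · have := K3 hgirth hC hmin huv hmem hadu hbdv hoa hob
            omega
    · exact mixed_case hκ huv hu hv
  · by_cases hv : intDist G C v < (κ : ℕ∞)
    · rw [add_comm]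
      exact mixed_case hκ huv.symm hv hu
    · rw [yEC_ge hu, yEC_ge hv, ← add_div]
      have hc2 : 2 * ((⌈(κ : ℚ) / 2⌉ : ℤ) : ℚ) ≤ (κ : ℚ) + 1 := by
        exact_mod_cast (ceilZ κ).2
      rw [div_le_one (by positivity)]
      linarith
end

section
/- Let κ be a positive integer, let G = (V,E) be a finite simple graph with no isolated vertices in which every odd cycle has length at least 2κ+1, let C be a minimum edge cover of G, and let y : V → ℚ be defined from int as in the context. Then y_u + y_v ≥ κ/(κ+1) for every edge (u,v) ∈ C. -/
open SimpleGraph Finset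

variable {V : Type*} [Fintype V] [DecidableEq V]

set_option linter.unusedSectionVars false

section Aux

namespace SimpleGraph.Walk

variable {G : SimpleGraph V}

lemma edges_getElem' {u v : V} (p : G.Walk u v) : ∀ (i : ℕ) (h : i < p.edges.length),
    p.edges[i]'h = s(p.getVert i, p.getVert (i+1)) := by
  induction p with
  | nil => intro i h; simp at h
  | cons hadj q ih =>
    intro i h
    cases i with
    | zero => simp [getVert_cons]
    | succ n =>
      simp only [edges_cons, getVert_cons_succ]
      exact ih n (by simpa using h)

lemma support_getElem' {u v : V} (p : G.Walk u v) : ∀ (i : ℕ) (h : i < p.support.length),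
    p.support[i]'h = p.getVert i := by
  induction p with
  | nil => intro i h; simp at h; simp [h, support_nil]
  | cons hadj q ih =>
    intro i h
    cases i with
    | zero => simp
    | succ n =>
      simp only [support_cons, getVert_cons_succ, List.getElem_cons_succ]
      exact ih n (by simpa [support_cons] using h)

/-- take the first `n` edges of a walk -/
def wtake {u v : V} : (p : G.Walk u v) → (n : ℕ) → G.Walk u (p.getVert n)
  | p, 0 => (Walk.nil).copy rfl (p.getVert_zero).symm
  | .nil, _ + 1 => .nil
  | .cons h q, n + 1 => .cons h (q.wtake n)

@[simp] lemma wtake_zero {u v : V} (p : G.Walk u v) : p.wtake 0 = Walk.nil.copy rfl (p.getVert_zero).symm := by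
  cases p <;> rfl

lemma length_wtake {u v : V} (p : G.Walk u v) : ∀ (n : ℕ), (p.wtake n).length = min n p.length := by
  induction p with
  | nil => intro n; cases n <;> simp [wtake]
  | cons h q ih =>
    intro n
    cases n with
    | zero => simp [wtake]
    | succ m => simp [wtake, ih m, Nat.succ_min_succ]

lemma edges_wtake {u v : V} (p : G.Walk u v) : ∀ (n : ℕ), (p.wtake n).edges = p.edges.take n := by
  induction p with
  | nil => intro n; cases n <;> simp [wtake]
  | cons h q ih =>
    intro n
    cases n with
    | zero => simp [wtake]
    | succ m => simp [wtake, ih m]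

lemma length_drop' {u v : V} (p : G.Walk u v) : ∀ (n : ℕ), (p.drop n).length = p.length - n := by
  induction p with
  | nil => intro n; cases n <;> simp [drop]
  | cons h q ih =>
    intro n
    cases n with
    | zero => simp [drop]
    | succ m => simpa [drop] using ih m

lemma edges_drop' {u v : V} (p : G.Walk u v) : ∀ (n : ℕ), (p.drop n).edges = p.edges.drop n := by
  induction p with
  | nil => intro n; cases n <;> simp [drop]
  | cons h q ih =>
    intro n
    cases n with
    | zero => simp [drop]
    | succ m => simpa [drop] using ih m

lemma getVert_drop' {u v : V} (p : G.Walk u v) : ∀ (n m : ℕ), (p.drop n).getVert m = p.getVert (n + m) := by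
  induction p with
  | nil => intro n m; cases n <;> rfl
  | cons h q ih =>
    intro n m
    cases n with
    | zero => simp [drop]
    | succ k =>
      have h1 : ((cons h q).drop (k+1)).getVert m = (q.drop k).getVert m := by
        simp [drop]
      rw [h1, ih k m, show k + 1 + m = (k + m) + 1 by omega, getVert_cons_succ]

end SimpleGraph.Walk



/-- alternating condition -/
def AltE (C : Set (Sym2 V)) {G : SimpleGraph V} {x z : V} (p : G.Walk x z) : Prop :=
  ∀ i : ℕ, ∀ h : i < p.edges.length, (p.edges[i]'h ∈ C ↔ Even i)

variable {G : SimpleGraph V} {C : Set (Sym2 V)}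

lemma isInterchanging_iff {x z : V} (p : G.Walk x z) :
    IsInterchanging G C p ↔ p.IsPath ∧ IsLoose C x ∧ AltE C p := by
  constructor
  · rintro ⟨h1, h2, h3, h4⟩
    refine ⟨h1, h2, ?_⟩
    intro i
    induction i with
    | zero =>
      intro h
      simp only [Even.zero, iff_true]
      exact h3 h
    | succ n ih =>
      intro h
      have hn : n < p.edges.length := Nat.lt_of_succ_lt h
      have h4' := h4 n h
      have hi := ih hn
      have : p.edges[n+1]'h ∈ C ↔ ¬ Even n := by
        rw [← hi]; tauto
      rw [this, Nat.even_add_one]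
  · rintro ⟨h1, h2, h3⟩
    refine ⟨h1, h2, fun h => (h3 0 h).mpr (by simp), ?_⟩
    intro i h
    rw [h3 i (Nat.lt_of_succ_lt h), h3 (i+1) h]
    simp [Nat.even_add_one]

lemma intDist_le' {x v : V} (p : G.Walk x v) (hp : IsInterchanging G C p) :
    intDist G C v ≤ (p.length : ℕ∞) :=
  iInf_le_of_le x (iInf_le_of_le p (iInf_le _ hp))

lemma intDist_exists {v : V} (h : intDist G C v < ⊤) :
    ∃ (x : V) (p : G.Walk x v), IsInterchanging G C p ∧ (p.length : ℕ∞) = intDist G C v := by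
  classical
  set S : Set ℕ := {n | ∃ (x : V) (p : G.Walk x v), IsInterchanging G C p ∧ p.length = n} with hSdef
  have hS : S.Nonempty := by
    by_contra hemp
    rw [Set.not_nonempty_iff_eq_empty] at hemp
    have htop : intDist G C v = ⊤ := by
      apply le_antisymm le_top
      refine le_iInf fun x => le_iInf fun p => le_iInf fun hp => ?_
      exact absurd (show p.length ∈ S from ⟨x, p, hp, rfl⟩) (by simp [hemp])
    rw [htop] at h
    exact absurd h (lt_irrefl _)
  obtain ⟨x, p, hp, hlen⟩ := Nat.sInf_mem hS
  refine ⟨x, p, hp, le_antisymm ?_ (intDist_le' p hp)⟩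
  refine le_iInf fun x' => le_iInf fun q => le_iInf fun hq => ?_
  have : sInf S ≤ q.length := Nat.sInf_le ⟨x', q, hq, rfl⟩
  rw [hlen]
  exact_mod_cast this

lemma intDist_eq_zero_of_loose {v : V} (h : IsLoose C v) : intDist G C v = 0 := by
  have h0 : IsInterchanging G C (Walk.nil : G.Walk v v) := by
    refine ⟨Walk.IsPath.nil, h, fun h' => absurd h' (by simp), fun i h' => absurd h' (by simp)⟩
  have := intDist_le' (Walk.nil : G.Walk v v) h0
  simpa using this

lemma isTight_of_intDist_ne_zero {v : V} (h : intDist G C v ≠ 0) : IsTight C v := by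
  by_contra hl
  exact h (intDist_eq_zero_of_loose hl)

lemma IsInterchanging.takeUntil' {x z w : V} {p : G.Walk x z} (hp : IsInterchanging G C p)
    (hw : w ∈ p.support) : IsInterchanging G C (p.takeUntil w hw) := by
  rw [isInterchanging_iff] at hp ⊢
  obtain ⟨h1, h2, h3⟩ := hp
  refine ⟨h1.takeUntil hw, h2, ?_⟩
  have hsplit := congrArg SimpleGraph.Walk.edges (p.take_spec hw)
  rw [SimpleGraph.Walk.edges_append] at hsplit
  intro i h
  have hi2 : i < p.edges.length := by
    rw [← hsplit, List.length_append]; omega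
  have e1 : p.edges[i]'hi2 = ((p.takeUntil w hw).edges ++ (p.dropUntil w hw).edges)[i]'(by rw [hsplit]; exact hi2) :=
    List.getElem_of_eq hsplit.symm hi2
  have e2 : ((p.takeUntil w hw).edges ++ (p.dropUntil w hw).edges)[i]'(by rw [hsplit]; exact hi2) = (p.takeUntil w hw).edges[i]'h :=
    List.getElem_append_left h
  rw [← e1.trans e2]
  exact h3 i hi2

lemma getElem_edges_concat {x y u : V} (q : G.Walk x y) (hadj : G.Adj y u) (i : ℕ)
    (hi : i < (q.concat hadj).edges.length) :
    (q.concat hadj).edges[i]'hi =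
      if h : i < q.edges.length then q.edges[i]'h else s(y, u) := by
  have hcc : (q.concat hadj).edges = q.edges ++ [s(y, u)] := by
    rw [Walk.edges_concat, List.concat_eq_append]
  have h2 := List.getElem_of_eq hcc hi
  rw [h2]
  by_cases h : i < q.edges.length
  · rw [dif_pos h]
    exact List.getElem_append_left h
  · rw [dif_neg h]
    have hlen : (q.concat hadj).edges.length = q.edges.length + 1 := by
      rw [hcc]; simp
    have : i = q.edges.length := by omega
    subst this
    rw [List.getElem_append_right (le_refl _)]
    simp

lemma extend_lemma {x u v : V} (p : G.Walk x u) (hp : IsInterchanging G C p)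
    (heven : Even p.length) (huv : s(u, v) ∈ C) (hadj : G.Adj u v) :
    intDist G C v ≤ (p.length : ℕ∞) + 1 := by
  by_cases hv : v ∈ p.support
  · have h1 := intDist_le' _ (hp.takeUntil' hv)
    have h2 : (p.takeUntil v hv).length ≤ p.length := Walk.length_takeUntil_le p hv
    calc intDist G C v ≤ ((p.takeUntil v hv).length : ℕ∞) := h1
      _ ≤ (p.length : ℕ∞) := by exact_mod_cast h2
      _ ≤ (p.length : ℕ∞) + 1 := le_self_add
  · have hq : IsInterchanging G C (p.concat hadj) := by
      rw [isInterchanging_iff] at hp ⊢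
      obtain ⟨h1, h2, h3⟩ := hp
      refine ⟨?_, h2, ?_⟩
      · rw [Walk.isPath_def, Walk.support_concat]
        rw [Walk.isPath_def] at h1
        simp [List.nodup_append, h1, hv]
        exact fun a ha h => hv (h ▸ ha)
      · intro i h
        rw [getElem_edges_concat p hadj i h]
        by_cases hlt : i < p.edges.length
        · rw [dif_pos hlt]
          exact h3 i hlt
        · rw [dif_neg hlt]
          have hlen : (p.concat hadj).edges.length = p.edges.length + 1 := by
            rw [Walk.edges_concat]; simp
          have : i = p.edges.length := by omega
          subst this
          simp only [Walk.length_edges]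
          simpa [heven] using huv
    have := intDist_le' _ hq
    rw [Walk.length_concat] at this
    exact_mod_cast this

lemma shrink_lemma {x u v : V} (p : G.Walk x u) (hp : IsInterchanging G C p)
    (hodd : Odd p.length) (huv : s(u, v) ∈ C) (ht : IsTight C u) :
    intDist G C v + 1 ≤ (p.length : ℕ∞) := by
  obtain ⟨y, q, hadj', rfl⟩ : ∃ (y : V) (q : G.Walk x y) (h' : G.Adj y u), p = q.concat h' := by
    rcases hr : p.reverse with _ | ⟨h, q⟩
    · exfalso
      have : p.length = 0 := by
        have := congrArg SimpleGraph.Walk.length hr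
        simpa using this
      rw [this] at hodd
      simp at hodd
    · refine ⟨_, q.reverse, h.symm, ?_⟩
      rw [← SimpleGraph.Walk.reverse_reverse p, hr, SimpleGraph.Walk.reverse_cons]
      rfl
  rw [isInterchanging_iff] at hp
  obtain ⟨h1, h2, h3⟩ := hp
  have hlen : (q.concat hadj').length = q.length + 1 := Walk.length_concat _ _
  have hqeven : Even q.length := by
    rw [hlen] at hodd
    simpa [Nat.even_add_one, parity_simps] using hodd
  have hi : q.length < (q.concat hadj').edges.length := by
    rw [Walk.length_edges, hlen]; omega
  have hnotlt : ¬ q.length < q.edges.length := by rw [Walk.length_edges]; omega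
  have hlast : s(y, u) ∈ C := by
    have halt := h3 q.length hi
    rw [getElem_edges_concat q hadj' q.length hi, dif_neg hnotlt] at halt
    exact halt.mpr hqeven
  have hyv : y = v := by
    rw [IsTight, Set.ncard_eq_one] at ht
    obtain ⟨a, ha⟩ := ht
    have m1 : s(y, u) ∈ {e ∈ C | u ∈ e} := ⟨hlast, by simp⟩
    have m2 : s(u, v) ∈ {e ∈ C | u ∈ e} := ⟨huv, by simp⟩
    rw [ha] at m1 m2
    have heq2 : s(y, u) = s(u, v) := by
      rw [Set.mem_singleton_iff.mp m1, Set.mem_singleton_iff.mp m2]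
    rw [Sym2.eq_iff] at heq2
    rcases heq2 with ⟨h', h''⟩ | ⟨h', h''⟩
    · exact absurd h' hadj'.ne
    · exact h'
  have hyv' : v = y := hyv.symm
  subst hyv'
  have hq : IsInterchanging G C q := by
    rw [isInterchanging_iff]
    refine ⟨?_, h2, ?_⟩
    · rw [Walk.isPath_def]
      rw [Walk.isPath_def, Walk.support_concat, List.nodup_append] at h1
      exact h1.1
    · intro i h
      have hi2 : i < (q.concat hadj').edges.length := by
        rw [Walk.length_edges] at h ⊢
        omega
      have halt := h3 i hi2
      rw [getElem_edges_concat q hadj' i hi2, dif_pos h] at halt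
      exact halt
  have hle := intDist_le' _ hq
  rw [hlen]
  calc intDist G C v + 1 ≤ (q.length : ℕ∞) + 1 := add_le_add_left hle 1
    _ = ((q.length + 1 : ℕ) : ℕ∞) := by push_cast; rfl

lemma card_range_filter_even (n : ℕ) : ((range n).filter (fun i => Even i)).card = (n+1)/2 := by
  induction n with
  | zero => simp
  | succ m ih =>
    rw [Finset.range_add_one, Finset.filter_insert]
    by_cases hm : Even m
    · rw [if_pos hm, Finset.card_insert_of_notMem (by simp)]
      rw [ih]
      rw [Nat.even_iff] at hm
      omega
    · rw [if_neg hm, ih]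
      rw [Nat.even_iff] at hm
      omega

lemma getVert_inj {x z : V} {p : G.Walk x z} (hnd : p.support.Nodup) {i j : ℕ}
    (hi : i ≤ p.length) (hj : j ≤ p.length) (h : p.getVert i = p.getVert j) : i = j := by
  have hl : p.support.length = p.length + 1 := Walk.length_support p
  have hi' : i < p.support.length := by omega
  have hj' : j < p.support.length := by omega
  have : p.support[i]'hi' = p.support[j]'hj' := by
    rw [Walk.support_getElem' p i hi', Walk.support_getElem' p j hj', h]
  exact (List.Nodup.getElem_inj_iff hnd).mp this

lemma flip_lemma (hC : IsEdgeCover G C)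
    (hmin : ∀ C' : Set (Sym2 V), IsEdgeCover G C' → C.ncard ≤ C'.ncard)
    {x z : V} (R : G.Walk x z) (hnd : R.support.Nodup) (hodd : Odd R.length)
    (hx : IsLoose C x) (hz : IsLoose C z) (halt : AltE C R) : False := by
  classical
  set L := R.length with hL
  have hL1 : 1 ≤ L := hodd.pos
  have hedlen : R.edges.length = L := Walk.length_edges R
  set f : ℕ → Sym2 V := fun i => R.edges.getD i s(x, x) with hf
  have hfeq : ∀ i, (h : i < L) → f i = R.edges[i]'(by omega) := by
    intro i h
    exact List.getD_eq_getElem R.edges s(x,x) (by omega)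
  have hfC : ∀ i, (h : i < L) → (f i ∈ C ↔ Even i) := by
    intro i h
    rw [hfeq i h]
    exact halt i (by omega)
  have hfvert : ∀ i, (h : i < L) → f i = s(R.getVert i, R.getVert (i+1)) := by
    intro i h
    rw [hfeq i h]
    exact R.edges_getElem' i (by omega)
  have hfmemE : ∀ i, (h : i < L) → f i ∈ R.edges := by
    intro i h
    rw [hfeq i h]
    exact List.getElem_mem _
  have hednd : R.edges.Nodup := Walk.edges_nodup_of_support_nodup hnd
  have hinj : ∀ i, (hi : i < L) → ∀ j, (hj : j < L) → f i = f j → i = j := by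
    intro i hi j hj hij
    rw [hfeq i hi, hfeq j hj] at hij
    exact (List.Nodup.getElem_inj_iff hednd).mp hij
  set A : Finset (Sym2 V) := ((range L).filter (fun i => Even i)).image f with hA
  set B : Finset (Sym2 V) := ((range L).filter (fun i => ¬ Even i)).image f with hB
  have hmemA : ∀ e, e ∈ A ↔ ∃ i, i < L ∧ Even i ∧ f i = e := by
    intro e
    simp [hA, Finset.mem_image, Finset.mem_filter, Finset.mem_range, and_assoc]
  have hmemB : ∀ e, e ∈ B ↔ ∃ i, i < L ∧ ¬ Even i ∧ f i = e := by
    intro e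
    simp [hB, Finset.mem_image, Finset.mem_filter, Finset.mem_range, and_assoc]
  have hAC : (↑A : Set (Sym2 V)) ⊆ C := by
    intro e he
    rw [Finset.mem_coe, hmemA] at he
    obtain ⟨i, hi, hev, rfl⟩ := he
    exact (hfC i hi).mpr hev
  have hBC : ∀ e ∈ B, e ∉ C := by
    intro e he
    rw [hmemB] at he
    obtain ⟨i, hi, hev, rfl⟩ := he
    exact fun hc => hev ((hfC i hi).mp hc)
  set C' : Set (Sym2 V) := (C \ ↑A) ∪ ↑B with hC'
  -- C' is an edge cover
  have hxz : x ≠ z := by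
    intro h
    have : (0 : ℕ) = L := getVert_inj hnd (by omega) (by omega)
      (by rw [R.getVert_zero, Walk.getVert_length]; exact h)
    omega
  have hcov : IsEdgeCover G C' := by
    constructor
    · rintro e (⟨heC, -⟩ | heB)
      · exact hC.1 heC
      · rw [Finset.mem_coe, hmemB] at heB
        obtain ⟨i, hi, -, rfl⟩ := heB
        exact Walk.edges_subset_edgeSet R (hfmemE i hi)
    · intro w
      by_cases hw : w ∈ R.support
      · -- w is on the path
        obtain ⟨t, ht, hteq⟩ := List.mem_iff_getElem.mp hw
        have hsuplen : R.support.length = L + 1 := by rw [Walk.length_support]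
        have htL : t ≤ L := by omega
        have hwt : R.getVert t = w := by rw [← Walk.support_getElem' R t ht, hteq]
        by_cases hwx : w = x
        · -- endpoint x : pick a second C-edge at x
          have hfin : {e ∈ C | x ∈ e}.Finite := Set.toFinite _
          have hne : {e ∈ C | x ∈ e}.Nonempty := by
            obtain ⟨e, heC, hxe⟩ := hC.2 x
            exact ⟨e, heC, hxe⟩
          have h1 : 1 < {e ∈ C | x ∈ e}.ncard := by
            rcases Nat.lt_or_ge 1 {e ∈ C | x ∈ e}.ncard with h | h
            · exact h
            · exfalso
              have h0 : 0 < {e ∈ C | x ∈ e}.ncard := (Set.ncard_pos hfin).mpr hne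
              have : {e ∈ C | x ∈ e}.ncard = 1 := by omega
              exact hx this
          obtain ⟨g, hg, hgne⟩ := Set.exists_ne_of_one_lt_ncard h1 (f 0)
          refine ⟨g, Or.inl ⟨hg.1, ?_⟩, by rw [hwx]; exact hg.2⟩
          intro hgA
          rw [Finset.mem_coe, hmemA] at hgA
          obtain ⟨i, hi, hev, hfi⟩ := hgA
          have hxi : x ∈ f i := by rw [hfi]; exact hg.2
          rw [hfvert i hi, Sym2.mem_iff] at hxi
          have hi0 : i = 0 := by
            rcases hxi with h' | h'
            · exact getVert_inj hnd (by omega) (by omega) (h'.symm.trans R.getVert_zero.symm)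
            · exfalso
              have : i + 1 = 0 := getVert_inj hnd (by omega) (by omega)
                (h'.symm.trans R.getVert_zero.symm)
              omega
          exact hgne (hi0 ▸ hfi).symm
        · by_cases hwz : w = z
          · -- endpoint z
            have hfin : {e ∈ C | z ∈ e}.Finite := Set.toFinite _
            have hne : {e ∈ C | z ∈ e}.Nonempty := by
              obtain ⟨e, heC, hze⟩ := hC.2 z
              exact ⟨e, heC, hze⟩
            have h1 : 1 < {e ∈ C | z ∈ e}.ncard := by
              rcases Nat.lt_or_ge 1 {e ∈ C | z ∈ e}.ncard with h | h
              · exact h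
              · exfalso
                have h0 : 0 < {e ∈ C | z ∈ e}.ncard := (Set.ncard_pos hfin).mpr hne
                have : {e ∈ C | z ∈ e}.ncard = 1 := by omega
                exact hz this
            obtain ⟨g, hg, hgne⟩ := Set.exists_ne_of_one_lt_ncard h1 (f (L-1))
            refine ⟨g, Or.inl ⟨hg.1, ?_⟩, by rw [hwz]; exact hg.2⟩
            intro hgA
            rw [Finset.mem_coe, hmemA] at hgA
            obtain ⟨i, hi, hev, hfi⟩ := hgA
            have hzi : z ∈ f i := by rw [hfi]; exact hg.2
            have hgL : R.getVert L = z := Walk.getVert_length R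
            rw [hfvert i hi, Sym2.mem_iff] at hzi
            have hiL : i = L - 1 := by
              rcases hzi with h' | h'
              · exfalso
                have : i = L := getVert_inj hnd (by omega) (by omega) (h'.symm.trans hgL.symm)
                omega
              · have : i + 1 = L := getVert_inj hnd (by omega) (by omega) (h'.symm.trans hgL.symm)
                omega
            exact hgne (hiL ▸ hfi).symm
          · -- internal vertex
            have ht0 : t ≠ 0 := by
              intro h0
              exact hwx (by rw [← hwt, h0, R.getVert_zero])
            have htL' : t ≠ L := by
              intro h0
              exact hwz (by rw [← hwt, h0, Walk.getVert_length])
            set j := if Even t then t - 1 else t with hj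
            have hjodd : ¬ Even j := by
              rcases Nat.even_or_odd t with h' | h'
              · rw [hj, if_pos h']
                rw [Nat.even_iff] at h' ⊢
                omega
              · rw [hj, if_neg (Nat.not_even_iff_odd.mpr h')]
                exact Nat.not_even_iff_odd.mpr h'
            have hjL : j < L := by
              rcases Nat.even_or_odd t with h' | h'
              · rw [hj, if_pos h']; omega
              · rw [hj, if_neg (Nat.not_even_iff_odd.mpr h')]; omega
            refine ⟨f j, Or.inr (by rw [Finset.mem_coe, hmemB]; exact ⟨j, hjL, hjodd, rfl⟩), ?_⟩
            rw [hfvert j hjL, Sym2.mem_iff]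
            rcases Nat.even_or_odd t with h' | h'
            · right
              have : j + 1 = t := by rw [hj, if_pos h']; omega
              rw [this, hwt]
            · left
              have : j = t := by rw [hj, if_neg (Nat.not_even_iff_odd.mpr h')]
              rw [this, hwt]
      · -- w not on the path
        obtain ⟨e, heC, hwe⟩ := hC.2 w
        refine ⟨e, Or.inl ⟨heC, ?_⟩, hwe⟩
        intro heA
        rw [Finset.mem_coe, hmemA] at heA
        obtain ⟨i, hi, -, rfl⟩ := heA
        obtain ⟨w', hw'⟩ := Sym2.mem_iff_exists.mp hwe
        apply hw
        exact Walk.fst_mem_support_of_mem_edges R (hw' ▸ hfmemE i hi)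
  -- cardinality computation
  have hcardA : A.card = (L+1)/2 := by
    rw [hA, Finset.card_image_of_injOn, card_range_filter_even]
    intro i hi j hj hij
    simp only [Finset.coe_filter, Set.mem_setOf_eq, Finset.mem_range] at hi hj
    exact hinj i hi.1 j hj.1 hij
  have hcardB : B.card = L/2 := by
    rw [hB, Finset.card_image_of_injOn]
    · have := Finset.card_filter_add_card_filter_not (s := range L) (p := fun i => Even i)
      rw [card_range_filter_even, Finset.card_range] at this
      omega
    · intro i hi j hj hij
      simp only [Finset.coe_filter, Set.mem_setOf_eq, Finset.mem_range] at hi hj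
      exact hinj i hi.1 j hj.1 hij
  have hCfin : C.Finite := Set.toFinite C
  have hdisj : Disjoint (C \ ↑A) (↑B : Set (Sym2 V)) := by
    rw [Set.disjoint_right]
    intro e heB heCA
    exact hBC e (Finset.mem_coe.mp heB) heCA.1
  have hncard : C'.ncard = C.ncard - (L+1)/2 + L/2 := by
    rw [hC', Set.ncard_union_eq hdisj hCfin.diff (Finset.finite_toSet B),
      Set.ncard_diff hAC (Finset.finite_toSet A), Set.ncard_coe_finset, Set.ncard_coe_finset, hcardA, hcardB]
  have hAle : (L+1)/2 ≤ C.ncard := by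
    rw [← hcardA, ← Set.ncard_coe_finset]
    exact Set.ncard_le_ncard hAC hCfin
  have hfinal := hmin C' hcov
  rw [hncard] at hfinal
  rw [Nat.odd_iff] at hodd
  omega

lemma closed_sub_exists {x z : V} (W : G.Walk x z) {i j : ℕ} (hij : i ≤ j) (hjL : j ≤ W.length)
    (heq : W.getVert i = W.getVert j) :
    ∃ K : G.Walk (W.getVert i) (W.getVert i), K.length = j - i := by
  have h2 : (W.drop i).getVert (j - i) = W.getVert i := by
    rw [Walk.getVert_drop', show i + (j - i) = j by omega]
    exact heq.symm
  refine ⟨((W.drop i).wtake (j - i)).copy rfl h2, ?_⟩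
  rw [Walk.length_copy, Walk.length_wtake, Walk.length_drop']
  omega

lemma splice_exists {x z : V} (W : G.Walk x z) {i j : ℕ} (hij : i ≤ j) (hjL : j ≤ W.length)
    (heq : W.getVert j = W.getVert i) :
    ∃ S : G.Walk x z, S.length = i + (W.length - j) ∧
      S.edges = W.edges.take i ++ W.edges.drop j := by
  refine ⟨(W.wtake i).append ((W.drop j).copy heq rfl), ?_, ?_⟩
  · rw [Walk.length_append, Walk.length_copy, Walk.length_wtake, Walk.length_drop']
    omega
  · rw [Walk.edges_append, Walk.edges_copy, Walk.edges_wtake, Walk.edges_drop']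

lemma odd_closed_walk_cycle {G : SimpleGraph V} :
    ∀ n : ℕ, Odd n → ∀ (w : V) (W : G.Walk w w), W.length = n →
      ∃ (w' : V) (c : G.Walk w' w'), c.IsCycle ∧ Odd c.length ∧ c.length ≤ n := by
  intro n
  induction n using Nat.strong_induction_on with
  | _ n IH =>
    intro hodd w W hlen
    have hL0 : n ≠ 0 := by rintro rfl; simp at hodd
    have hL1 : n ≠ 1 := by
      rintro rfl
      have hadj := W.adj_getVert_succ (by omega : 0 < W.length)
      rw [W.getVert_zero, show (0:ℕ)+1 = W.length by omega, Walk.getVert_length] at hadj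
      exact G.irrefl hadj
    by_cases hrep : ∃ i j, i < j ∧ j ≤ W.length ∧ ¬(i = 0 ∧ j = W.length) ∧
        W.getVert i = W.getVert j
    · obtain ⟨i, j, hij, hjL, hne, heq⟩ := hrep
      rcases Nat.even_or_odd (j - i) with hpar | hpar
      · -- splice : closed walk at w of odd length n - (j - i)
        obtain ⟨S, hSlen, -⟩ := splice_exists W (le_of_lt hij) hjL heq.symm
        have hS1 : S.length < n := by omega
        have hS2 : Odd S.length := by
          rw [hSlen]
          rcases hpar with ⟨m, hm⟩
          rcases hodd with ⟨m', hm'⟩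
          refine ⟨m' - m, by omega⟩
        obtain ⟨w', c, hc, hco, hcl⟩ := IH S.length hS1 hS2 w S rfl
        exact ⟨w', c, hc, hco, by omega⟩
      · -- middle closed walk of odd length j - i
        obtain ⟨K, hKlen⟩ := closed_sub_exists W (le_of_lt hij) hjL heq
        have hK1 : K.length < n := by
          rw [hKlen]
          rcases Nat.eq_or_lt_of_le (show j - i ≤ n by omega) with h' | h'
          · exfalso
            apply hne
            omega
          · omega
        obtain ⟨w', c, hc, hco, hcl⟩ := IH K.length hK1 (by rw [hKlen]; exact hpar) _ K rfl
        exact ⟨w', c, hc, hco, by omega⟩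
    · push_neg at hrep
      have hni : ∀ i j, i < j → j ≤ W.length → W.getVert i = W.getVert j →
          i = 0 ∧ j = W.length := by
        intro i j h1 h2 h3
        by_contra hcon
        exact hrep i j h1 h2 (fun h0 hL => hcon ⟨h0, hL⟩) h3
      have hsuplen : W.support.length = n + 1 := by rw [Walk.length_support]; omega
      refine ⟨w, W, ⟨⟨⟨?_⟩, ?_⟩, ?_⟩, by rw [hlen]; exact hodd, le_of_eq hlen⟩
      · -- edges nodup
        rw [List.nodup_iff_injective_getElem]
        rintro ⟨a, ha⟩ ⟨b, hb⟩ hab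
        simp only at hab
        rw [Walk.length_edges] at ha hb
        rw [W.edges_getElem' a (by rw [Walk.length_edges]; omega),
          W.edges_getElem' b (by rw [Walk.length_edges]; omega), Sym2.eq_iff] at hab
        have hmain : a = b := by
          rcases Nat.lt_trichotomy a b with h' | h' | h'
          · exfalso
            rcases hab with ⟨h1, h2⟩ | ⟨h1, h2⟩
            · have := hni a b h' (by omega) h1
              omega
            · -- getVert a = getVert (b+1), getVert (a+1) = getVert b
              have h3 := hni a (b+1) (by omega) (by omega) h1
              have ha0 : a = 0 := h3.1
              have hbL : b + 1 = W.length := h3.2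
              -- getVert (a+1) = getVert b, i.e. getVert 1 = getVert (n-1)
              rcases Nat.lt_trichotomy (a+1) b with h'' | h'' | h''
              · have := hni (a+1) b h'' (by omega) h2
                omega
              · -- a+1 = b : n = 2, contradicts odd
                rw [Nat.odd_iff] at hodd
                omega
              · omega
          · exact h'
          · exfalso
            rcases hab with ⟨h1, h2⟩ | ⟨h1, h2⟩
            · have := hni b a h' (by omega) h1.symm
              omega
            · have h3 := hni b (a+1) (by omega) (by omega) h2.symm
              have hb0 : b = 0 := h3.1
              have haL : a + 1 = W.length := h3.2
              rcases Nat.lt_trichotomy (b+1) a with h'' | h'' | h''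
              · have := hni (b+1) a h'' (by omega) h1.symm
                omega
              · rw [Nat.odd_iff] at hodd
                omega
              · omega
        exact Fin.ext hmain
      · -- not nil
        intro hnil
        have h0 := congrArg SimpleGraph.Walk.length hnil
        rw [hlen] at h0
        simp at h0
        exact hL0 h0
      · -- support tail nodup
        rw [List.nodup_iff_injective_getElem]
        rintro ⟨a, ha⟩ ⟨b, hb⟩ hab
        simp only at hab
        have htl : W.support.tail.length = n := by
          rw [List.length_tail, hsuplen]
          omega
        rw [htl] at ha hb
        rw [List.getElem_tail, List.getElem_tail] at hab
        rw [W.support_getElem' (a+1) (by omega), W.support_getElem' (b+1) (by omega)] at hab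
        have hmain : a = b := by
          rcases Nat.lt_trichotomy a b with h' | h' | h'
          · exfalso
            have := hni (a+1) (b+1) (by omega) (by omega) hab
            omega
          · exact h'
          · exfalso
            have := hni (b+1) (a+1) (by omega) (by omega) hab.symm
            omega
        exact Fin.ext hmain

lemma no_alt_walk {κ : ℕ}
    (hgirth : ∀ (w : V) (c : G.Walk w w), c.IsCycle → Odd c.length → 2 * κ + 1 ≤ c.length)
    (hC : IsEdgeCover G C)
    (hmin : ∀ C' : Set (Sym2 V), IsEdgeCover G C' → C.ncard ≤ C'.ncard) :
    ∀ n : ℕ, Odd n → n ≤ 2 * κ - 1 → ∀ (x z : V) (W : G.Walk x z), W.length = n →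
      IsLoose C x → IsLoose C z → AltE C W → False := by
  intro n
  induction n using Nat.strong_induction_on with
  | _ n IH =>
    intro hodd hbound x z W hlen hx hz halt
    by_cases hnd : W.support.Nodup
    · exact flip_lemma hC hmin W hnd (by rw [hlen]; exact hodd) hx hz halt
    · -- find a repeated vertex
      obtain ⟨i, j, hij, hjL, heq⟩ : ∃ i j, i < j ∧ j ≤ W.length ∧
          W.getVert i = W.getVert j := by
        rw [List.nodup_iff_injective_getElem] at hnd
        rw [Function.not_injective_iff] at hnd
        obtain ⟨⟨a, ha⟩, ⟨b, hb⟩, hab, hne⟩ := hnd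
        simp only at hab
        have hsuplen : W.support.length = W.length + 1 := Walk.length_support W
        rw [W.support_getElem' a ha, W.support_getElem' b hb] at hab
        rcases Nat.lt_trichotomy a b with h' | h' | h'
        · exact ⟨a, b, h', by omega, hab⟩
        · exact absurd (Fin.ext h') hne
        · exact ⟨b, a, h', by omega, hab.symm⟩
      rcases Nat.even_or_odd (j - i) with hpar | hpar
      · -- splice out the even-length closed part
        obtain ⟨S, hSlen, hSedges⟩ := splice_exists W (le_of_lt hij) hjL heq.symm
        have hWel : W.edges.length = n := by rw [Walk.length_edges, hlen]
        have hSlen' : S.length = n - (j - i) := by omega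
        have hprec : i % 2 = j % 2 := by
          rw [Nat.even_iff] at hpar
          omega
        have hSalt : AltE C S := by
          intro k h
          have hSel : S.edges.length = S.length := Walk.length_edges S
          have hkS : k < S.length := by omega
          have htl : (W.edges.take i).length = i := by
            rw [List.length_take]
            omega
          by_cases hk : k < i
          · have e1 : S.edges[k]'h = (W.edges.take i)[k]'(by omega) := by
              have := List.getElem_of_eq hSedges h
              rw [this]
              exact List.getElem_append_left (by omega)
            have e2 : (W.edges.take i)[k]'(by omega) = W.edges[k]'(by omega) :=
              List.getElem_take
            rw [e1, e2]
            exact halt k (by omega)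
          · have hkk : k - i < (W.edges.drop j).length := by
              rw [List.length_drop]
              omega
            have e1 : S.edges[k]'h = (W.edges.drop j)[k - i]'hkk := by
              have := List.getElem_of_eq hSedges h
              rw [this]
              rw [List.getElem_append_right (by omega)]
              congr 1
              omega
            have e2 : (W.edges.drop j)[k - i]'hkk = W.edges[j + (k - i)]'(by omega) :=
              List.getElem_drop
            rw [e1, e2]
            rw [halt (j + (k - i)) (by omega)]
            rw [Nat.even_iff, Nat.even_iff]
            omega
        have hS1 : S.length < n := by omega
        have hS2 : Odd S.length := by
          rw [Nat.odd_iff] at hodd ⊢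
          rw [Nat.even_iff] at hpar
          omega
        exact IH S.length hS1 hS2 (by omega) x z S rfl hx hz hSalt
      · -- odd closed walk gives an odd cycle, contradicting the girth bound
        obtain ⟨K, hKlen⟩ := closed_sub_exists W (le_of_lt hij) hjL heq
        obtain ⟨w', c, hc, hco, hcl⟩ := odd_closed_walk_cycle (j - i)
          (by rw [← hKlen]; rw [hKlen]; exact hpar) _ K hKlen
        have := hgirth w' c hc hco
        omega

lemma arith1 (κ a b : ℕ) (hκ : 0 < κ) (hb : b ≤ a + 1) :
    (κ:ℚ)/(κ+1) ≤ (a:ℚ)/(2*(κ+1)) + (1 - ((b:ℚ)+1)/(2*(κ+1))) := by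
  have h1 : (0:ℚ) < (κ:ℚ)+1 := by positivity
  have h2 : ((b:ℚ)+1) ≤ (a:ℚ)+2 := by
    have : (b:ℚ) ≤ (a:ℚ)+1 := by exact_mod_cast hb
    linarith
  have key : (a:ℚ)/(2*((κ:ℚ)+1)) + (1 - ((b:ℚ)+1)/(2*((κ:ℚ)+1))) - (κ:ℚ)/((κ:ℚ)+1)
      = ((a:ℚ)+1-(b:ℚ)) / (2*((κ:ℚ)+1)) := by
    field_simp
    ring
  have hba : (b:ℚ) ≤ (a:ℚ)+1 := by exact_mod_cast hb
  have hpos : (0:ℚ) ≤ ((a:ℚ)+1-(b:ℚ)) / (2*((κ:ℚ)+1)) := by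
    apply div_nonneg <;> [linarith; positivity]
  linarith

lemma arith3 (κ : ℕ) (hκ : 0 < κ) :
    (κ:ℚ)/(κ+1) ≤ (⌈(κ : ℚ) / 2⌉ : ℚ) / (κ + 1) + (⌈(κ : ℚ) / 2⌉ : ℚ) / (κ + 1) := by
  have h1 : (κ:ℚ)/2 ≤ (⌈(κ : ℚ) / 2⌉ : ℚ) := Int.le_ceil _
  have h2 : (0:ℚ) < (κ:ℚ)+1 := by positivity
  rw [← add_div, div_le_div_iff₀ h2 h2]
  nlinarith

lemma ceil_half_odd (κ : ℕ) (h : Odd κ) : (⌈(κ : ℚ) / 2⌉ : ℚ) = ((κ:ℚ)+1)/2 := by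
  obtain ⟨m, rfl⟩ := h
  push_cast
  have e1 : ((2*m+1 : ℚ))/2 = (1:ℚ)/2 + (m:ℤ) := by push_cast; ring
  rw [e1, Int.ceil_add_intCast]
  have hc : ⌈(1:ℚ)/2⌉ = 1 := by
    rw [Int.ceil_eq_iff] <;> norm_num
  rw [hc]
  push_cast
  ring

lemma arith2 (κ : ℕ) (hκodd : Odd κ) (hκ : 0 < κ) :
    (κ:ℚ)/(κ+1) ≤ ((κ:ℚ)-1)/(2*(κ+1)) + (⌈(κ : ℚ) / 2⌉ : ℚ) / (κ + 1) := by
  rw [ceil_half_odd κ hκodd]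
  have h2 : ((κ:ℚ)+1) ≠ 0 := by positivity
  have heq : ((κ:ℚ)-1)/(2*((κ:ℚ)+1)) + ((κ:ℚ)+1)/2/((κ:ℚ)+1) = (κ:ℚ)/((κ:ℚ)+1) := by
    field_simp
    ring
  rw [heq]

lemma key_lemma (κ : ℕ) (hκ : 0 < κ) (G : SimpleGraph V)
    (hgirth : ∀ (w : V) (c : G.Walk w w), c.IsCycle → Odd c.length → 2 * κ + 1 ≤ c.length)
    (C : Set (Sym2 V)) (hC : IsEdgeCover G C)
    (hmin : ∀ C' : Set (Sym2 V), IsEdgeCover G C' → C.ncard ≤ C'.ncard)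
    (u v : V) (huv : s(u, v) ∈ C) (hle : intDist G C u ≤ intDist G C v) :
    (κ : ℚ) / (κ + 1) ≤ yEC G C κ u + yEC G C κ v := by
  have hadj : G.Adj u v := (G.mem_edgeSet).mp (hC.1 huv)
  by_cases hu : intDist G C u < (κ : ℕ∞)
  · have hfin : intDist G C u < ⊤ := lt_of_lt_of_le hu le_top
    obtain ⟨x, P, hP, hPlen⟩ := intDist_exists hfin
    set a := P.length with ha_def
    have hdu : intDist G C u = (a : ℕ∞) := hPlen.symm
    have haκ : a < κ := by
      rw [hdu] at hu
      exact_mod_cast hu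
    have htoNatu : (intDist G C u).toNat = a := by rw [hdu]; simp
    rcases Nat.even_or_odd a with ha | ha
    · -- a even
      have hL2 : intDist G C v ≤ (a : ℕ∞) + 1 := extend_lemma P hP ha huv hadj
      by_cases hv : intDist G C v < (κ : ℕ∞)
      · have hvfin : intDist G C v < ⊤ := lt_of_lt_of_le hv le_top
        obtain ⟨y, Q, hQ, hQlen⟩ := intDist_exists hvfin
        set b := Q.length with hb_def
        have hdv : intDist G C v = (b : ℕ∞) := hQlen.symm
        have hbκ : b < κ := by
          rw [hdv] at hv
          exact_mod_cast hv
        have htoNatv : (intDist G C v).toNat = b := by rw [hdv]; simp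
        have hbound : b ≤ a + 1 := by
          rw [hdv] at hL2
          exact_mod_cast hL2
        rcases Nat.even_or_odd b with hb | hb
        · -- both even : contradiction
          exfalso
          set W : G.Walk x y := (P.concat hadj).append Q.reverse with hW
          have hWlen : W.length = a + 1 + b := by
            rw [hW, Walk.length_append, Walk.length_concat, Walk.length_reverse]
          have hWe : W.edges = (P.edges ++ [s(u, v)]) ++ Q.edges.reverse := by
            rw [hW, Walk.edges_append, Walk.edges_concat, Walk.edges_reverse,
              List.concat_eq_append]
          have hPalt : AltE C P := ((isInterchanging_iff P).mp hP).2.2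
          have hQalt : AltE C Q := ((isInterchanging_iff Q).mp hQ).2.2
          have hPel : P.edges.length = a := Walk.length_edges P
          have hQel : Q.edges.length = b := Walk.length_edges Q
          have hWel : W.edges.length = a + 1 + b := by rw [Walk.length_edges, hWlen]
          have hWalt : AltE C W := by
            intro k h
            have hk : k < a + 1 + b := by omega
            have e0 := List.getElem_of_eq hWe h
            by_cases hk1 : k < a + 1
            · have e1 : ((P.edges ++ [s(u, v)]) ++ Q.edges.reverse)[k]'(by
                  simp [hPel, hQel]; omega) = (P.edges ++ [s(u, v)])[k]'(by
                  simp [hPel]; omega) := List.getElem_append_left (by simp [hPel]; omega)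
              rw [e0, e1]
              by_cases hk2 : k < a
              · have e2 : (P.edges ++ [s(u, v)])[k]'(by simp [hPel]; omega)
                    = P.edges[k]'(by omega) := List.getElem_append_left (by omega)
                rw [e2]
                exact hPalt k (by omega)
              · have hka : k = a := by omega
                have e2 : (P.edges ++ [s(u, v)])[k]'(by simp [hPel]; omega)
                    = [s(u, v)][k - P.edges.length]'(by simp; omega) :=
                  List.getElem_append_right (by omega)
                rw [e2]
                have : k - P.edges.length = 0 := by omega
                simp only [this, List.getElem_singleton]
                subst hka
                simp [ha, huv]
            · set t := k - (a + 1) with htdef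
              have htb : t < b := by omega
              have e1 : ((P.edges ++ [s(u, v)]) ++ Q.edges.reverse)[k]'(by
                  simp [hPel, hQel]; omega) = Q.edges.reverse[t]'(by
                  simp [hQel]; omega) := by
                rw [List.getElem_append_right (by simp [hPel]; omega)]
                congr 1
                simp only [List.length_append, hPel, List.length_singleton]
                all_goals omega
              have e2 : Q.edges.reverse[t]'(by simp [hQel]; omega)
                  = Q.edges[b - 1 - t]'(by omega) := by
                rw [List.getElem_reverse]
                congr 1
                omega
              rw [e0, e1, e2]
              rw [hQalt (b - 1 - t) (by omega)]
              rw [Nat.even_iff] at ha hb ⊢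
              rw [Nat.even_iff]
              omega
          have hWodd : Odd (a + 1 + b) := by
            rw [Nat.odd_iff]
            rw [Nat.even_iff] at ha hb
            omega
          have hWbound : a + 1 + b ≤ 2 * κ - 1 := by omega
          have hxl : IsLoose C x := ((isInterchanging_iff P).mp hP).2.1
          have hyl : IsLoose C y := ((isInterchanging_iff Q).mp hQ).2.1
          exact no_alt_walk hgirth hC hmin (a + 1 + b) hWodd hWbound x y W
            (by rw [hWlen]) hxl hyl hWalt
        · -- a even, b odd : arithmetic
          rw [yEC, yEC, if_pos hu, if_pos hv, htoNatu, htoNatv, if_pos ha,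
            if_neg (by rw [Nat.odd_iff] at hb; rw [Nat.even_iff]; omega)]
          push_cast
          exact arith1 κ a b hκ hbound
      · -- dv ≥ κ : a = κ - 1 and κ odd
        have hκa : κ ≤ a + 1 := by
          have h1 : (κ : ℕ∞) ≤ intDist G C v := not_lt.mp hv
          have h2 : (κ : ℕ∞) ≤ ((a + 1 : ℕ) : ℕ∞) := by
            refine le_trans h1 (le_trans hL2 ?_)
            push_cast
            exact le_refl _
          exact_mod_cast h2
        have haeq : a = κ - 1 := by omega
        have hκodd : Odd κ := by
          rw [Nat.even_iff] at ha
          rw [Nat.odd_iff]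
          omega
        rw [yEC, yEC, if_pos hu, if_neg hv, htoNatu, if_pos ha]
        have hcast : (a : ℚ) = (κ : ℚ) - 1 := by
          have : (1:ℚ) ≤ (κ:ℚ) := by exact_mod_cast hκ
          rw [haeq]
          push_cast [Nat.cast_sub hκ]
          ring
        rw [hcast]
        exact arith2 κ hκodd hκ
    · -- a odd : contradiction
      exfalso
      have ht : IsTight C u := by
        apply isTight_of_intDist_ne_zero
        rw [hdu]
        intro h0
        have : a = 0 := by exact_mod_cast h0
        rw [Nat.odd_iff] at ha
        omega
      have hshr := shrink_lemma P hP ha huv ht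
      have hcontra : (a : ℕ∞) + 1 ≤ (a : ℕ∞) := by
        calc (a : ℕ∞) + 1 = intDist G C u + 1 := by rw [hdu]
          _ ≤ intDist G C v + 1 := add_le_add_left hle 1
          _ ≤ (a : ℕ∞) := hshr
      have : ((a + 1 : ℕ) : ℕ∞) ≤ ((a : ℕ) : ℕ∞) := by push_cast; exact_mod_cast hcontra
      have : a + 1 ≤ a := by exact_mod_cast this
      omega
  · -- both distances ≥ κ
    have hv : ¬ intDist G C v < (κ : ℕ∞) := fun h => hu (lt_of_le_of_lt hle h)
    rw [yEC, yEC, if_neg hu, if_neg hv]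
    exact arith3 κ hκ


end Aux

theorem stmt5 (κ : ℕ) (hκ : 0 < κ) (G : SimpleGraph V)
    (hiso : ∀ v : V, ∃ u : V, G.Adj v u)
    (hgirth : ∀ (w : V) (c : G.Walk w w), c.IsCycle → Odd c.length → 2 * κ + 1 ≤ c.length)
    (C : Set (Sym2 V)) (hC : IsEdgeCover G C)
    (hmin : ∀ C' : Set (Sym2 V), IsEdgeCover G C' → C.ncard ≤ C'.ncard) :
    ∀ u v : V, s(u, v) ∈ C → (κ : ℚ) / (κ + 1) ≤ yEC G C κ u + yEC G C κ v := by
  intro u v huv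
  rcases le_total (intDist G C u) (intDist G C v) with h | h
  · exact key_lemma κ hκ G hgirth C hC hmin u v huv h
  · rw [add_comm (yEC G C κ u)]
    exact key_lemma κ hκ G hgirth C hC hmin v u (Sym2.eq_swap ▸ huv) h
end

section
/- Let G = (V,E) be a finite simple graph, b : V → ℤ_{>0}, and μ a b-matching in G, and let u be a vertex such that alt(u) is finite and even. Then for every neighbor v of u it holds that alt(v) ≤ alt(u) + 1. -/
open SimpleGraph Finset

variable {V : Type*} [Fintype V] [DecidableEq V]

/-- `μ` is a `b`-matching in `G`: a multiplicity function supported on the edges of `G`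
such that the total multiplicity of the edges incident to any vertex `v` is at most
`b v`. -/
def IsBMatching (G : SimpleGraph V) [DecidableRel G.Adj] (b : V → ℕ) (μ : Sym2 V → ℕ) :
    Prop :=
  (∀ e : Sym2 V, μ e ≠ 0 → e ∈ G.edgeSet) ∧
    ∀ v : V, ∑ e ∈ G.edgeFinset.filter (fun e => v ∈ e), μ e ≤ b v

/-- The value of a `b`-matching: the total multiplicity of all edges. -/
def bValue (G : SimpleGraph V) [DecidableRel G.Adj] (μ : Sym2 V → ℕ) : ℕ :=
  ∑ e ∈ G.edgeFinset, μ e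

/-- A vertex is available w.r.t. `μ` if the total multiplicity of its incident edges is
not equal to `b v` (i.e. it is not matched). -/
def Available (G : SimpleGraph V) [DecidableRel G.Adj] (b : V → ℕ) (μ : Sym2 V → ℕ)
    (v : V) : Prop :=
  ∑ e ∈ G.edgeFinset.filter (fun e => v ∈ e), μ e ≠ b v

/-- `p` is an alternating path w.r.t. the `b`-matching `μ`: a simple path starting at an
available vertex such that every even-indexed edge (`e_2, e_4, …`, i.e. odd position in
the 0-indexed edge list) has positive multiplicity. -/
def IsAlternating (G : SimpleGraph V) [DecidableRel G.Adj] (b : V → ℕ) (μ : Sym2 V → ℕ)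
    {u v : V} (p : G.Walk u v) : Prop :=
  p.IsPath ∧ Available G b μ u ∧
    ∀ i : ℕ, ∀ h : i < p.edges.length, Odd i → 0 < μ (p.edges[i]'h)

/-- `alt(v)`: the length of a shortest alternating path ending at `v` (`∞` if none). -/
noncomputable def altDist (G : SimpleGraph V) [DecidableRel G.Adj] (b : V → ℕ)
    (μ : Sym2 V → ℕ) (v : V) : ℕ∞ :=
  ⨅ (u : V) (p : G.Walk u v) (_ : IsAlternating G b μ p), (p.length : ℕ∞)

theorem stmt8 (G : SimpleGraph V) [DecidableRel G.Adj] (b : V → ℕ) (hb : ∀ v : V, 0 < b v)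
    (μ : Sym2 V → ℕ) (hμ : IsBMatching G b μ)
    (u : V) (n : ℕ) (hu : altDist G b μ u = n) (heven : Even n) :
    ∀ v : V, G.Adj u v → altDist G b μ v ≤ altDist G b μ u + 1 := by
  intro v hadj
  have hle : ∀ {x y : V} (q : G.Walk x y), IsAlternating G b μ q →
      altDist G b μ y ≤ (q.length : ℕ∞) := by
    intro x y q hq
    exact iInf_le_of_le x (iInf_le_of_le q (iInf_le _ hq))
  have hex : ∃ (w : V) (q : G.Walk w u), IsAlternating G b μ q ∧ q.length = n := by
    by_contra hc
    push_neg at hc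
    have hge : (n + 1 : ℕ∞) ≤ altDist G b μ u := by
      rw [altDist]
      refine le_iInf fun w => le_iInf fun q => le_iInf fun hq => ?_
      have h1 : (n : ℕ∞) ≤ (q.length : ℕ∞) := hu ▸ hle q hq
      have h1' : n ≤ q.length := by exact_mod_cast h1
      have h2 : q.length ≠ n := hc w q hq
      have h3 : n + 1 ≤ q.length := by omega
      exact_mod_cast h3
    rw [hu] at hge
    have h4 : (n + 1 : ℕ) ≤ n := by exact_mod_cast hge
    omega
  obtain ⟨w, q, hq, hlen⟩ := hex
  rw [hu]
  by_cases hv : v ∈ q.support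
  · have hedges : (q.takeUntil v hv).edges ++ (q.dropUntil v hv).edges = q.edges := by
      rw [← Walk.edges_append, q.take_spec hv]
    have hq' : IsAlternating G b μ (q.takeUntil v hv) := by
      refine ⟨hq.1.takeUntil hv, hq.2.1, ?_⟩
      intro i hi hodd
      have hi' : i < q.edges.length := by
        rw [← hedges, List.length_append]; omega
      have heq : q.edges[i]'hi' = (q.takeUntil v hv).edges[i]'hi := by
        rw [List.getElem_of_eq hedges.symm hi']
        exact List.getElem_append_left hi
      have := hq.2.2 i hi' hodd
      rwa [heq] at this
    calc altDist G b μ v ≤ ((q.takeUntil v hv).length : ℕ∞) := hle _ hq'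
      _ ≤ (n : ℕ∞) := by exact_mod_cast hlen ▸ q.length_takeUntil_le hv
      _ ≤ (n : ℕ∞) + 1 := le_self_add
  · have hpath : (q.concat hadj).IsPath := by
      rw [← Walk.isPath_reverse_iff, Walk.reverse_concat]
      exact (hq.1.reverse).cons (by simpa using hv)
    have halt : IsAlternating G b μ (q.concat hadj) := by
      refine ⟨hpath, hq.2.1, ?_⟩
      intro i hi hodd
      have hedq : (q.concat hadj).edges = q.edges ++ [s(u, v)] := by
        rw [Walk.edges_concat, List.concat_eq_append]
      have hi2 : i < q.edges.length + 1 := by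
        have := hi; rw [hedq, List.length_append, List.length_singleton] at this; exact this
      by_cases hin : i < q.edges.length
      · have heq : (q.concat hadj).edges[i]'hi = q.edges[i]'hin := by
          rw [List.getElem_of_eq hedq hi]
          exact List.getElem_append_left hin
        rw [heq]
        exact hq.2.2 i hin hodd
      · exfalso
        have hieq : i = q.edges.length := by omega
        rw [hieq, Walk.length_edges, hlen] at hodd
        exact (Nat.not_odd_iff_even.mpr heven) hodd
    calc altDist G b μ v ≤ ((q.concat hadj).length : ℕ∞) := hle _ halt
      _ = (n : ℕ∞) + 1 := by rw [Walk.length_concat, hlen]; push_cast; ring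
end

section
/- Let κ be a positive integer, let G = (V,E) be a finite simple graph in which every odd cycle has length at least 2κ+1, let b : V → ℤ_{>0}, and let μ be a maximum b-matching in G. If (u,v) ∈ E and alt(u) is even with alt(u) ≤ κ−1, then alt(v) is finite and odd. -/
open SimpleGraph Finset

variable {V : Type*} [Fintype V] [DecidableEq V]

set_option linter.unusedSectionVars false
set_option linter.unusedVariables false
namespace AltProof

/-- alternating-sign indicator of the edges of a walk: edge at position `i` gets `(-1)^i`. -/
def nu {G : SimpleGraph V} : {a c : V} → G.Walk a c → Sym2 V → ℤ
  | _, _, SimpleGraph.Walk.nil, _ => 0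
  | a, _, SimpleGraph.Walk.cons (v := y) _ p, e => (if e = s(a, y) then 1 else 0) - nu p e

@[simp] lemma nu_nil {G : SimpleGraph V} {a : V} (e : Sym2 V) :
    nu (SimpleGraph.Walk.nil : G.Walk a a) e = 0 := rfl

@[simp] lemma nu_cons {G : SimpleGraph V} {a y c : V} (h : G.Adj a y) (p : G.Walk y c)
    (e : Sym2 V) :
    nu (SimpleGraph.Walk.cons h p) e = (if e = s(a, y) then 1 else 0) - nu p e := rfl

lemma nu_eq_zero {G : SimpleGraph V} {a c : V} (p : G.Walk a c) (e : Sym2 V)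
    (he : e ∉ p.edges) : nu p e = 0 := by
  induction p with
  | nil => rfl
  | cons h q ih =>
    simp only [SimpleGraph.Walk.edges_cons, List.mem_cons, not_or] at he
    rw [nu_cons, ih he.2, if_neg he.1, sub_zero]

lemma nu_getElem {G : SimpleGraph V} {a c : V} (p : G.Walk a c) (hnd : p.edges.Nodup) :
    ∀ (i : ℕ) (h : i < p.edges.length), nu p (p.edges[i]'h) = (-1) ^ i := by
  induction p with
  | nil => intro i h; simp at h
  | @cons x y w hadj q ih =>
    intro i h
    rw [SimpleGraph.Walk.edges_cons] at hnd
    rw [List.nodup_cons] at hnd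
    match i with
    | 0 =>
      have : (SimpleGraph.Walk.cons hadj q).edges[0]'h = s(x, y) := by
        simp [SimpleGraph.Walk.edges_cons]
      rw [this, nu_cons, if_pos rfl, nu_eq_zero q _ hnd.1]
      simp
    | (i + 1) =>
      have hlt : i < q.edges.length := by
        have := h
        simp only [SimpleGraph.Walk.edges_cons, List.length_cons] at this; omega
      have he : (SimpleGraph.Walk.cons hadj q).edges[i+1]'h = q.edges[i]'hlt := by
        simp [SimpleGraph.Walk.edges_cons]
      rw [he, nu_cons, if_neg, ih hnd.2 i hlt]
      · rw [pow_succ]; ring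
      · intro hc
        exact hnd.1 (hc ▸ List.getElem_mem hlt)

lemma indicator_mem_sym2 {G : SimpleGraph V} {x y w : V} (h : G.Adj x y) :
    ((if w ∈ s(x,y) then (1:ℤ) else 0)) = (if w = x then 1 else 0) + (if w = y then 1 else 0) := by
  by_cases h1 : w = x <;> by_cases h2 : w = y <;>
    simp [Sym2.mem_iff, h1, h2, h.ne, h.ne']

lemma sum_nu_incident {G : SimpleGraph V} [DecidableRel G.Adj] {a c : V} (p : G.Walk a c)
    (w : V) :
    ∑ e ∈ G.edgeFinset.filter (fun e => w ∈ e), nu p e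
      = (if w = a then 1 else 0) - (-1) ^ p.length * (if w = c then 1 else 0) := by
  induction p with
  | nil => simp
  | @cons x y z hadj q ih =>
    simp only [nu_cons, Finset.sum_sub_distrib, ih, SimpleGraph.Walk.length_cons]
    have h1 : ∑ e ∈ G.edgeFinset.filter (fun e => w ∈ e), (if e = s(x,y) then (1:ℤ) else 0)
        = if s(x,y) ∈ G.edgeFinset.filter (fun e => w ∈ e) then 1 else 0 :=
      Finset.sum_ite_eq' _ _ (fun _ => 1)
    have h2 : (s(x,y) ∈ G.edgeFinset.filter (fun e => w ∈ e)) ↔ w ∈ s(x,y) := by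
      simp [Finset.mem_filter, SimpleGraph.mem_edgeFinset, hadj]
    rw [h1]
    simp only [h2]
    rw [indicator_mem_sym2 hadj, pow_succ]
    ring

lemma sum_nu_total {G : SimpleGraph V} [DecidableRel G.Adj] {a c : V} (p : G.Walk a c) :
    ∑ e ∈ G.edgeFinset, nu p e = if Even p.length then 0 else 1 := by
  induction p with
  | nil => simp
  | @cons x y z hadj q ih =>
    simp only [nu_cons, Finset.sum_sub_distrib, ih, SimpleGraph.Walk.length_cons]
    have h1 : ∑ e ∈ G.edgeFinset, (if e = s(x,y) then (1:ℤ) else 0)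
        = if s(x,y) ∈ G.edgeFinset then 1 else 0 := Finset.sum_ite_eq' _ _ (fun _ => 1)
    rw [h1, if_pos (SimpleGraph.mem_edgeFinset.2 hadj)]
    by_cases he : Even q.length <;> simp [he, Nat.even_add_one]

lemma augment_false {G : SimpleGraph V} [DecidableRel G.Adj] {b : V → ℕ} {μ : Sym2 V → ℕ}
    (hμ : IsBMatching G b μ)
    (hmax : ∀ μ' : Sym2 V → ℕ, IsBMatching G b μ' →
      ∑ e ∈ G.edgeFinset, μ' e ≤ ∑ e ∈ G.edgeFinset, μ e)
    {a c : V} (W : G.Walk a c) (hW : W.IsPath) (hodd : Odd W.length) (hac : a ≠ c)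
    (ha : Available G b μ a) (hc : Available G b μ c)
    (halt : ∀ (i : ℕ) (h : i < W.edges.length), Odd i → 0 < μ (W.edges[i]'h)) : False := by
  classical
  set μ' : Sym2 V → ℕ := fun e => (↑(μ e) + nu W e).toNat with hμ'def
  have hkey : ∀ e, (μ' e : ℤ) = (μ e : ℤ) + nu W e := by
    intro e
    by_cases he : e ∈ W.edges
    · obtain ⟨i, hi, rfl⟩ := List.getElem_of_mem he
      rw [hμ'def]
      simp only
      rw [nu_getElem W hW.1.edges_nodup i hi]
      rcases Nat.even_or_odd i with hev | hod
      · rw [hev.neg_one_pow]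
        rw [Int.toNat_of_nonneg (by positivity)]
      · rw [hod.neg_one_pow]
        have := halt i hi hod
        rw [Int.toNat_of_nonneg (by omega)]
    · rw [hμ'def]; simp only
      rw [nu_eq_zero W e he]
      simp
  have hμ'match : IsBMatching G b μ' := by
    constructor
    · intro e he'
      by_cases he : e ∈ W.edges
      · exact W.edges_subset_edgeSet he
      · apply hμ.1
        intro h0
        apply he'
        have := hkey e
        rw [h0, nu_eq_zero W e he] at this
        exact_mod_cast this
    · intro w
      have hsum : ((∑ e ∈ G.edgeFinset.filter (fun e => w ∈ e), μ' e : ℕ) : ℤ)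
          = (∑ e ∈ G.edgeFinset.filter (fun e => w ∈ e), μ e : ℕ)
            + ((if w = a then 1 else 0) - (-1) ^ W.length * (if w = c then 1 else 0)) := by
        push_cast
        rw [← sum_nu_incident W w, ← Finset.sum_add_distrib]
        exact Finset.sum_congr rfl fun e _ => hkey e
      have hW1 : ((-1 : ℤ)) ^ W.length = -1 := hodd.neg_one_pow
      have hble := hμ.2 w
      by_cases hwa : w = a
      · subst hwa
        have hlt : ∑ e ∈ G.edgeFinset.filter (fun e => w ∈ e), μ e < b w :=
          lt_of_le_of_ne hble ha
        rw [hW1, if_neg hac] at hsum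
        simp only [if_pos rfl] at hsum
        omega
      · by_cases hwc : w = c
        · subst hwc
          have hlt : ∑ e ∈ G.edgeFinset.filter (fun e => w ∈ e), μ e < b w :=
            lt_of_le_of_ne hble hc
          rw [hW1, if_neg hwa, if_pos rfl] at hsum
          omega
        · rw [hW1, if_neg hwa, if_neg hwc] at hsum
          omega
  have hval : ((∑ e ∈ G.edgeFinset, μ' e : ℕ) : ℤ) = (∑ e ∈ G.edgeFinset, μ e : ℕ) + 1 := by
    push_cast
    rw [show (∑ x ∈ G.edgeFinset, (μ' x : ℤ)) = ∑ x ∈ G.edgeFinset, ((μ x : ℤ) + nu W x) from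
        Finset.sum_congr rfl fun e _ => hkey e,
      Finset.sum_add_distrib, sum_nu_total W, if_neg (Nat.not_even_iff_odd.mpr hodd)]
  have := hmax μ' hμ'match
  omega

lemma edges_getElem_sym2 {G : SimpleGraph V} {a c : V} (p : G.Walk a c) :
    ∀ (i : ℕ) (h : i < p.edges.length),
      p.edges[i]'h = s(p.support[i]'(by rw [SimpleGraph.Walk.length_support, ← SimpleGraph.Walk.length_edges]; omega), p.support[i+1]'(by rw [SimpleGraph.Walk.length_support, ← SimpleGraph.Walk.length_edges]; omega)) := by
  induction p with
  | nil => intro i h; simp at h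
  | @cons x y z hadj q ih =>
    intro i h
    match i with
    | 0 =>
      have h0 : q.support[0]'(by rw [SimpleGraph.Walk.length_support]; omega) = y := by
        rw [List.getElem_of_eq q.support_eq_cons]
        simp
      simp only [SimpleGraph.Walk.edges_cons, SimpleGraph.Walk.support_cons,
        List.getElem_cons_zero, List.getElem_cons_succ, h0]
    | (i + 1) =>
      have hlt : i < q.edges.length := by
        have := h
        simp only [SimpleGraph.Walk.edges_cons, List.length_cons] at this; omega
      simp only [SimpleGraph.Walk.edges_cons, SimpleGraph.Walk.support_cons,
        List.getElem_cons_succ]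
      exact ih i hlt

lemma support_getElem_eq {G : SimpleGraph V} {x : V} (W : G.Walk x x)
    (hnd : W.support.tail.Nodup) :
    ∀ (j j' : ℕ) (hj : j < W.support.length) (hj' : j' < W.support.length),
      j < j' → W.support[j]'hj = W.support[j']'hj' → j = 0 ∧ j' = W.length := by
  intro j j' hj hj' hlt heq
  set ℓ := W.length with hℓ
  have hsupl : W.support.length = ℓ + 1 := W.length_support
  have htl : W.support.tail.length = ℓ := by
    rw [List.length_tail, hsupl]
    omega
  have htlget : ∀ (k : ℕ) (hk : k < W.support.length), 1 ≤ k →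
      W.support[k]'hk = W.support.tail[k-1]'(by rw [htl]; omega) := by
    intro k hk h1
    rw [List.getElem_of_eq W.support_eq_cons]
    match k, h1 with
    | (k+1), _ => simp
  have hlast : W.support[ℓ]'(by omega) = x := by
    have h1 := W.getLast_support
    rw [List.getLast_eq_getElem] at h1
    simp only [hsupl, Nat.add_sub_cancel] at h1
    exact h1
  have h0 : W.support[0]'(by omega) = x := by
    rw [List.getElem_of_eq W.support_eq_cons]
    simp
  rcases Nat.eq_zero_or_pos j with rfl | hj0
  · refine ⟨rfl, ?_⟩
    by_contra hne
    have hj'ℓ : j' < ℓ := by omega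
    have : W.support.tail[j'-1]'(by omega) = W.support.tail[ℓ-1]'(by omega) := by
      rw [← htlget j' hj' (by omega), ← htlget ℓ (by omega) (by omega), hlast, ← heq, h0]
    have := hnd.getElem_inj_iff.mp this
    omega
  · exfalso
    have : W.support.tail[j-1]'(by omega) = W.support.tail[j'-1]'(by omega) := by
      rw [← htlget j hj (by omega), ← htlget j' hj' (by omega), heq]
    have := hnd.getElem_inj_iff.mp this
    omega

lemma isCycle_of_tail_nodup {G : SimpleGraph V} {x : V} (W : G.Walk x x)
    (hodd : Odd W.length) (hnd : W.support.tail.Nodup) : W.IsCycle := by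
  have hℓ1 : 1 ≤ W.length := hodd.pos
  have hℓ2 : W.length ≠ 2 := by
    intro h2; rw [h2, Nat.odd_iff] at hodd; omega
  have hedl : W.edges.length = W.length := W.length_edges
  have hsupl : W.support.length = W.length + 1 := W.length_support
  refine ⟨⟨⟨?_⟩, ?_⟩, hnd⟩
  · -- edges nodup
    rw [List.nodup_iff_injective_getElem]
    rintro ⟨i, hi⟩ ⟨k, hk⟩ heq
    simp only at heq
    rcases lt_trichotomy i k with hik | hik | hik
    · exfalso
      rw [edges_getElem_sym2 W i hi, edges_getElem_sym2 W k hk, Sym2.eq_iff] at heq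
      rcases heq with ⟨h1, h2⟩ | ⟨h1, h2⟩
      · -- support[i+1] = support[k+1]
        have := support_getElem_eq W hnd (i+1) (k+1) (by omega) (by omega) (by omega) h2
        omega
      · -- support[i+1] = support[k], support[i] = support[k+1]
        rcases Nat.lt_or_ge (i+1) k with hc | hc
        · have := support_getElem_eq W hnd (i+1) k (by omega) (by omega) (by omega) h2
          omega
        · have hki : k = i + 1 := by omega
          subst hki
          have := support_getElem_eq W hnd i (i+2) (by omega) (by omega) (by omega) h1
          omega
    · exact Fin.ext hik
    · exfalso
      rw [edges_getElem_sym2 W i hi, edges_getElem_sym2 W k hk, Sym2.eq_iff] at heq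
      rcases heq with ⟨h1, h2⟩ | ⟨h1, h2⟩
      · have := support_getElem_eq W hnd (k+1) (i+1) (by omega) (by omega) (by omega) h2.symm
        omega
      · rcases Nat.lt_or_ge (k+1) i with hc | hc
        · have := support_getElem_eq W hnd (k+1) i (by omega) (by omega) (by omega) h1.symm
          omega
        · have hik' : i = k + 1 := by omega
          subst hik'
          have := support_getElem_eq W hnd k (k+2) (by omega) (by omega) (by omega) h2.symm
          omega
  · -- W ≠ nil
    intro hnil
    rw [hnil] at hℓ1
    simp at hℓ1

lemma exists_odd_cycle {G : SimpleGraph V} :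
    ∀ (ℓ : ℕ), Odd ℓ → ∀ (x : V) (W : G.Walk x x), W.length = ℓ →
      ∃ (y : V) (C : G.Walk y y), C.IsCycle ∧ Odd C.length ∧ C.length ≤ ℓ := by
  intro ℓ
  induction ℓ using Nat.strong_induction_on with
  | _ ℓ ih =>
    intro hodd x W hlen
    by_cases hnd : W.support.tail.Nodup
    · exact ⟨x, W, isCycle_of_tail_nodup W (hlen ▸ hodd) hnd, hlen ▸ hodd, hlen.le⟩
    · have hℓ1 : 1 ≤ ℓ := hodd.pos
      have hWnil : ¬ W.Nil := by
        rw [SimpleGraph.Walk.not_nil_iff_lt_length]; omega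
      obtain ⟨z, hadj, D, rfl⟩ := SimpleGraph.Walk.not_nil_iff.mp hWnil
      rw [SimpleGraph.Walk.support_cons, List.tail_cons] at hnd
      obtain ⟨y, hy⟩ := List.exists_duplicate_iff_not_nodup.mpr hnd
      rw [List.duplicate_iff_two_le_count] at hy
      have hymem : y ∈ D.support := by
        rw [← List.count_pos_iff]; omega
      set D1 := D.takeUntil y hymem with hD1
      set D2 := D.dropUntil y hymem with hD2
      have hspec := D.take_spec hymem
      have hcnt1 : D1.support.count y = 1 := D.count_support_takeUntil_eq_one hymem
      have hsupD : D.support = D1.support ++ D2.support.tail := by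
        rw [← hspec, SimpleGraph.Walk.support_append]
      have hcnt2 : 1 ≤ D2.support.tail.count y := by
        rw [hsupD, List.count_append] at hy; omega
      have hymem2 : y ∈ D2.support.tail := by
        rw [← List.count_pos_iff]; omega
      have hD2nil : ¬ D2.Nil := by
        rw [SimpleGraph.Walk.nil_iff_length_eq]
        intro h0
        have h1 : D2.support.tail.length = 0 := by
          rw [List.length_tail, SimpleGraph.Walk.length_support, h0]
        rw [List.length_eq_zero_iff.mp h1] at hymem2
        simp at hymem2
      obtain ⟨w, hadj2, E, hE⟩ := SimpleGraph.Walk.not_nil_iff.mp hD2nil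
      have hymemE : y ∈ E.support := by
        rw [hE, SimpleGraph.Walk.support_cons, List.tail_cons] at hymem2
        exact hymem2
      set C := SimpleGraph.Walk.cons hadj2 (E.takeUntil y hymemE) with hC
      set R := SimpleGraph.Walk.cons hadj (D1.append (E.dropUntil y hymemE)) with hR
      have hlenE := congrArg SimpleGraph.Walk.length (E.take_spec hymemE)
      rw [SimpleGraph.Walk.length_append] at hlenE
      have hlenD := congrArg SimpleGraph.Walk.length hspec
      rw [SimpleGraph.Walk.length_append] at hlenD
      rw [← hD1, ← hD2] at hlenD
      have hlenD2 : D2.length = E.length + 1 := by rw [hE]; simp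
      have hlenW : ℓ = D.length + 1 := by rw [← hlen]; simp
      have hlenC : C.length = (E.takeUntil y hymemE).length + 1 := by simp [hC]
      have hlenR : R.length = D1.length + (E.dropUntil y hymemE).length + 1 := by
        rw [hR, SimpleGraph.Walk.length_cons, SimpleGraph.Walk.length_append]
      have hsum : C.length + R.length = ℓ := by
        omega
      rcases Nat.even_or_odd C.length with hev | hodC
      · have hoddR : Odd R.length := by
          rw [Nat.odd_iff] at hodd ⊢; rw [Nat.even_iff] at hev; omega
        obtain ⟨y', C', h1, h2, h3⟩ := ih R.length (by omega) hoddR x R rfl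
        exact ⟨y', C', h1, h2, by omega⟩
      · obtain ⟨y', C', h1, h2, h3⟩ := ih C.length (by omega) hodC y C rfl
        exact ⟨y', C', h1, h2, by omega⟩

lemma walk_false {G : SimpleGraph V} [DecidableRel G.Adj] (κ : ℕ) (hκ : 0 < κ)
    (hgirth : ∀ (w : V) (c : G.Walk w w), c.IsCycle → Odd c.length → 2 * κ + 1 ≤ c.length)
    {b : V → ℕ} {μ : Sym2 V → ℕ} (hμ : IsBMatching G b μ)
    (hmax : ∀ μ' : Sym2 V → ℕ, IsBMatching G b μ' →
      ∑ e ∈ G.edgeFinset, μ' e ≤ ∑ e ∈ G.edgeFinset, μ e) :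
    ∀ (ℓ : ℕ), Odd ℓ → ℓ ≤ 2 * κ - 1 → ∀ (a c : V) (W : G.Walk a c), W.length = ℓ →
      Available G b μ a → Available G b μ c →
      (∀ (i : ℕ) (h : i < W.edges.length), Odd i → 0 < μ (W.edges[i]'h)) → False := by
  intro ℓ
  induction ℓ using Nat.strong_induction_on with
  | _ ℓ ih =>
    intro hodd hbound a c W hlen ha hc halt
    by_cases hnd : W.support.Nodup
    · rcases eq_or_ne a c with rfl | hac
      · have hnil := (SimpleGraph.Walk.isPath_iff_eq_nil (p := W)).mp (SimpleGraph.Walk.IsPath.mk' hnd)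
        subst hnil
        simp only [SimpleGraph.Walk.length_nil] at hlen
        rw [← hlen, Nat.odd_iff] at hodd
        omega
      · exact augment_false hμ hmax W (SimpleGraph.Walk.IsPath.mk' hnd) (hlen ▸ hodd) hac ha hc
          halt
    · obtain ⟨y, hy⟩ := List.exists_duplicate_iff_not_nodup.mpr hnd
      rw [List.duplicate_iff_two_le_count] at hy
      have hymem : y ∈ W.support := by rw [← List.count_pos_iff]; omega
      have hspecW := W.take_spec hymem
      have hcnt1 : (W.takeUntil y hymem).support.count y = 1 :=
        W.count_support_takeUntil_eq_one hymem
      have hsupW : W.support = (W.takeUntil y hymem).support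
          ++ (W.dropUntil y hymem).support.tail := by
        conv_lhs => rw [← hspecW]
        rw [SimpleGraph.Walk.support_append]
      have hymem2 : y ∈ (W.dropUntil y hymem).support.tail := by
        rw [← List.count_pos_iff]
        rw [hsupW, List.count_append] at hy
        omega
      have hDnil : ¬ (W.dropUntil y hymem).Nil := by
        rw [SimpleGraph.Walk.nil_iff_length_eq]
        intro h0
        have h1 : (W.dropUntil y hymem).support.tail.length = 0 := by
          rw [List.length_tail, SimpleGraph.Walk.length_support, h0]
        rw [List.length_eq_zero_iff.mp h1] at hymem2
        simp at hymem2
      obtain ⟨w, hadj2, E, hE⟩ := SimpleGraph.Walk.not_nil_iff.mp hDnil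
      have hymemE : y ∈ E.support := by
        rw [hE, SimpleGraph.Walk.support_cons, List.tail_cons] at hymem2
        exact hymem2
      have hspecE := E.take_spec hymemE
      -- abbreviations (plain)
      have hlenE := congrArg SimpleGraph.Walk.length hspecE
      rw [SimpleGraph.Walk.length_append] at hlenE
      have hlenW := congrArg SimpleGraph.Walk.length hspecW
      rw [SimpleGraph.Walk.length_append] at hlenW
      have hlenD : (W.dropUntil y hymem).length = E.length + 1 := by rw [hE]; simp
      -- the excised closed walk
      rcases Nat.even_or_odd ((E.takeUntil y hymemE).length + 1) with hev | hodC
      · -- even closed part: recurse on shortened walk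
        set W' := (W.takeUntil y hymem).append (E.dropUntil y hymemE) with hW'
        have hlenW' : W'.length = (W.takeUntil y hymem).length
            + (E.dropUntil y hymemE).length := by
          rw [hW', SimpleGraph.Walk.length_append]
        have hWE : W.edges = (W.takeUntil y hymem).edges
            ++ (s(y, w) :: ((E.takeUntil y hymemE).edges ++ (E.dropUntil y hymemE).edges)) := by
          conv_lhs => rw [← hspecW]
          rw [SimpleGraph.Walk.edges_append, hE, SimpleGraph.Walk.edges_cons]
          conv_lhs => rw [← hspecE]
          rw [SimpleGraph.Walk.edges_append]
        have hW'E : W'.edges = (W.takeUntil y hymem).edges ++ (E.dropUntil y hymemE).edges := by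
          rw [hW', SimpleGraph.Walk.edges_append]
        have hL1 : (W.takeUntil y hymem).edges.length = (W.takeUntil y hymem).length :=
          SimpleGraph.Walk.length_edges _
        have hLt : (E.takeUntil y hymemE).edges.length = (E.takeUntil y hymemE).length :=
          SimpleGraph.Walk.length_edges _
        have hL2 : (E.dropUntil y hymemE).edges.length = (E.dropUntil y hymemE).length :=
          SimpleGraph.Walk.length_edges _
        have hLW : W.edges.length = ℓ := by rw [SimpleGraph.Walk.length_edges, hlen]
        rw [Nat.even_iff] at hev
        rw [Nat.odd_iff] at hodd
        apply ih W'.length ?_ ?_ ?_ a c W' rfl ha hc ?_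
        · omega
        · rw [Nat.odd_iff]; omega
        · omega
        · intro i hi hoddi
          rw [SimpleGraph.Walk.length_edges] at hi
          rcases Nat.lt_or_ge i (W.takeUntil y hymem).length with hlt | hge
          · have h1 : W'.edges[i]'(by rw [SimpleGraph.Walk.length_edges]; exact hi)
                = (W.takeUntil y hymem).edges[i]'(by omega) := by
              rw [List.getElem_of_eq hW'E, List.getElem_append_left]
            have h2 : W.edges[i]'(by omega)
                = (W.takeUntil y hymem).edges[i]'(by omega) := by
              rw [List.getElem_of_eq hWE, List.getElem_append_left]
            rw [h1, ← h2]
            exact halt i (by omega) hoddi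
          · set j := i + ((E.takeUntil y hymemE).length + 1) with hj
            have hoddj : Odd j := by
              rw [Nat.odd_iff] at hoddi ⊢; omega
            have hjlt : j < W.edges.length := by omega
            have h2 : W.edges[j]'hjlt = (E.dropUntil y hymemE).edges[i
                - (W.takeUntil y hymem).length]'(by omega) := by
              rw [List.getElem_of_eq hWE, List.getElem_append_right (by omega)]
              have hge1 : 1 ≤ j - (W.takeUntil y hymem).edges.length := by omega
              rw [List.getElem_cons]
              rw [dif_neg (by omega)]
              rw [List.getElem_append_right (by omega)]
              congr 1
              omega
            have h1 : W'.edges[i]'(by rw [SimpleGraph.Walk.length_edges]; exact hi)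
                = (E.dropUntil y hymemE).edges[i - (W.takeUntil y hymem).length]'(by omega) := by
              rw [List.getElem_of_eq hW'E, List.getElem_append_right (by omega)]
              congr 1
              omega
            rw [h1, ← h2]
            exact halt j hjlt hoddj
      · -- odd closed part: extract an odd cycle, contradict girth
        obtain ⟨y', C', hcyc, hodd', hle'⟩ := exists_odd_cycle
          ((E.takeUntil y hymemE).length + 1) hodC y
          (SimpleGraph.Walk.cons hadj2 (E.takeUntil y hymemE)) (by simp)
        have := hgirth y' C' hcyc hodd'
        omega

lemma altDist_le' {G : SimpleGraph V} [DecidableRel G.Adj] {b : V → ℕ} {μ : Sym2 V → ℕ}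
    {s v : V} (p : G.Walk s v) (hp : IsAlternating G b μ p) :
    altDist G b μ v ≤ (p.length : ℕ∞) := by
  apply iInf_le_of_le s
  apply iInf_le_of_le p
  exact iInf_le _ hp

lemma altDist_attained {G : SimpleGraph V} [DecidableRel G.Adj] {b : V → ℕ} {μ : Sym2 V → ℕ}
    {v : V} {n : ℕ} (h : altDist G b μ v = n) :
    ∃ (s : V) (p : G.Walk s v), IsAlternating G b μ p ∧ p.length = n := by
  have h1 : altDist G b μ v < ((n + 1 : ℕ) : ℕ∞) := by
    rw [h]; exact_mod_cast Nat.lt_succ_self n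
  unfold altDist at h1
  rw [iInf_lt_iff] at h1
  obtain ⟨s, h1⟩ := h1
  rw [iInf_lt_iff] at h1
  obtain ⟨p, h1⟩ := h1
  rw [iInf_lt_iff] at h1
  obtain ⟨hp, h1⟩ := h1
  have h2 := altDist_le' p hp
  rw [h] at h2
  have h3 : p.length < n + 1 := by exact_mod_cast h1
  have h4 : n ≤ p.length := by exact_mod_cast h2
  exact ⟨s, p, hp, by omega⟩

lemma IsAlternating.takeUntil' {G : SimpleGraph V} [DecidableRel G.Adj] {b : V → ℕ}
    {μ : Sym2 V → ℕ} {s u v : V} {p : G.Walk s u} (hp : IsAlternating G b μ p)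
    (hv : v ∈ p.support) : IsAlternating G b μ (p.takeUntil v hv) := by
  refine ⟨hp.1.takeUntil hv, hp.2.1, ?_⟩
  intro i h hiodd
  have hE : p.edges = (p.takeUntil v hv).edges ++ (p.dropUntil v hv).edges := by
    conv_lhs => rw [← p.take_spec hv]
    rw [SimpleGraph.Walk.edges_append]
  have hlt : i < p.edges.length := by
    rw [hE, List.length_append]; omega
  have h2 := hp.2.2 i hlt hiodd
  have h3 : p.edges[i]'hlt = (p.takeUntil v hv).edges[i]'h := by
    rw [List.getElem_of_eq hE, List.getElem_append_left]
  rwa [h3] at h2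

lemma IsAlternating.concat' {G : SimpleGraph V} [DecidableRel G.Adj] {b : V → ℕ}
    {μ : Sym2 V → ℕ} {s u v : V} {p : G.Walk s u} (hp : IsAlternating G b μ p)
    (heven : Even p.length) (huv : G.Adj u v) (hv : v ∉ p.support) :
    IsAlternating G b μ (p.concat huv) := by
  refine ⟨?_, hp.2.1, ?_⟩
  · apply SimpleGraph.Walk.IsPath.mk'
    rw [SimpleGraph.Walk.support_concat]
    rw [List.nodup_append']
    refine ⟨hp.1.support_nodup, List.nodup_singleton v, ?_⟩
    intro x hx hx'
    rw [List.mem_singleton] at hx'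
    subst hx'
    exact hv hx
  · intro i h hiodd
    have hE : (p.concat huv).edges = p.edges ++ [s(u, v)] := by
      rw [SimpleGraph.Walk.edges_concat, List.concat_eq_append]
    have hlen : i < p.edges.length + 1 := by
      rw [hE, List.length_append] at h
      simpa using h
    have hple : p.edges.length = p.length := SimpleGraph.Walk.length_edges p
    rcases Nat.lt_or_ge i p.edges.length with hlt | hge
    · have h3 : (p.concat huv).edges[i]'h = p.edges[i]'hlt := by
        rw [List.getElem_of_eq hE, List.getElem_append_left]
      rw [h3]
      exact hp.2.2 i hlt hiodd
    · exfalso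
      have : i = p.length := by omega
      rw [Nat.odd_iff] at hiodd
      rw [Nat.even_iff] at heven
      omega

end AltProof

theorem stmt11 (κ : ℕ) (hκ : 0 < κ) (G : SimpleGraph V) [DecidableRel G.Adj]
    (hgirth : ∀ (w : V) (c : G.Walk w w), c.IsCycle → Odd c.length → 2 * κ + 1 ≤ c.length)
    (b : V → ℕ) (hb : ∀ v : V, 0 < b v)
    (μ : Sym2 V → ℕ) (hμ : IsBMatching G b μ)
    (hmax : ∀ μ' : Sym2 V → ℕ, IsBMatching G b μ' →
      ∑ e ∈ G.edgeFinset, μ' e ≤ ∑ e ∈ G.edgeFinset, μ e)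
    (u v : V) (huv : G.Adj u v)
    (n : ℕ) (hu : altDist G b μ u = n) (heven : Even n) (hle : n ≤ κ - 1) :
    ∃ m : ℕ, altDist G b μ v = m ∧ Odd m := by
  classical
  obtain ⟨a, P, hP, hPlen⟩ := AltProof.altDist_attained hu
  have hPeven : Even P.length := hPlen ▸ heven
  have hub : altDist G b μ v ≤ ((n + 1 : ℕ) : ℕ∞) := by
    by_cases hvP : v ∈ P.support
    · have h1 := AltProof.altDist_le' _ (AltProof.IsAlternating.takeUntil' hP hvP)
      have h2 : (P.takeUntil v hvP).length ≤ P.length :=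
        SimpleGraph.Walk.length_takeUntil_le P hvP
      refine le_trans h1 ?_
      exact_mod_cast (by omega : (P.takeUntil v hvP).length ≤ n + 1)
    · have h1 := AltProof.altDist_le' _ (AltProof.IsAlternating.concat' hP hPeven huv hvP)
      rw [SimpleGraph.Walk.length_concat, hPlen] at h1
      exact_mod_cast h1
  have hne : altDist G b μ v ≠ ⊤ := by
    intro ht
    rw [ht] at hub
    exact absurd (top_le_iff.mp hub) (ENat.coe_ne_top _)
  obtain ⟨m, hm⟩ : ∃ m : ℕ, altDist G b μ v = (m : ℕ∞) := by
    cases hd : altDist G b μ v with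
    | top => exact absurd hd hne
    | coe m => exact ⟨m, rfl⟩
  refine ⟨m, hm, ?_⟩
  by_contra hcon
  rw [Nat.not_odd_iff_even] at hcon
  obtain ⟨cc, Q, hQ, hQlen⟩ := AltProof.altDist_attained hm
  have hmn : m ≤ n + 1 := by
    rw [hm] at hub
    exact_mod_cast hub
  have hmlen : m ≤ n := by
    rw [Nat.even_iff] at hcon heven
    omega
  set W := P.append (SimpleGraph.Walk.cons huv Q.reverse) with hW
  have hWlen : W.length = n + 1 + m := by
    rw [hW, SimpleGraph.Walk.length_append, SimpleGraph.Walk.length_cons,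
      SimpleGraph.Walk.length_reverse, hPlen, hQlen]
    omega
  apply AltProof.walk_false κ hκ hgirth hμ hmax W.length ?_ ?_ a cc W rfl hP.2.1 hQ.2.1 ?_
  · rw [hWlen, Nat.odd_iff]
    rw [Nat.even_iff] at hcon heven
    omega
  · omega
  · intro i h hiodd
    have hWE : W.edges = P.edges ++ (s(u, v) :: Q.edges.reverse) := by
      rw [hW, SimpleGraph.Walk.edges_append, SimpleGraph.Walk.edges_cons,
        SimpleGraph.Walk.edges_reverse]
    have hPel : P.edges.length = n := by rw [SimpleGraph.Walk.length_edges, hPlen]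
    have hQel : Q.edges.length = m := by rw [SimpleGraph.Walk.length_edges, hQlen]
    have hWel : W.edges.length = n + 1 + m := by rw [SimpleGraph.Walk.length_edges, hWlen]
    rcases Nat.lt_or_ge i n with hlt | hge
    · have h3 : W.edges[i]'h = P.edges[i]'(by omega) := by
        rw [List.getElem_of_eq hWE, List.getElem_append_left]
      rw [h3]
      exact hP.2.2 i (by omega) hiodd
    · have hin : i ≠ n := by
        rw [Nat.odd_iff] at hiodd
        rw [Nat.even_iff] at heven
        omega
      have hilt : i < n + 1 + m := by omega
      have h3 : W.edges[i]'h = Q.edges[m - 1 - (i - n - 1)]'(by omega) := by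
        rw [List.getElem_of_eq hWE, List.getElem_append_right (by omega)]
        rw [List.getElem_cons, dif_neg (by omega)]
        rw [List.getElem_reverse]
        congr 1
        omega
      rw [h3]
      apply hQ.2.2 (m - 1 - (i - n - 1)) (by omega)
      rw [Nat.odd_iff] at hiodd ⊢
      rw [Nat.even_iff] at heven hcon
      omega
end

section
/- Let κ be a positive integer, let G = (V,E) be a finite simple graph in which every odd cycle has length at least 2κ+1, let b : V → ℤ_{>0}, let μ be a maximum b-matching in G, and let y : V → ℚ be defined from alt as in the context. Then y_u + y_v ≥ 1 for every edge (u,v) ∈ E. -/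
open SimpleGraph Finset

variable {V : Type*} [Fintype V] [DecidableEq V]

/-- The dual assignment `y` defined from `alt`: `y v = alt(v)/(2κ)` if `alt(v) < κ` is
even, `y v = 1 - (alt(v)-1)/(2κ)` if `alt(v) < κ` is odd, and `y v = ⌈κ/2⌉/κ`
otherwise. -/
noncomputable def yBM (G : SimpleGraph V) [DecidableRel G.Adj] (b : V → ℕ)
    (μ : Sym2 V → ℕ) (κ : ℕ) (v : V) : ℚ :=
  if altDist G b μ v < (κ : ℕ∞) then
    (if Even (altDist G b μ v).toNat then
      ((altDist G b μ v).toNat : ℚ) / (2 * κ)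
    else
      1 - (((altDist G b μ v).toNat : ℚ) - 1) / (2 * κ))
  else
    (⌈(κ : ℚ) / 2⌉ : ℚ) / κ


section WalkAux
variable {V' : Type*} {G : SimpleGraph V'}

lemma walk_edges_getElem {u v : V'} (p : G.Walk u v) (i : ℕ) (h : i < p.edges.length) :
    p.edges[i]'h = s(p.getVert i, p.getVert (i+1)) := by
  induction p generalizing i with
  | nil => simp at h
  | cons hadj q ih =>
    cases i with
    | zero => simp [Walk.getVert_zero, Walk.getVert_cons_succ, Walk.edges_cons]
    | succ n =>
      simp only [Walk.edges_cons, Walk.getVert_cons_succ]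
      rw [List.getElem_cons_succ]
      exact ih n _

lemma walk_support_getElem {u v : V'} (p : G.Walk u v) (i : ℕ) (h : i < p.support.length) :
    p.support[i]'h = p.getVert i := by
  induction p generalizing i with
  | nil =>
    simp only [Walk.support_nil, List.length_cons, List.length_nil] at h
    interval_cases i
    simp
  | cons hadj q ih =>
    cases i with
    | zero => simp
    | succ n =>
      simp only [Walk.support_cons, Walk.getVert_cons_succ]
      rw [List.getElem_cons_succ]
      exact ih n _

end WalkAux

section AltLemmas
variable {G : SimpleGraph V} [DecidableRel G.Adj] {b : V → ℕ} {μ : Sym2 V → ℕ}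

lemma isAlternating_iff {w v : V} (p : G.Walk w v) :
    IsAlternating G b μ p ↔ p.IsPath ∧ Available G b μ w ∧
      ∀ i : ℕ, i < p.length → Odd i → 0 < μ s(p.getVert i, p.getVert (i+1)) := by
  have he : ∀ (i : ℕ) (h : i < p.edges.length),
      p.edges[i]'h = s(p.getVert i, p.getVert (i+1)) := walk_edges_getElem p
  constructor
  · rintro ⟨h1, h2, h3⟩
    refine ⟨h1, h2, fun i hi ho => ?_⟩
    have hi' : i < p.edges.length := by rw [Walk.length_edges]; exact hi
    exact lt_of_lt_of_eq (h3 i hi' ho) (congrArg μ (he i hi'))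
  · rintro ⟨h1, h2, h3⟩
    refine ⟨h1, h2, fun i hi ho => ?_⟩
    have hi' : i < p.length := by rw [← Walk.length_edges]; exact hi
    exact lt_of_lt_of_eq (h3 i hi' ho) (congrArg μ (he i hi).symm)

lemma altDist_le {w v : V} (p : G.Walk w v) (hp : IsAlternating G b μ p) :
    altDist G b μ v ≤ (p.length : ℕ∞) :=
  iInf_le_of_le w (iInf_le_of_le p (iInf_le_of_le hp le_rfl))

lemma exists_alt_eq {v : V} {n : ℕ} (h : altDist G b μ v = (n : ℕ∞)) :
    ∃ (w : V) (p : G.Walk w v), IsAlternating G b μ p ∧ p.length = n := by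
  have h2 : altDist G b μ v < (n : ℕ∞) + 1 := by rw [h]; exact_mod_cast Nat.lt_succ_self n
  rw [altDist, iInf_lt_iff] at h2
  obtain ⟨w, hw⟩ := h2
  rw [iInf_lt_iff] at hw
  obtain ⟨p, hp⟩ := hw
  rw [iInf_lt_iff] at hp
  obtain ⟨halt, hlt⟩ := hp
  refine ⟨w, p, halt, le_antisymm ?_ ?_⟩
  · have : (p.length : ℕ∞) < (n : ℕ∞) + 1 := hlt
    exact_mod_cast Nat.lt_succ_iff.mp (by exact_mod_cast this)
  · have := altDist_le p halt
    rw [h] at this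
    exact_mod_cast this

lemma getVert_takeUntil {w u v : V} (p : G.Walk w u) (hv : v ∈ p.support) {i : ℕ}
    (hi : i ≤ (p.takeUntil v hv).length) :
    (p.takeUntil v hv).getVert i = p.getVert i := by
  conv_rhs => rw [← p.take_spec hv]
  rw [Walk.getVert_append]
  rcases lt_or_eq_of_le hi with hlt | heq
  · rw [if_pos hlt]
  · rw [if_neg (by omega), heq, Nat.sub_self, Walk.getVert_zero, Walk.getVert_length]

lemma alt_takeUntil {w u v : V} (p : G.Walk w u) (hp : IsAlternating G b μ p)
    (hv : v ∈ p.support) : IsAlternating G b μ (p.takeUntil v hv) := by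
  rw [isAlternating_iff] at hp ⊢
  obtain ⟨h1, h2, h3⟩ := hp
  refine ⟨h1.takeUntil hv, h2, fun i hi ho => ?_⟩
  rw [getVert_takeUntil p hv (by omega), getVert_takeUntil p hv (by omega)]
  exact h3 i (lt_of_lt_of_le hi (p.length_takeUntil_le hv)) ho

lemma getVert_concat {w u v : V} (p : G.Walk w u) (huv : G.Adj u v) {i : ℕ}
    (hi : i ≤ p.length) : (p.concat huv).getVert i = p.getVert i := by
  rw [Walk.concat_eq_append, Walk.getVert_append]
  rcases lt_or_eq_of_le hi with hlt | heq
  · rw [if_pos hlt]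
  · rw [if_neg (by omega), heq, Nat.sub_self, Walk.getVert_zero, Walk.getVert_length]

lemma alt_extend {w u v : V} (p : G.Walk w u) (hp : IsAlternating G b μ p)
    (huv : G.Adj u v) (hpar : Even p.length ∨ 0 < μ s(u, v)) :
    altDist G b μ v ≤ (p.length : ℕ∞) + 1 := by
  by_cases hv : v ∈ p.support
  · refine le_trans (altDist_le _ (alt_takeUntil p hp hv)) ?_
    have := p.length_takeUntil_le hv
    calc ((p.takeUntil v hv).length : ℕ∞) ≤ (p.length : ℕ∞) := by exact_mod_cast this
      _ ≤ (p.length : ℕ∞) + 1 := le_self_add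
  · have hq : IsAlternating G b μ (p.concat huv) := by
      rw [isAlternating_iff] at hp ⊢
      obtain ⟨h1, h2, h3⟩ := hp
      refine ⟨Walk.IsPath.mk' ?_, h2, fun i hi ho => ?_⟩
      · rw [Walk.support_concat, List.nodup_append']
        exact ⟨h1.support_nodup, by simp, by simpa using fun hvp => hv hvp⟩
      · rw [Walk.length_concat] at hi
        rcases Nat.lt_or_ge i p.length with hlt | hge
        · rw [getVert_concat p huv (by omega), getVert_concat p huv (by omega)]
          exact h3 i hlt ho
        · have hieq : i = p.length := by omega
          rcases hpar with heven | hpos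
          · exact absurd (hieq ▸ ho) (by rw [Nat.odd_iff, Nat.even_iff] at *; omega)
          · have h4 : (p.concat huv).getVert i = u := by
              rw [getVert_concat p huv (by omega), hieq, Walk.getVert_length]
            have h5 : (p.concat huv).getVert (i+1) = v := by
              rw [hieq, ← Walk.length_concat p huv, Walk.getVert_length]
            rw [h4, h5]
            exact hpos
    refine le_trans (altDist_le _ hq) ?_
    rw [Walk.length_concat]
    push_cast
    exact le_rfl

end AltLemmas

section OddCycle
variable {G : SimpleGraph V}

lemma odd_closed_walk_to_cycle :
    ∀ (n : ℕ) (w : V) (c : G.Walk w w), c.length ≤ n → Odd c.length →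
    ∃ (w' : V) (c' : G.Walk w' w'), c'.IsCycle ∧ Odd c'.length ∧ c'.length ≤ c.length := by
  intro n
  induction n using Nat.strong_induction_on with
  | _ n ih =>
  intro w c hlen hodd
  by_cases hnd : c.support.tail.Nodup
  · -- c is itself a cycle
    have hL1 : 1 ≤ c.length := hodd.pos
    have hlensup : c.support.length = c.length + 1 := c.length_support
    have htl : c.support.tail.length = c.length := by
      rw [List.length_tail, hlensup]
      omega
    have hgvt : ∀ a : ℕ, (ha : 1 ≤ a) → (haL : a ≤ c.length) →
        c.support.tail[a-1]'(by omega) = c.getVert a := by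
      intro a ha haL
      rw [List.getElem_tail, walk_support_getElem]
      congr 1
      omega
    have hinj : ∀ a b : ℕ, 1 ≤ a → a ≤ c.length → 1 ≤ b → b ≤ c.length →
        c.getVert a = c.getVert b → a = b := by
      intro a b ha1 haL hb1 hbL hab
      rw [← hgvt a ha1 haL, ← hgvt b hb1 hbL] at hab
      have := (hnd.getElem_inj_iff).mp hab
      omega
    have h0L : c.getVert 0 = c.getVert c.length := by
      rw [Walk.getVert_zero, Walk.getVert_length]
    have hedges : c.edges.Nodup := by
      rw [List.nodup_iff_injective_getElem]
      rintro ⟨i, hi⟩ ⟨j, hj⟩ hij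
      simp only at hij
      have hiL : i < c.length := by rw [Walk.length_edges] at hi; exact hi
      have hjL : j < c.length := by rw [Walk.length_edges] at hj; exact hj
      rw [walk_edges_getElem, walk_edges_getElem, Sym2.eq_iff] at hij
      have hne : ¬ (c.length = 2) := by
        rintro h2
        rw [h2] at hodd
        exact (Nat.not_odd_iff_even.mpr (by decide)) hodd
      apply Fin.ext
      simp only
      rcases hij with ⟨h1, h2⟩ | ⟨h1, h2⟩
      · exact Nat.add_right_cancel (hinj (i+1) (j+1) (by omega) (by omega) (by omega) (by omega) h2)
      · -- crossed: getVert i = getVert (j+1), getVert (i+1) = getVert j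
        rcases Nat.eq_zero_or_pos i with hi0 | hi1
        · subst hi0
          rcases Nat.eq_zero_or_pos j with hj0 | hj1
          · omega
          · -- getVert 0 = getVert (j+1) so c.length = j+1; getVert 1 = getVert j
            have e1 : c.length = j + 1 := by
              have := hinj c.length (j+1) (by omega) le_rfl (by omega) (by omega)
                (by rw [← h0L]; exact h1)
              omega
            have e2 : (1 : ℕ) = j := hinj 1 j (by omega) (by omega) (by omega) (by omega) h2
            omega
        · rcases Nat.eq_zero_or_pos j with hj0 | hj1
          · subst hj0
            have e1 : i + 1 = c.length := by
              have := hinj (i+1) c.length (by omega) (by omega) (by omega) le_rfl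
                (by rw [← h0L]; exact h2)
              omega
            have e2 : i = 1 := hinj i 1 (by omega) (by omega) (by omega) (by omega) h1
            omega
          · have e1 : i = j + 1 := hinj i (j+1) (by omega) (by omega) (by omega) (by omega) h1
            have e2 : i + 1 = j := hinj (i+1) j (by omega) (by omega) (by omega) (by omega) h2
            omega
      -- done crossed
    refine ⟨w, c, ⟨⟨⟨hedges⟩, ?_⟩, hnd⟩, hodd, le_rfl⟩
    intro hcnil
    rw [hcnil] at hodd
    simp [Nat.odd_iff] at hodd
  · -- find a duplicate vertex and split
    obtain ⟨z, hzdup⟩ := List.exists_duplicate_iff_not_nodup.mpr hnd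
    have hzc : 2 ≤ c.support.tail.count z := List.duplicate_iff_two_le_count.mp hzdup
    have hz : z ∈ c.support := List.mem_of_mem_tail hzdup.mem
    have hspec := c.take_spec hz
    have hcount1 : (c.takeUntil z hz).support.count z = 1 := c.count_support_takeUntil_eq_one hz
    have hsupp : c.support = (c.takeUntil z hz).support ++ (c.dropUntil z hz).support.tail := by
      have h2 := Walk.support_append (c.takeUntil z hz) (c.dropUntil z hz)
      rw [hspec] at h2
      exact h2
    have hcountc : c.support.count z = 1 + (c.dropUntil z hz).support.tail.count z := by
      rw [hsupp, List.count_append, hcount1]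
    have hcons : c.support.count z = c.support.tail.count z + (if z = w then 1 else 0) := by
      conv_lhs => rw [c.support_eq_cons]
      rw [List.count_cons]
      by_cases hzw : z = w
      · simp [hzw]
      · simp only [hzw, if_false]
        rw [if_neg (fun h => hzw ((beq_iff_eq).mp h).symm)]
    have hD1 : 1 ≤ (c.dropUntil z hz).support.tail.count z := by omega
    -- case on the drop part
    rcases hD : c.dropUntil z hz with _ | ⟨hadj, D'⟩
    · rw [hD] at hD1; simp at hD1
    · rw [hD] at hD1 hcountc
      simp only [Walk.support_cons, List.tail_cons] at hD1 hcountc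
      have hz' : z ∈ D'.support := List.count_pos_iff.mp (by omega)
      have hspec2 := D'.take_spec hz'
      have hcount1' : (D'.takeUntil z hz').support.count z = 1 :=
        D'.count_support_takeUntil_eq_one hz'
      have hsupp' : D'.support = (D'.takeUntil z hz').support ++ (D'.dropUntil z hz').support.tail := by
        have h2 := Walk.support_append (D'.takeUntil z hz') (D'.dropUntil z hz')
        rw [hspec2] at h2
        exact h2
      have hcountD' : D'.support.count z = 1 + (D'.dropUntil z hz').support.tail.count z := by
        rw [hsupp', List.count_append, hcount1']
      -- R has length ≥ 1
      have hR1 : 1 ≤ (D'.dropUntil z hz').length := by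
        by_cases hzw : z = w
        · -- count z D'.support ≥ 2
          have h2D : 2 ≤ D'.support.count z := by
            rw [if_pos hzw] at hcons
            omega
          have hmem : z ∈ (D'.dropUntil z hz').support.tail :=
            List.count_pos_iff.mp (by omega)
          rcases Nat.eq_zero_or_pos (D'.dropUntil z hz').length with h0 | h1
          · exfalso
            have : (D'.dropUntil z hz').support.tail.length = 0 := by
              rw [List.length_tail, Walk.length_support, h0]
            rw [List.length_eq_zero_iff] at this
            rw [this] at hmem
            simp at hmem
          · exact h1
        · rcases Nat.eq_zero_or_pos (D'.dropUntil z hz').length with h0 | h1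
          · exact absurd (Walk.eq_of_length_eq_zero h0) hzw
          · exact h1
      -- lengths
      have hlc : c.length = (c.takeUntil z hz).length + ((D'.takeUntil z hz').length
          + (D'.dropUntil z hz').length + 1) := by
        have h1 := Walk.length_append (c.takeUntil z hz) (c.dropUntil z hz)
        rw [hspec] at h1
        have h2 := Walk.length_append (D'.takeUntil z hz') (D'.dropUntil z hz')
        rw [hspec2] at h2
        rw [h1, hD, Walk.length_cons, h2]
      set lT := (c.takeUntil z hz).length
      set lT' := (D'.takeUntil z hz').length
      set lR := (D'.dropUntil z hz').length
      -- the closed walk C at z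
      by_cases hpar : Odd (Walk.cons hadj (D'.takeUntil z hz')).length
      · obtain ⟨w', c', hcyc, hodd', hle'⟩ := ih (lT' + 1)
          (by omega) z (Walk.cons hadj (D'.takeUntil z hz'))
          (by rw [Walk.length_cons]) hpar
        refine ⟨w', c', hcyc, hodd', ?_⟩
        rw [Walk.length_cons] at hle'
        omega
      · have hWodd : Odd ((c.takeUntil z hz).append (D'.dropUntil z hz')).length := by
          rw [Walk.length_append]
          rw [Walk.length_cons] at hpar
          rw [Nat.odd_iff] at hodd ⊢
          rw [Nat.not_odd_iff_even, Nat.even_iff] at hpar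
          omega
        obtain ⟨w', c', hcyc, hodd', hle'⟩ := ih (lT + lR)
          (by omega) w ((c.takeUntil z hz).append (D'.dropUntil z hz'))
          (by rw [Walk.length_append]) hWodd
        refine ⟨w', c', hcyc, hodd', ?_⟩
        rw [Walk.length_append] at hle'
        omega

end OddCycle

section Augment
variable {G : SimpleGraph V} [DecidableRel G.Adj] {b : V → ℕ} {μ : Sym2 V → ℕ}

lemma augment_along_path {x x' : V} (W : G.Walk x x') (hW : W.IsPath) (hodd : Odd W.length)
    (hax : Available G b μ x) (hax' : Available G b μ x')
    (hmatch : ∀ i : ℕ, i < W.length → Odd i → 0 < μ s(W.getVert i, W.getVert (i+1)))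
    (hμ : IsBMatching G b μ) :
    ∃ μ' : Sym2 V → ℕ, IsBMatching G b μ' ∧ bValue G μ' = bValue G μ + 1 := by
  classical
  have hnd : W.edges.Nodup := hW.isTrail.edges_nodup
  have hlen : W.edges.length = W.length := W.length_edges
  have hL1 : 1 ≤ W.length := hodd.pos
  have hinj : ∀ a c : ℕ, a ≤ W.length → c ≤ W.length → W.getVert a = W.getVert c → a = c := by
    intro a c ha hc hac
    have h1 : W.support[a]'(by rw [Walk.length_support]; omega) = W.getVert a :=
      walk_support_getElem _ _ _
    have h2 : W.support[c]'(by rw [Walk.length_support]; omega) = W.getVert c :=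
      walk_support_getElem _ _ _
    have := (hW.support_nodup.getElem_inj_iff).mp (h1.trans (hac.trans h2.symm))
    omega
  have hgete : ∀ (i : ℕ) (h : i < W.edges.length),
      W.edges[i]'h = s(W.getVert i, W.getVert (i+1)) := walk_edges_getElem W
  have hpos : ∀ e ∈ W.edges, Odd (W.edges.idxOf e) → 0 < μ e := by
    intro e he ho
    have hlt : W.edges.idxOf e < W.edges.length := List.idxOf_lt_length_iff.mpr he
    have h2 := hmatch (W.edges.idxOf e) (by omega) ho
    rw [← hgete _ hlt, List.getElem_idxOf hlt] at h2
    exact h2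
  set μ' : Sym2 V → ℕ := fun e =>
    if e ∈ W.edges then (if Even (W.edges.idxOf e) then μ e + 1 else μ e - 1) else μ e
    with hμ'def
  have hdiff0 : ∀ e ∉ W.edges, μ' e = μ e := fun e he => by simp [hμ'def, he]
  have hdiff : ∀ e ∈ W.edges, (μ' e : ℤ) - (μ e : ℤ) = (-1 : ℤ)^(W.edges.idxOf e) := by
    intro e he
    by_cases hev : Even (W.edges.idxOf e)
    · simp [hμ'def, he, hev, hev.neg_one_pow]
    · have hodd' : Odd (W.edges.idxOf e) := Nat.not_even_iff_odd.mp hev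
      have h1 : 1 ≤ μ e := hpos e he hodd'
      simp only [hμ'def, if_pos he, if_neg hev]
      rw [hodd'.neg_one_pow]
      push_cast [h1]
      ring
  -- the generic sum computation
  have hsum : ∀ S : Finset (Sym2 V),
      (∑ e ∈ S, (μ' e : ℤ)) - ∑ e ∈ S, (μ e : ℤ)
        = ∑ i ∈ (Finset.range W.length).filter
            (fun i => W.edges.getD i s(x,x) ∈ S), (-1 : ℤ)^i := by
    intro S
    rw [← Finset.sum_sub_distrib]
    rw [← Finset.sum_filter_add_sum_filter_not S (fun e => e ∈ W.edges)]
    have h2 : ∑ e ∈ S.filter (fun e => e ∉ W.edges), ((μ' e : ℤ) - (μ e : ℤ)) = 0 := by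
      apply Finset.sum_eq_zero
      intro e he
      rw [Finset.mem_filter] at he
      rw [hdiff0 e he.2]
      ring
    rw [h2, add_zero]
    refine Finset.sum_nbij' (i := fun e => W.edges.idxOf e)
      (j := fun i => W.edges.getD i s(x,x)) ?_ ?_ ?_ ?_ ?_
    · intro e he
      rw [Finset.mem_filter] at he
      have hlt : W.edges.idxOf e < W.edges.length := List.idxOf_lt_length_iff.mpr he.2
      rw [Finset.mem_filter, Finset.mem_range]
      constructor
      · omega
      · rw [List.getD_eq_getElem _ _ hlt, List.getElem_idxOf hlt]
        exact he.1
    · intro i hi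
      rw [Finset.mem_filter, Finset.mem_range] at hi
      have hlt : i < W.edges.length := by omega
      rw [Finset.mem_filter]
      refine ⟨hi.2, ?_⟩
      rw [List.getD_eq_getElem _ _ hlt]
      exact List.getElem_mem _
    · intro e he
      rw [Finset.mem_filter] at he
      have hlt : W.edges.idxOf e < W.edges.length := List.idxOf_lt_length_iff.mpr he.2
      rw [List.getD_eq_getElem _ _ hlt, List.getElem_idxOf hlt]
    · intro i hi
      rw [Finset.mem_filter, Finset.mem_range] at hi
      have hlt : i < W.edges.length := by omega
      rw [List.getD_eq_getElem _ _ hlt]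
      exact hnd.idxOf_getElem i hlt
    · intro e he
      rw [Finset.mem_filter] at he
      exact hdiff e he.2
  -- value increases by one
  have hval : (bValue G μ' : ℤ) = (bValue G μ : ℤ) + 1 := by
    have h1 := hsum G.edgeFinset
    have h2 : (Finset.range W.length).filter
        (fun i => W.edges.getD i s(x,x) ∈ G.edgeFinset) = Finset.range W.length := by
      apply Finset.filter_true_of_mem
      intro i hi
      rw [Finset.mem_range] at hi
      have hlt : i < W.edges.length := by omega
      rw [List.getD_eq_getElem _ _ hlt, SimpleGraph.mem_edgeFinset]
      exact W.edges_subset_edgeSet (List.getElem_mem _)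
    rw [h2, neg_one_geom_sum, if_neg (Nat.not_even_iff_odd.mpr hodd)] at h1
    unfold bValue
    push_cast
    linarith
  -- incidence sums
  have hvert : ∀ v : V, ∑ e ∈ G.edgeFinset.filter (fun e => v ∈ e), μ' e ≤ b v := by
    intro v
    have h1 := hsum (G.edgeFinset.filter (fun e => v ∈ e))
    have hmemchar : ∀ i : ℕ, i < W.length →
        (W.edges.getD i s(x,x) ∈ G.edgeFinset.filter (fun e => v ∈ e) ↔
          (v = W.getVert i ∨ v = W.getVert (i+1))) := by
      intro i hi
      have hlt : i < W.edges.length := by omega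
      rw [List.getD_eq_getElem _ _ hlt, Finset.mem_filter, SimpleGraph.mem_edgeFinset]
      rw [hgete i hlt, Sym2.mem_iff]
      simp only [iff_iff_implies_and_implies]
      constructor
      · rintro ⟨_, h⟩; exact h
      · intro h
        refine ⟨?_, h⟩
        rw [← hgete i hlt]
        exact W.edges_subset_edgeSet (List.getElem_mem _)
    by_cases hv : v ∈ W.support
    · obtain ⟨k, hkv, hk⟩ := Walk.mem_support_iff_exists_getVert.mp hv
      have hchar2 : ∀ i : ℕ,
          (i ∈ (Finset.range W.length).filter
            (fun i => W.edges.getD i s(x,x) ∈ G.edgeFinset.filter (fun e => v ∈ e))) ↔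
          (i < W.length ∧ (k = i ∨ k = i + 1)) := by
        intro i
        rw [Finset.mem_filter, Finset.mem_range]
        constructor
        · rintro ⟨hir, hmem⟩
          rw [hmemchar i hir] at hmem
          refine ⟨hir, ?_⟩
          rcases hmem with h | h
          · exact Or.inl (hinj k i hk (by omega) (by rw [hkv, h]))
          · exact Or.inr (hinj k (i+1) hk (by omega) (by rw [hkv, h]))
        · rintro ⟨hir, hk'⟩
          refine ⟨hir, ?_⟩
          rw [hmemchar i hir]
          rcases hk' with h | h
          · exact Or.inl (by rw [← hkv, h])
          · exact Or.inr (by rw [← hkv, h])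
      rcases Nat.eq_zero_or_pos k with hk0 | hkpos
      · -- v = x
        have hveq : v = x := by rw [← hkv, hk0, Walk.getVert_zero]
        have hT : (Finset.range W.length).filter
            (fun i => W.edges.getD i s(x,x) ∈ G.edgeFinset.filter (fun e => v ∈ e)) = {0} := by
          apply Finset.ext
          intro i
          rw [hchar2 i, Finset.mem_singleton]
          omega
        rw [hT, Finset.sum_singleton, pow_zero] at h1
        have hlev := hμ.2 v
        have hne : ∑ e ∈ G.edgeFinset.filter (fun e => v ∈ e), μ e ≠ b v := hveq ▸ hax
        have hcast : ((∑ e ∈ G.edgeFinset.filter (fun e => v ∈ e), μ' e : ℕ) : ℤ)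
            = ((∑ e ∈ G.edgeFinset.filter (fun e => v ∈ e), μ e : ℕ) : ℤ) + 1 := by
          push_cast
          linarith
        have heq : (∑ e ∈ G.edgeFinset.filter (fun e => v ∈ e), μ' e)
            = (∑ e ∈ G.edgeFinset.filter (fun e => v ∈ e), μ e) + 1 := by exact_mod_cast hcast
        omega
      · rcases eq_or_lt_of_le hk with hkL | hkL
        · -- k = W.length, v = x'
          have hveq : v = x' := by rw [← hkv, hkL, Walk.getVert_length]
          have hT : (Finset.range W.length).filter
              (fun i => W.edges.getD i s(x,x) ∈ G.edgeFinset.filter (fun e => v ∈ e))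
              = {W.length - 1} := by
            apply Finset.ext
            intro i
            rw [hchar2 i, Finset.mem_singleton]
            omega
          have hevL : Even (W.length - 1) := Nat.Odd.sub_odd hodd odd_one
          rw [hT, Finset.sum_singleton, hevL.neg_one_pow] at h1
          have hlev := hμ.2 v
          have hne : ∑ e ∈ G.edgeFinset.filter (fun e => v ∈ e), μ e ≠ b v := hveq ▸ hax'
          have hcast : ((∑ e ∈ G.edgeFinset.filter (fun e => v ∈ e), μ' e : ℕ) : ℤ)
              = ((∑ e ∈ G.edgeFinset.filter (fun e => v ∈ e), μ e : ℕ) : ℤ) + 1 := by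
            push_cast
            linarith
          have heq : (∑ e ∈ G.edgeFinset.filter (fun e => v ∈ e), μ' e)
              = (∑ e ∈ G.edgeFinset.filter (fun e => v ∈ e), μ e) + 1 := by exact_mod_cast hcast
          omega
        · -- 0 < k < W.length
          have hT : (Finset.range W.length).filter
              (fun i => W.edges.getD i s(x,x) ∈ G.edgeFinset.filter (fun e => v ∈ e))
              = {k - 1, k} := by
            apply Finset.ext
            intro i
            rw [hchar2 i, Finset.mem_insert, Finset.mem_singleton]
            omega
          have hpairsum : ((-1 : ℤ)^(k-1) + (-1 : ℤ)^k) = 0 := by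
            rcases Nat.even_or_odd k with he | ho
            · rw [he.neg_one_pow, (Nat.Even.sub_odd hkpos he odd_one).neg_one_pow]
              ring
            · rw [ho.neg_one_pow, (Nat.Odd.sub_odd ho odd_one).neg_one_pow]
              ring
          rw [hT, Finset.sum_pair (by omega : k - 1 ≠ k), hpairsum] at h1
          have hlev := hμ.2 v
          have hcast : ((∑ e ∈ G.edgeFinset.filter (fun e => v ∈ e), μ' e : ℕ) : ℤ)
              = ((∑ e ∈ G.edgeFinset.filter (fun e => v ∈ e), μ e : ℕ) : ℤ) := by
            push_cast
            linarith
          have heq : (∑ e ∈ G.edgeFinset.filter (fun e => v ∈ e), μ' e)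
              = (∑ e ∈ G.edgeFinset.filter (fun e => v ∈ e), μ e) := by exact_mod_cast hcast
          omega
    · -- v not on the walk
      have hT : (Finset.range W.length).filter
          (fun i => W.edges.getD i s(x,x) ∈ G.edgeFinset.filter (fun e => v ∈ e))
          = ∅ := by
        apply Finset.eq_empty_of_forall_notMem
        intro i hi
        rw [Finset.mem_filter, Finset.mem_range] at hi
        obtain ⟨hir, hmem⟩ := hi
        rw [hmemchar i hir] at hmem
        apply hv
        rw [Walk.mem_support_iff_exists_getVert]
        rcases hmem with h | h
        · exact ⟨i, h.symm, by omega⟩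
        · exact ⟨i + 1, h.symm, by omega⟩
      rw [hT, Finset.sum_empty] at h1
      have hlev := hμ.2 v
      have hcast : ((∑ e ∈ G.edgeFinset.filter (fun e => v ∈ e), μ' e : ℕ) : ℤ)
          = ((∑ e ∈ G.edgeFinset.filter (fun e => v ∈ e), μ e : ℕ) : ℤ) := by
        push_cast
        linarith
      have heq : (∑ e ∈ G.edgeFinset.filter (fun e => v ∈ e), μ' e)
          = (∑ e ∈ G.edgeFinset.filter (fun e => v ∈ e), μ e) := by exact_mod_cast hcast
      omega
  refine ⟨μ', ⟨?_, hvert⟩, ?_⟩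
  · intro e he
    by_cases hel : e ∈ W.edges
    · exact W.edges_subset_edgeSet hel
    · rw [hdiff0 e hel] at he
      exact hμ.1 e he
  · exact_mod_cast hval

end Augment

section NoAug
variable {G : SimpleGraph V} [DecidableRel G.Adj] {b : V → ℕ} {μ : Sym2 V → ℕ}

lemma no_augmenting_walk {κ : ℕ} (hκ : 0 < κ)
    (hgirth : ∀ (w : V) (c : G.Walk w w), c.IsCycle → Odd c.length → 2 * κ + 1 ≤ c.length)
    (hμ : IsBMatching G b μ)
    (hmax : ∀ μ' : Sym2 V → ℕ, IsBMatching G b μ' → bValue G μ' ≤ bValue G μ) :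
    ∀ (n : ℕ) {x x' : V} (W : G.Walk x x'), W.length ≤ n →
      Available G b μ x → Available G b μ x' → Odd W.length → W.length ≤ 2 * κ - 1 →
      (∀ i : ℕ, i < W.length → Odd i → 0 < μ s(W.getVert i, W.getVert (i+1))) → False := by
  intro n
  induction n using Nat.strong_induction_on with | _ n ih =>
  intro x x' W hlen hax hax' hodd hbound hmatch
  by_cases hpath : W.IsPath
  · obtain ⟨μ', hμ', hval⟩ := augment_along_path W hpath hodd hax hax' hmatch hμ
    have := hmax μ' hμ'
    omega
  · have hnd : ¬ W.support.Nodup := fun h => hpath (Walk.IsPath.mk' h)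
    obtain ⟨z, hzdup⟩ := List.exists_duplicate_iff_not_nodup.mpr hnd
    have hzc : 2 ≤ W.support.count z := List.duplicate_iff_two_le_count.mp hzdup
    have hz : z ∈ W.support := hzdup.mem
    have hspec := W.take_spec hz
    have hcount1 : (W.takeUntil z hz).support.count z = 1 := W.count_support_takeUntil_eq_one hz
    have hsupp : W.support = (W.takeUntil z hz).support ++ (W.dropUntil z hz).support.tail := by
      have h2 := Walk.support_append (W.takeUntil z hz) (W.dropUntil z hz)
      rw [hspec] at h2
      exact h2
    have hcountc : W.support.count z = 1 + (W.dropUntil z hz).support.tail.count z := by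
      rw [hsupp, List.count_append, hcount1]
    have hD1 : 1 ≤ (W.dropUntil z hz).support.tail.count z := by omega
    rcases hD : W.dropUntil z hz with _ | ⟨hadj, D'⟩
    · rw [hD] at hD1; simp at hD1
    · rw [hD] at hD1
      simp only [Walk.support_cons, List.tail_cons] at hD1
      have hz' : z ∈ D'.support := List.count_pos_iff.mp (by omega)
      have hspec2 := D'.take_spec hz'
      -- lengths
      have hlW : W.length = (W.takeUntil z hz).length + ((D'.takeUntil z hz').length
          + (D'.dropUntil z hz').length + 1) := by
        have h1 := Walk.length_append (W.takeUntil z hz) (W.dropUntil z hz)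
        rw [hspec] at h1
        have h2 := Walk.length_append (D'.takeUntil z hz') (D'.dropUntil z hz')
        rw [hspec2] at h2
        rw [h1, hD, Walk.length_cons, h2]
      by_cases hparC : Odd ((W.takeUntil z hz).length + (D'.dropUntil z hz').length)
      · -- the removed closed walk has even length, shorten
        -- getVert computations
        have hgvW : ∀ i : ℕ, W.getVert i =
            if i < (W.takeUntil z hz).length then (W.takeUntil z hz).getVert i
            else (W.dropUntil z hz).getVert (i - (W.takeUntil z hz).length) := by
          intro i
          have h2 := Walk.getVert_append (W.takeUntil z hz) (W.dropUntil z hz) i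
          rw [hspec] at h2
          exact h2
        have hgvD' : ∀ j : ℕ, D'.getVert j =
            if j < (D'.takeUntil z hz').length then (D'.takeUntil z hz').getVert j
            else (D'.dropUntil z hz').getVert (j - (D'.takeUntil z hz').length) := by
          intro j
          have h2 := Walk.getVert_append (D'.takeUntil z hz') (D'.dropUntil z hz') j
          rw [hspec2] at h2
          exact h2
        set T := W.takeUntil z hz with hTdef
        set T' := D'.takeUntil z hz' with hT'def
        set R := D'.dropUntil z hz' with hRdef
        have e1 : ∀ m : ℕ, m ≤ T.length → (T.append R).getVert m = W.getVert m := by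
          intro m hm
          rw [Walk.getVert_append, hgvW m]
          rcases lt_or_eq_of_le hm with hlt | heq
          · rw [if_pos hlt, if_pos hlt]
          · rw [if_neg (by omega), if_neg (by omega), heq, Nat.sub_self, Walk.getVert_zero,
              hD, Walk.getVert_zero]
        have e2 : ∀ j : ℕ, (T.append R).getVert (T.length + j)
            = W.getVert (T.length + T'.length + 1 + j) := by
          intro j
          rw [Walk.getVert_append, if_neg (by omega), Nat.add_sub_cancel_left]
          rw [hgvW, if_neg (by omega)]
          have hsub : T.length + T'.length + 1 + j - T.length = T'.length + 1 + j := by omega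
          rw [hsub, hD]
          have hcons : (Walk.cons hadj D').getVert (T'.length + 1 + j)
              = D'.getVert (T'.length + j) := by
            have : T'.length + 1 + j = (T'.length + j) + 1 := by omega
            rw [this, Walk.getVert_cons_succ]
          rw [hcons, hgvD', if_neg (by omega), Nat.add_sub_cancel_left]
        -- the shortened walk
        refine ih (T.length + R.length) (by omega) (T.append R)
          (by rw [Walk.length_append]) hax hax' ?_ ?_ ?_
        · rw [Walk.length_append]; exact hparC
        · rw [Walk.length_append]; omega
        · intro i hi hoddi
          rw [Walk.length_append] at hi
          rcases Nat.lt_or_ge (i+1) (T.length + 1) with hc1 | hc2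
          · rw [e1 i (by omega), e1 (i+1) (by omega)]
            exact hmatch i (by omega) hoddi
          · obtain ⟨j, rfl⟩ : ∃ j, i = T.length + j := ⟨i - T.length, by omega⟩
            have h1 := e2 j
            have h2 := e2 (j+1)
            rw [← Nat.add_assoc] at h2
            rw [h1, h2]
            have h3 : T.length + T'.length + 1 + (j + 1) = (T.length + T'.length + 1 + j) + 1 := by
              omega
            rw [h3]
            apply hmatch (T.length + T'.length + 1 + j) (by omega)
            have hCeven : ¬ Odd (T'.length + 1) := by
              rw [Nat.odd_iff] at hoddi hparC hodd ⊢
              omega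
            rw [Nat.odd_iff] at hoddi ⊢
            rw [Nat.odd_iff] at hCeven
            omega
      · -- the closed walk cons hadj T' has odd length: girth contradiction
        have hCodd : Odd (Walk.cons hadj (D'.takeUntil z hz')).length := by
          rw [Walk.length_cons]
          rw [Nat.odd_iff] at hodd ⊢
          rw [Nat.not_odd_iff_even, Nat.even_iff] at hparC
          omega
        obtain ⟨w', c', hcyc, hodd', hle'⟩ := odd_closed_walk_to_cycle
          ((Walk.cons hadj (D'.takeUntil z hz')).length) z _ le_rfl hCodd
        have hbig := hgirth w' c' hcyc hodd'
        rw [Walk.length_cons] at hle'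
        omega

end NoAug

section Claim2
variable {G : SimpleGraph V} [DecidableRel G.Adj] {b : V → ℕ} {μ : Sym2 V → ℕ}

lemma no_adjacent_evens {κ : ℕ} (hκ : 0 < κ)
    (hgirth : ∀ (w : V) (c : G.Walk w w), c.IsCycle → Odd c.length → 2 * κ + 1 ≤ c.length)
    (hμ : IsBMatching G b μ)
    (hmax : ∀ μ' : Sym2 V → ℕ, IsBMatching G b μ' → bValue G μ' ≤ bValue G μ)
    {u v : V} (huv : G.Adj u v) {s t : ℕ}
    (hu : altDist G b μ u = (s : ℕ∞)) (hv : altDist G b μ v = (t : ℕ∞))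
    (hes : Even s) (het : Even t) (hsκ : s < κ) (htκ : t < κ) : False := by
  obtain ⟨wx, P, hP, hPl⟩ := exists_alt_eq hu
  obtain ⟨wy, Q, hQ, hQl⟩ := exists_alt_eq hv
  subst hPl
  subst hQl
  rw [isAlternating_iff] at hP hQ
  set W : G.Walk wx wy := P.append (Walk.cons huv Q.reverse) with hWdef
  have hWlen : W.length = P.length + Q.length + 1 := by
    rw [hWdef, Walk.length_append, Walk.length_cons, Walk.length_reverse]
    omega
  have e1 : ∀ m : ℕ, m ≤ P.length → W.getVert m = P.getVert m := by
    intro m hm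
    rw [hWdef, Walk.getVert_append]
    rcases lt_or_eq_of_le hm with hlt | heq
    · rw [if_pos hlt]
    · rw [if_neg (by omega), heq, Nat.sub_self, Walk.getVert_zero, Walk.getVert_length]
  have e2 : ∀ j : ℕ, W.getVert (P.length + 1 + j) = Q.getVert (Q.length - j) := by
    intro j
    rw [hWdef, Walk.getVert_append, if_neg (by omega)]
    have h1 : P.length + 1 + j - P.length = j + 1 := by omega
    rw [h1, Walk.getVert_cons_succ, Walk.getVert_reverse]
  apply no_augmenting_walk hκ hgirth hμ hmax W.length W le_rfl hP.2.1 hQ.2.1 ?_ ?_ ?_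
  · rw [hWlen, Nat.odd_iff]
    rw [Nat.even_iff] at hes het
    omega
  · omega
  · intro i hi hoddi
    rw [hWlen] at hi
    rcases Nat.lt_or_ge (i+1) (P.length + 1) with hc1 | hc2
    · rw [e1 i (by omega), e1 (i+1) (by omega)]
      exact hP.2.2 i (by omega) hoddi
    · rcases Nat.eq_or_lt_of_le hc2 with hc3 | hc3
      · exfalso
        have : i = P.length := by omega
        rw [Nat.odd_iff] at hoddi
        rw [Nat.even_iff] at hes
        omega
      · obtain ⟨j, rfl⟩ : ∃ j, i = P.length + 1 + j := ⟨i - P.length - 1, by omega⟩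
        have hjt : j < Q.length := by omega
        have h1 := e2 j
        have h2 := e2 (j+1)
        rw [show P.length + 1 + (j+1) = (P.length + 1 + j) + 1 from by omega] at h2
        rw [h1, h2]
        have hq : Q.length - j = (Q.length - (j+1)) + 1 := by omega
        rw [hq, Sym2.eq_swap]
        apply hQ.2.2 (Q.length - (j+1)) (by omega)
        rw [Nat.odd_iff] at hoddi ⊢
        rw [Nat.even_iff] at hes het
        omega

end Claim2

theorem stmt12 (κ : ℕ) (hκ : 0 < κ) (G : SimpleGraph V) [DecidableRel G.Adj]
    (hgirth : ∀ (w : V) (c : G.Walk w w), c.IsCycle → Odd c.length → 2 * κ + 1 ≤ c.length)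
    (b : V → ℕ) (hb : ∀ v : V, 0 < b v)
    (μ : Sym2 V → ℕ) (hμ : IsBMatching G b μ)
    (hmax : ∀ μ' : Sym2 V → ℕ, IsBMatching G b μ' → bValue G μ' ≤ bValue G μ) :
    ∀ u v : V, G.Adj u v → 1 ≤ yBM G b μ κ u + yBM G b μ κ v := by
  classical
  have hhalf : ∀ w : V, ¬(altDist G b μ w < (κ : ℕ∞) ∧ Even (altDist G b μ w).toNat) →
      (1:ℚ)/2 ≤ yBM G b μ κ w := by
    intro w hw
    simp only [yBM]
    by_cases h1 : altDist G b μ w < (κ : ℕ∞)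
    · have h2 : ¬ Even (altDist G b μ w).toNat := fun he => hw ⟨h1, he⟩
      rw [if_pos h1, if_neg h2]
      set t := (altDist G b μ w).toNat with ht
      have htκ : t < κ := by
        have hne : altDist G b μ w ≠ ⊤ := by
          intro hh
          rw [hh] at h1
          simp at h1
        rw [← ENat.coe_toNat hne] at h1
        exact_mod_cast h1
      have ht1 : 1 ≤ t := by
        rcases Nat.eq_zero_or_pos t with h0 | h
        · rw [h0] at h2; simp at h2
        · exact h
      have hκQ : (0:ℚ) < 2 * κ := by positivity
      have hcast : (t:ℚ) ≤ κ := by exact_mod_cast le_of_lt htκ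
      have h3 : ((t:ℚ) - 1)/(2*κ) ≤ 1/2 := by
        rw [div_le_iff₀ hκQ]
        linarith
      linarith
    · rw [if_neg h1]
      have h2 : (κ:ℚ)/2 ≤ (⌈(κ:ℚ)/2⌉ : ℚ) := Int.le_ceil _
      have hκQ : (0:ℚ) < κ := by positivity
      rw [le_div_iff₀ hκQ]
      linarith
  have key : ∀ u v : V, G.Adj u v →
      (altDist G b μ u < (κ : ℕ∞) ∧ Even (altDist G b μ u).toNat) →
      1 ≤ yBM G b μ κ u + yBM G b μ κ v := by
    intro u v huv hu
    obtain ⟨hult, hueven⟩ := hu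
    have hune : altDist G b μ u ≠ ⊤ := by
      intro hh
      rw [hh] at hult
      simp at hult
    set t := (altDist G b μ u).toNat with htdef
    have hu' : altDist G b μ u = (t : ℕ∞) := (ENat.coe_toNat hune).symm
    have htκ : t < κ := by
      rw [hu'] at hult
      exact_mod_cast hult
    obtain ⟨wx, P, hPalt, hPl⟩ := exists_alt_eq hu'
    have hext : altDist G b μ v ≤ (t : ℕ∞) + 1 := by
      have := alt_extend P hPalt huv (Or.inl (by rw [hPl]; exact hueven))
      rw [hPl] at this
      exact this
    have hyu : yBM G b μ κ u = (t:ℚ)/(2*κ) := by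
      simp only [yBM]
      rw [if_pos hult, if_pos hueven]
    have hκQ : (0:ℚ) < κ := by positivity
    have hκQ2 : (0:ℚ) < 2*κ := by positivity
    by_cases hvlt : altDist G b μ v < (κ : ℕ∞)
    · have hvne : altDist G b μ v ≠ ⊤ := by
        intro hh
        rw [hh] at hvlt
        simp at hvlt
      set sv := (altDist G b μ v).toNat with hsdef
      have hv' : altDist G b μ v = (sv : ℕ∞) := (ENat.coe_toNat hvne).symm
      have hsκ : sv < κ := by
        rw [hv'] at hvlt
        exact_mod_cast hvlt
      have hsodd : ¬ Even sv := by
        intro hse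
        exact no_adjacent_evens hκ hgirth hμ hmax huv hu' hv' hueven hse htκ hsκ
      have hyv : yBM G b μ κ v = 1 - ((sv:ℚ) - 1)/(2*κ) := by
        simp only [yBM]
        rw [if_pos hvlt, if_neg hsodd]
      have hst : sv ≤ t + 1 := by
        rw [hv'] at hext
        have : (sv : ℕ∞) ≤ ((t + 1 : ℕ) : ℕ∞) := by
          push_cast
          exact hext
        exact_mod_cast this
      rw [hyu, hyv]
      have hcast : (sv:ℚ) ≤ (t:ℚ) + 1 := by exact_mod_cast hst
      have h2 : ((sv:ℚ) - 1)/(2*κ) ≤ (t:ℚ)/(2*κ) := by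
        gcongr
        linarith
      linarith
    · have hκle : κ ≤ t + 1 := by
        have h1 : ((κ:ℕ) : ℕ∞) ≤ ((t + 1 : ℕ) : ℕ∞) := by
          push_cast
          exact le_trans (not_lt.mp hvlt) hext
        exact_mod_cast h1
      have hteq : t = κ - 1 := by omega
      have hκodd : Odd κ := by
        rw [Nat.odd_iff]
        rw [Nat.even_iff] at hueven
        omega
      obtain ⟨m, hm⟩ := hκodd
      have hyv : yBM G b μ κ v = (⌈(κ:ℚ)/2⌉ : ℚ)/κ := by
        simp only [yBM]
        rw [if_neg hvlt]
      have hceil : ((m : ℤ) + 1 : ℚ) ≤ (⌈(κ:ℚ)/2⌉ : ℚ) := by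
        have : (m : ℤ) < ⌈(κ:ℚ)/2⌉ := by
          apply Int.lt_ceil.mpr
          have : (κ:ℚ) = 2*m + 1 := by exact_mod_cast congrArg (Nat.cast : ℕ → ℚ) hm
          rw [this]
          push_cast
          linarith
        push_cast
        exact_mod_cast Int.add_one_le_iff.mpr this
      have ht' : (t:ℚ) = (κ:ℚ) - 1 := by
        rw [hteq]
        push_cast [Nat.cast_sub hκ]
        ring
      have hκm : (κ:ℚ) = 2*(m:ℚ) + 1 := by exact_mod_cast congrArg (Nat.cast : ℕ → ℚ) hm
      have h2 : ((κ:ℚ) - 1)/(2*κ) + ((m:ℚ) + 1)/κ = 1 := by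
        rw [hκm]
        have hden : (2*(m:ℚ) + 1) ≠ 0 := by positivity
        field_simp
        ring
      have h3 : ((m:ℚ) + 1)/κ ≤ (⌈(κ:ℚ)/2⌉ : ℚ)/κ := by
        gcongr
        exact_mod_cast hceil
      rw [hyu, hyv, ht']
      linarith
  intro u v huv
  by_cases hu : altDist G b μ u < (κ : ℕ∞) ∧ Even (altDist G b μ u).toNat
  · exact key u v huv hu
  · by_cases hv : altDist G b μ v < (κ : ℕ∞) ∧ Even (altDist G b μ v).toNat
    · rw [add_comm]
      exact key v u huv.symm hv
    · have h1 := hhalf u hu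
      have h2 := hhalf v hv
      linarith
end
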